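/- arXiv:1207.4843 — 4 statements merged into one kernel-verified Lean document; each statement's English description precedes it below -/
import Mathlib

section
/- For a compact set K ⊂ R^d and s ≥ 0, if the s-dimensional packing premeasure P₀^s(K) is finite, then P₀^s(K) equals the s-dimensional packing measure P^s(K). -/
open Metric Set MeasureTheory ENNReal Filter

noncomputable section

abbrev Euc (d : ℕ) : Type := EuclideanSpace ℝ (Fin d)

/-- A `δ`-packing of `E`: a countable family of pairwise disjoint open balls with
centers in `E` and radii at most `δ` (radius `0` gives an empty ball, allowing
finite packings). -/
def IsPacking {d : ℕ} (δ : ℝ) (E : Set (Euc d)) (c : ℕ → Euc d) (ρ : ℕ → ℝ) : Prop :=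
  (∀ n, c n ∈ E) ∧ (∀ n, 0 ≤ ρ n ∧ ρ n ≤ δ) ∧
    ∀ m n, m ≠ n → Disjoint (ball (c m) (ρ m)) (ball (c n) (ρ n))

/-- `P^s_δ(E)`: the supremum of `∑ diam(B_i)^s` over all `δ`-packings of `E`. -/
noncomputable def packCount {d : ℕ} (s δ : ℝ) (E : Set (Euc d)) : ℝ≥0∞ :=
  ⨆ (c : ℕ → Euc d) (ρ : ℕ → ℝ) (_ : IsPacking δ E c ρ),
    ∑' n, if 0 < ρ n then ENNReal.ofReal ((2 * ρ n) ^ s) else 0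

/-- The `s`-dimensional packing premeasure `P₀^s(E) = inf_{δ>0} P^s_δ(E)`. -/
noncomputable def packingPre {d : ℕ} (s : ℝ) (E : Set (Euc d)) : ℝ≥0∞ :=
  ⨅ (δ : ℝ) (_ : 0 < δ), packCount s δ E

/-- The `s`-dimensional packing measure
`P^s(E) = inf { ∑ P₀^s(E_n) : E ⊆ ⋃ E_n }`. -/
noncomputable def packingMeasure {d : ℕ} (s : ℝ) (E : Set (Euc d)) : ℝ≥0∞ :=
  ⨅ (F : ℕ → Set (Euc d)) (_ : E ⊆ ⋃ n, F n), ∑' n, packingPre s (F n)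

/-- Composition `f_{i₁} ∘ ⋯ ∘ f_{i_k}` along a word. -/
def wcomp {d N : ℕ} (f : Fin N → Euc d → Euc d) : List (Fin N) → Euc d → Euc d
  | [] => id
  | i :: w => f i ∘ wcomp f w

/-- `K` is in general position: it is not contained in any proper affine subspace
(in particular, in no hyperplane). -/
def GeneralPosition {d : ℕ} (K : Set (Euc d)) : Prop :=
  ∀ H : AffineSubspace ℝ (Euc d), K ⊆ (H : Set (Euc d)) → H = ⊤

namespace Pack4
open Topology

variable {d : ℕ}

/-- The mass of a family of radii. -/
def pMass (s : ℝ) (ρ : ℕ → ℝ) : ℝ≥0∞ :=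
  ∑' n, if 0 < ρ n then ENNReal.ofReal ((2 * ρ n) ^ s) else 0

theorem pMass_le_packCount {s δ : ℝ} {E : Set (Euc d)} {c : ℕ → Euc d} {ρ : ℕ → ℝ}
    (h : IsPacking δ E c ρ) : pMass s ρ ≤ packCount s δ E := by
  refine le_trans ?_ (le_iSup _ c)
  refine le_trans ?_ (le_iSup _ ρ)
  exact le_trans (le_of_eq rfl) (le_iSup (fun _ : IsPacking δ E c ρ => pMass s ρ) h)

theorem isPacking_mono {δ δ' : ℝ} {E E' : Set (Euc d)} {c : ℕ → Euc d} {ρ : ℕ → ℝ}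
    (h : IsPacking δ E c ρ) (hδ : δ ≤ δ') (hE : E ⊆ E') : IsPacking δ' E' c ρ :=
  ⟨fun n => hE (h.1 n), fun n => ⟨(h.2.1 n).1, le_trans (h.2.1 n).2 hδ⟩, h.2.2⟩

theorem packCount_mono {s δ δ' : ℝ} {E E' : Set (Euc d)} (hδ : δ ≤ δ') (hE : E ⊆ E') :
    packCount s δ E ≤ packCount s δ' E' := by
  refine iSup_le fun c => iSup_le fun ρ => iSup_le fun h => ?_
  exact pMass_le_packCount (isPacking_mono h hδ hE)

theorem packingPre_le_packCount {s : ℝ} {E : Set (Euc d)} {δ : ℝ} (hδ : 0 < δ) :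
    packingPre s E ≤ packCount s δ E :=
  iInf₂_le δ hδ

theorem packingPre_mono {s : ℝ} {E E' : Set (Euc d)} (hE : E ⊆ E') :
    packingPre s E ≤ packingPre s E' :=
  le_iInf₂ fun δ hδ => le_trans (packingPre_le_packCount hδ) (packCount_mono le_rfl hE)

theorem packCount_empty {s δ : ℝ} : packCount s δ (∅ : Set (Euc d)) = 0 := by
  refine le_antisymm ?_ (zero_le)
  refine iSup_le fun c => iSup_le fun ρ => iSup_le fun h => ?_
  exact absurd (h.1 0) (notMem_empty _)

theorem packingPre_empty {s : ℝ} : packingPre s (∅ : Set (Euc d)) = 0 := by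
  refine le_antisymm (le_trans (packingPre_le_packCount one_pos) ?_) (zero_le)
  simp [packCount_empty]

theorem isPacking_zero {δ : ℝ} (hδ : 0 ≤ δ) {E : Set (Euc d)} {x : Euc d} (hx : x ∈ E) :
    IsPacking δ E (fun _ => x) (fun _ => 0) :=
  ⟨fun _ => hx, fun _ => ⟨le_rfl, hδ⟩, fun m n _ => by simp [Metric.ball_eq_empty.2 le_rfl]⟩

theorem exists_packCount_finite {s : ℝ} {E : Set (Euc d)} (h : packingPre s E ≠ ⊤) :
    ∃ δ : ℝ, 0 < δ ∧ δ ≤ 1 ∧ packCount s δ E < ⊤ := by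
  have : packingPre s E < ⊤ := lt_top_iff_ne_top.2 h
  rw [packingPre, iInf_lt_iff] at this
  obtain ⟨δ, hlt⟩ := this
  rw [iInf_lt_iff] at hlt
  obtain ⟨hδ, hlt⟩ := hlt
  refine ⟨min δ 1, lt_min hδ one_pos, min_le_right _ _, ?_⟩
  exact lt_of_le_of_lt (packCount_mono (min_le_left _ _) subset_rfl) hlt

theorem exists_packCount_le {s : ℝ} {E : Set (Euc d)} (h : packingPre s E ≠ ⊤)
    {ε : ℝ≥0∞} (hε : 0 < ε) : ∃ δ : ℝ, 0 < δ ∧ packCount s δ E ≤ packingPre s E + ε := by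
  have hlt : packingPre s E < packingPre s E + ε := by
    exact ENNReal.lt_add_right h (ne_of_gt hε)
  conv at hlt => lhs; rw [packingPre]
  rw [iInf_lt_iff] at hlt
  obtain ⟨δ, hlt⟩ := hlt
  rw [iInf_lt_iff] at hlt
  exact ⟨δ, hlt.1, le_of_lt hlt.2⟩


theorem isPacking_perturb {δ δ' : ℝ} {E E' : Set (Euc d)} {c c' : ℕ → Euc d} {ρ ρ' : ℕ → ℝ}
    (h : IsPacking δ E c ρ)
    (h1 : ∀ n, c' n ∈ E')
    (h2 : ∀ n, 0 ≤ ρ' n ∧ ρ' n ≤ δ')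
    (h3 : ∀ n, 0 < ρ' n → ball (c' n) (ρ' n) ⊆ ball (c n) (ρ n)) :
    IsPacking δ' E' c' ρ' := by
  refine ⟨h1, h2, fun m n hmn => ?_⟩
  rcases le_or_gt (ρ' m) 0 with hm | hm
  · simp [Metric.ball_eq_empty.2 hm]
  rcases le_or_gt (ρ' n) 0 with hn | hn
  · simp [Metric.ball_eq_empty.2 hn]
  exact (h.2.2 m n hmn).mono (h3 m hm) (h3 n hn)

theorem mass_le_mul {s t ρ ρ' : ℝ} (hs : 0 ≤ s) (ht : 0 ≤ t) (hρ : 0 ≤ ρ) (hρ' : 0 < ρ')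
    (h : ρ ≤ t * ρ') :
    ENNReal.ofReal ((2 * ρ) ^ s) ≤ ENNReal.ofReal (t ^ s) * ENNReal.ofReal ((2 * ρ') ^ s) := by
  rw [← ENNReal.ofReal_mul (Real.rpow_nonneg ht s), ← Real.mul_rpow ht (by positivity)]
  refine ENNReal.ofReal_le_ofReal (Real.rpow_le_rpow (by positivity) ?_ hs)
  nlinarith

theorem tsum_partition (f : ℕ → ℝ≥0∞) (lev : ℕ → ℕ) :
    ∑' n, f n = ∑' (k : ℕ) (n : ℕ), if k = lev n then f n else 0 := by
  have h : ∀ n, f n = ∑' (k : ℕ), if k = lev n then f n else 0 :=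
    fun n => (tsum_ite_eq (lev n) (fun _ => f n)).symm
  calc ∑' n, f n = ∑' (n : ℕ) (k : ℕ), if k = lev n then f n else 0 := tsum_congr h
  _ = _ := ENNReal.tsum_comm

theorem tsum_split (f : ℕ → ℝ≥0∞) (p : ℕ → Prop) [DecidablePred p] :
    ∑' n, f n = (∑' n, if p n then f n else 0) + (∑' n, if p n then 0 else f n) := by
  rw [← ENNReal.tsum_add]
  exact tsum_congr fun n => by by_cases h : p n <;> simp [h]

theorem isPacking_combine {s δ : ℝ} {E : Set (Euc d)} {R : ℕ → Set (Euc d)}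
    (hR : ∀ k k', k ≠ k' → Disjoint (R k) (R k'))
    {c : ℕ → ℕ → Euc d} {ρ : ℕ → ℕ → ℝ}
    (hp : ∀ k, IsPacking δ E (c k) (ρ k))
    (hball : ∀ k n, 0 < ρ k n → ball (c k n) (ρ k n) ⊆ R k) :
    ∃ (C : ℕ → Euc d) (P : ℕ → ℝ), IsPacking δ E C P ∧ pMass s P = ∑' k, pMass s (ρ k) := by
  classical
  let e : ℕ × ℕ ≃ ℕ := Denumerable.eqv (ℕ × ℕ)
  refine ⟨fun m => c (e.symm m).1 (e.symm m).2, fun m => ρ (e.symm m).1 (e.symm m).2, ⟨?_, ?_, ?_⟩, ?_⟩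
  · exact fun m => (hp (e.symm m).1).1 _
  · exact fun m => (hp (e.symm m).1).2.1 _
  · intro m n hmn
    set a := e.symm m with ha
    set b := e.symm n with hb
    have hab : a ≠ b := fun hh => hmn (by rw [← e.apply_symm_apply m, ← e.apply_symm_apply n, ← ha, ← hb, hh])
    rcases le_or_gt (ρ a.1 a.2) 0 with hm2 | hm2
    · simp [← ha, Metric.ball_eq_empty.2 hm2]
    rcases le_or_gt (ρ b.1 b.2) 0 with hn2 | hn2
    · simp [← hb, Metric.ball_eq_empty.2 hn2]
    rcases eq_or_ne a.1 b.1 with hk | hk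
    · have h2 : a.2 ≠ b.2 := fun hh => hab (Prod.ext hk hh)
      have h3 := (hp a.1).2.2 a.2 b.2 h2
      show Disjoint (ball (c a.1 a.2) (ρ a.1 a.2)) (ball (c b.1 b.2) (ρ b.1 b.2))
      rw [← hk]
      exact h3
    · exact Set.disjoint_of_subset (hball a.1 a.2 hm2) (hball b.1 b.2 hn2) (hR a.1 b.1 hk)
  · show (∑' m, if 0 < ρ (e.symm m).1 (e.symm m).2 then ENNReal.ofReal ((2 * ρ (e.symm m).1 (e.symm m).2) ^ s) else 0) = _
    have h1 := Equiv.tsum_eq e.symm (fun ab : ℕ × ℕ => if 0 < ρ ab.1 ab.2 then ENNReal.ofReal ((2 * ρ ab.1 ab.2) ^ s) else 0)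
    rw [h1]
    exact ENNReal.tsum_prod (f := fun k n => if 0 < ρ k n then ENNReal.ofReal ((2 * ρ k n) ^ s) else 0)

theorem geom_half : ∑' k : ℕ, (2⁻¹ : ℝ≥0∞) ^ (k + 1) = 1 := by
  have h1 : ∀ k : ℕ, (2⁻¹ : ℝ≥0∞) ^ (k + 1) = 2⁻¹ * 2⁻¹ ^ k := fun k => pow_succ' _ _
  rw [tsum_congr h1, ENNReal.tsum_mul_left, ENNReal.tsum_geometric]
  have : (1 - 2⁻¹ : ℝ≥0∞) = 2⁻¹ := by
    rw [ENNReal.sub_eq_of_eq_add (by norm_num)]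
    rw [ENNReal.inv_two_add_inv_two]
  rw [this, inv_inv, ENNReal.inv_mul_cancel two_ne_zero ENNReal.ofNat_ne_top]

theorem tsum_packCount_le {s δ : ℝ} {E : Set (Euc d)} (hE : E.Nonempty) (hδ : 0 < δ)
    {A : ℕ → Set (Euc d)} (hA : ∀ k, A k ⊆ E) {δk : ℕ → ℝ} (hδk : ∀ k, 0 < δk k ∧ δk k ≤ δ)
    {R : ℕ → Set (Euc d)} (hR : ∀ k k', k ≠ k' → Disjoint (R k) (R k'))
    (hfin : ∀ k, packCount s (δk k) (A k) ≠ ⊤)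
    (hball : ∀ (k : ℕ) (y : Euc d) (r : ℝ), y ∈ A k → 0 < r → r ≤ δk k → ball y r ⊆ R k) :
    ∑' k, packCount s (δk k) (A k) ≤ packCount s δ E := by
  refine ENNReal.le_of_forall_pos_le_add fun ν hν _ => ?_
  set ε : ℝ≥0∞ := (ν : ℝ≥0∞) with hε
  have hεne : ε ≠ 0 := by simpa [hε] using (ne_of_gt hν)
  have key : ∀ k, ∃ (ck : ℕ → Euc d) (ρk : ℕ → ℝ), IsPacking δ E ck ρk ∧
      (∀ n, 0 < ρk n → ball (ck n) (ρk n) ⊆ R k) ∧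
      packCount s (δk k) (A k) ≤ pMass s ρk + ε * 2⁻¹ ^ (k + 1) := by
    intro k
    by_cases h0 : packCount s (δk k) (A k) = 0
    · refine ⟨fun _ => hE.choose, fun _ => 0, isPacking_zero (le_of_lt hδ) hE.choose_spec,
        fun n hn => absurd hn (by norm_num), by rw [h0]; exact zero_le⟩
    · have hpos : ε * 2⁻¹ ^ (k + 1) ≠ 0 := by
        refine mul_ne_zero hεne ?_
        exact pow_ne_zero _ (by norm_num)
      have hlt := ENNReal.sub_lt_self (hfin k) h0 hpos
      conv at hlt => rhs; rw [packCount]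
      rw [lt_iSup_iff] at hlt
      obtain ⟨ck, hlt⟩ := hlt
      rw [lt_iSup_iff] at hlt
      obtain ⟨ρk, hlt⟩ := hlt
      rw [lt_iSup_iff] at hlt
      obtain ⟨hpk, hlt⟩ := hlt
      refine ⟨ck, ρk, isPacking_mono hpk (hδk k).2 (hA k), ?_, ?_⟩
      · exact fun n hn => hball k (ck n) (ρk n) (hpk.1 n) hn (hpk.2.1 n).2
      · rw [← tsub_le_iff_right]
        exact le_of_lt hlt
  choose cc ρρ h1 h2 h3 using key
  obtain ⟨C, P, hCP, hmass⟩ := isPacking_combine (s := s) hR h1 h2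
  calc ∑' k, packCount s (δk k) (A k)
      ≤ ∑' k, (pMass s (ρρ k) + ε * 2⁻¹ ^ (k + 1)) := Summable.tsum_le_tsum h3 ENNReal.summable ENNReal.summable
    _ = ∑' k, pMass s (ρρ k) + ε * ∑' k : ℕ, (2⁻¹ : ℝ≥0∞) ^ (k + 1) := by
        rw [ENNReal.tsum_add, ENNReal.tsum_mul_left]
    _ = pMass s P + ε := by rw [hmass, geom_half, mul_one]
    _ ≤ packCount s δ E + ε := add_le_add_left (pMass_le_packCount hCP) _

/-- Factor constant used in perturbation arguments. -/
def cFac (s θ : ℝ) : ℝ≥0∞ := ENNReal.ofReal ((1 - θ)⁻¹ ^ s)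

theorem le_of_forall_cFac_mul {s : ℝ} (hs : 0 ≤ s) {b X : ℝ≥0∞} (hX : X ≠ ⊤)
    (h : ∀ θ : ℝ, 0 < θ → θ < 1 → b ≤ cFac s θ * X) : b ≤ X := by
  have h2 : Tendsto (fun m : ℕ => ((m : ℝ) + 2)⁻¹) atTop (𝓝 0) :=
    tendsto_inv_atTop_zero.comp
      (Filter.tendsto_atTop_add_const_right _ 2 tendsto_natCast_atTop_atTop)
  have h3 : Tendsto (fun m : ℕ => 1 - ((m : ℝ) + 2)⁻¹) atTop (𝓝 1) := by
    simpa using Filter.Tendsto.const_sub 1 h2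
  have h4 : Tendsto (fun m : ℕ => (1 - ((m : ℝ) + 2)⁻¹)⁻¹) atTop (𝓝 1) := by
    simpa [Function.comp_def] using ((continuousAt_inv₀ one_ne_zero).tendsto.comp h3)
  have h5 : Tendsto (fun m : ℕ => (1 - ((m : ℝ) + 2)⁻¹)⁻¹ ^ s) atTop (𝓝 1) := by
    have := (Real.continuousAt_rpow_const 1 s (Or.inl one_ne_zero)).tendsto.comp h4
    simpa [Real.one_rpow, Function.comp_def] using this
  have h6 : Tendsto (fun m : ℕ => cFac s (((m : ℝ) + 2)⁻¹) * X) atTop (𝓝 X) := by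
    have h7 : Tendsto (fun m : ℕ => cFac s (((m : ℝ) + 2)⁻¹)) atTop (𝓝 1) := by
      have := (ENNReal.continuous_ofReal.tendsto 1).comp h5
      simpa [cFac, ENNReal.ofReal_one, Function.comp_def] using this
    simpa using ENNReal.Tendsto.mul_const h7 (Or.inl one_ne_zero)
  refine ge_of_tendsto h6 (Filter.Eventually.of_forall fun m => ?_)
  have hm0 : (0 : ℝ) < ((m : ℝ) + 2)⁻¹ := by positivity
  have hm1 : ((m : ℝ) + 2)⁻¹ < 1 := by
    rw [inv_lt_one_iff₀]; right; linarith [Nat.cast_nonneg (α := ℝ) m]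
  exact h _ hm0 hm1

theorem packCount_closure_le {s θ δ : ℝ} (hs : 0 ≤ s) (hθ0 : 0 < θ) (hθ1 : θ < 1)
    {E : Set (Euc d)} (hE : E.Nonempty) :
    packCount s δ (closure E) ≤ cFac s θ * packCount s δ E := by
  classical
  refine iSup_le fun c => iSup_le fun ρ => iSup_le fun h => ?_
  have hsel : ∀ n, 0 < ρ n → ∃ b ∈ E, dist (c n) b < θ * ρ n := by
    intro n hn
    exact Metric.mem_closure_iff.1 (h.1 n) _ (by positivity)
  set c' : ℕ → Euc d := fun n => if hn : 0 < ρ n then (hsel n hn).choose else hE.choose with hc'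
  set ρ' : ℕ → ℝ := fun n => if 0 < ρ n then (1 - θ) * ρ n else 0 with hρ'
  have hρ'def : ∀ n, 0 < ρ n → ρ' n = (1 - θ) * ρ n := fun n hn => by simp [hρ', hn]
  have hpack : IsPacking δ E c' ρ' := by
    refine isPacking_perturb h (fun n => ?_) (fun n => ?_) (fun n hn => ?_)
    · by_cases hn : 0 < ρ n
      · simp only [hc', dif_pos hn]; exact (hsel n hn).choose_spec.1
      · simp only [hc', dif_neg hn]; exact hE.choose_spec
    · by_cases hn : 0 < ρ n
      · constructor
        · rw [hρ'def n hn]; nlinarith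
        · rw [hρ'def n hn]
          calc (1 - θ) * ρ n ≤ 1 * ρ n := by nlinarith
          _ ≤ δ := by rw [one_mul]; exact (h.2.1 n).2
      · simp only [hρ', if_neg hn]
        exact ⟨le_rfl, le_trans (h.2.1 0).1 (h.2.1 0).2⟩
    · have hn2 : 0 < ρ n := by
        by_contra hc
        simp only [hρ', if_neg hc] at hn; exact absurd hn (by norm_num)
      rw [hρ'def n hn2]
      refine Metric.ball_subset_ball' ?_
      simp only [hc', dif_pos hn2]
      have := (hsel n hn2).choose_spec.2
      rw [dist_comm]
      nlinarith
  have hmass : pMass s ρ ≤ cFac s θ * pMass s ρ' := by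
    rw [pMass, pMass, ← ENNReal.tsum_mul_left]
    refine Summable.tsum_le_tsum (fun n => ?_) ENNReal.summable ENNReal.summable
    by_cases hn : 0 < ρ n
    · have hρ'n : 0 < ρ' n := by rw [hρ'def n hn]; nlinarith
      rw [if_pos hn, if_pos hρ'n, hρ'def n hn]
      refine mass_le_mul hs (inv_nonneg.2 (by linarith)) (le_of_lt hn) (by nlinarith) ?_
      rw [← mul_assoc, inv_mul_cancel₀ (by nlinarith), one_mul]
    · have : ¬ (0 < ρ' n) := by simp only [hρ', if_neg hn]; norm_num
      rw [if_neg hn, if_neg this]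
      exact zero_le
  exact le_trans hmass (mul_le_mul_right (pMass_le_packCount hpack) _)

theorem packingPre_closure_le {s : ℝ} (hs : 0 ≤ s) {E : Set (Euc d)}
    (hfin : packingPre s E ≠ ⊤) : packingPre s (closure E) ≤ packingPre s E := by
  rcases eq_empty_or_nonempty E with hE | hE
  · rw [hE, closure_empty]
  refine ENNReal.le_of_forall_pos_le_add fun ν hν _ => ?_
  have hX : packingPre s E + ν ≠ ⊤ := by
    exact ENNReal.add_ne_top.2 ⟨hfin, ENNReal.coe_ne_top⟩
  refine le_of_forall_cFac_mul hs hX fun θ hθ0 hθ1 => ?_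
  obtain ⟨δ, hδ0, hδle⟩ := exists_packCount_le hfin (ε := ν) (by simpa using hν)
  calc packingPre s (closure E) ≤ packCount s δ (closure E) := packingPre_le_packCount hδ0
    _ ≤ cFac s θ * packCount s δ E := packCount_closure_le hs hθ0 hθ1 hE
    _ ≤ cFac s θ * (packingPre s E + ν) := mul_le_mul_right hδle _

/-- Dyadic scales. -/
def rr (k : ℕ) : ℝ := (2 : ℝ)⁻¹ ^ k

theorem rr_pos (k : ℕ) : 0 < rr k := by unfold rr; positivity

theorem rr_anti {k m : ℕ} (h : k ≤ m) : rr m ≤ rr k :=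
  pow_le_pow_of_le_one (by norm_num) (by norm_num) h

theorem rr_strict {k m : ℕ} (h : k < m) : rr m < rr k :=
  pow_lt_pow_right_of_lt_one₀ (by norm_num) (by norm_num) h

theorem rr_succ (k : ℕ) : rr (k + 1) = 2⁻¹ * rr k := by
  rw [rr, rr, pow_succ]; ring

theorem tsum_shift {f : ℕ → ℝ≥0∞} : ∀ (J : ℕ), (∀ k, k < J → f k = 0) →
    ∑' k, f k = ∑' k, f (k + J) := by
  intro J
  induction J generalizing f with
  | zero => intro _; simp
  | succ J ih =>
    intro h0
    have h1 : ∑' k, f k = ∑' k, f (k + J) := ih fun k hk => h0 k (lt_trans hk (Nat.lt_succ_self J))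
    have h2 : ∑' k, f (k + J) = f J + ∑' k, f (k + 1 + J) := by
      simpa using tsum_eq_zero_add' (f := fun k => f (k + J)) ENNReal.summable
    rw [h1, h2, h0 J (Nat.lt_succ_self J), zero_add]
    exact tsum_congr fun k => by ring_nf

theorem exists_level {D : ℝ} (J : ℕ) (hD0 : 0 < D) (hDle : D ≤ rr (J + 1)) :
    ∃ k, J ≤ k ∧ rr (k + 1) ≤ D ∧ D < rr k := by
  have hex : ∃ k : ℕ, rr (k + 1) ≤ D := by
    obtain ⟨n, hn⟩ := exists_pow_lt_of_lt_one hD0 (by norm_num : (2 : ℝ)⁻¹ < 1)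
    exact ⟨n, le_of_lt (lt_of_le_of_lt (rr_anti (Nat.le_succ n)) hn)⟩
  classical
  set k := Nat.find hex with hk
  have h1 : rr (k + 1) ≤ D := Nat.find_spec hex
  have hJk : J ≤ k := by
    by_contra hc
    push_neg at hc
    have : rr (J + 1) < rr (k + 1) := rr_strict (by omega)
    linarith
  refine ⟨k, hJk, h1, ?_⟩
  rcases Nat.eq_zero_or_pos k with h | h
  · have : rr (J + 1) ≤ rr 1 := rr_anti (by omega)
    have h2 : rr 1 < rr 0 := rr_strict (by omega)
    rw [h]; linarith
  · have h2 := Nat.find_min hex (m := k - 1) (by omega)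
    push_neg at h2
    have : k - 1 + 1 = k := by omega
    rw [this] at h2
    linarith

variable {K F : Set (Euc d)}

/-- Points of `K` whose distance to `F` lies in the dyadic window at level `k`. -/
def lvlSet (K F : Set (Euc d)) (k : ℕ) : Set (Euc d) :=
  {y | y ∈ K ∧ rr (k + 1) ≤ infDist y F ∧ infDist y F < rr k}

/-- The region in which balls based at level `k` live. -/
def reg (F : Set (Euc d)) (k : ℕ) : Set (Euc d) :=
  {z | 6 * rr (k + 4) < infDist z F ∧ infDist z F < 18 * rr (k + 4)}

theorem ball_subset_reg {k : ℕ} {y : Euc d} (hy : y ∈ lvlSet K F k) {t : ℝ}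
    (ht : t ≤ rr (k + 3)) : ball y t ⊆ reg F k := by
  intro z hz
  rw [mem_ball, dist_comm] at hz
  obtain ⟨-, h1, h2⟩ := hy
  have l1 : infDist z F ≤ infDist y F + dist z y := Metric.infDist_le_infDist_add_dist
  have l2 : infDist y F ≤ infDist z F + dist y z := Metric.infDist_le_infDist_add_dist
  rw [dist_comm z y] at l1
  have e1 : rr (k + 1) = 8 * rr (k + 4) := by
    simp only [rr, show k + 4 = (k + 1) + 3 by omega, pow_add]; norm_num; ring
  have e2 : rr k = 16 * rr (k + 4) := by
    simp only [rr, pow_add]; norm_num; ring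
  have e3 : rr (k + 3) = 2 * rr (k + 4) := by
    simp only [rr, show k + 4 = (k + 3) + 1 by omega, pow_add]; norm_num; ring
  constructor
  · rw [e1] at h1; linarith
  · rw [e2] at h2; linarith

theorem reg_disjoint {k m : ℕ} (h : k + 2 ≤ m) : Disjoint (reg F k) (reg F m) := by
  rw [Set.disjoint_left]
  rintro z ⟨hk1, -⟩ ⟨-, hm2⟩
  have h1 : rr (m + 4) ≤ rr (k + 6) := rr_anti (by omega)
  have e1 : rr (k + 6) = 4⁻¹ * rr (k + 4) := by
    simp only [rr, show k + 6 = (k + 4) + 2 by omega, pow_add]; norm_num; ring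
  have := rr_pos (k + 4)
  rw [e1] at h1
  nlinarith

theorem infDist_le_of_mem_cthickening {η : ℝ} (hη : 0 ≤ η) {x : Euc d}
    (hx : x ∈ Metric.cthickening η F) : infDist x F ≤ η := by
  rw [Metric.mem_cthickening_iff] at hx
  have h1 : (EMetric.infEdist x F).toReal ≤ (ENNReal.ofReal η).toReal :=
    ENNReal.toReal_mono ENNReal.ofReal_ne_top hx
  rwa [ENNReal.toReal_ofReal hη] at h1

theorem claimA_count {s θ δ : ℝ} (hs : 0 ≤ s) (hθ0 : 0 < θ) (hθ1 : θ < 1)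
    {K F : Set (Euc d)} (hF : IsCompact F) (hFne : F.Nonempty) (hδ0 : 0 < δ) (J : ℕ) :
    packCount s δ (K ∩ Metric.cthickening (rr (J + 1)) F)
      ≤ cFac s θ * packCount s δ F
        + ENNReal.ofReal ((8 / θ) ^ s) *
            ∑' k, packCount s (rr (k + J + 3)) (lvlSet K F (k + J)) := by
  classical
  refine iSup_le fun c => iSup_le fun ρ => iSup_le fun h => ?_
  set D : ℕ → ℝ := fun n => infDist (c n) F with hD
  have hcK : ∀ n, c n ∈ K := fun n => (h.1 n).1
  have hDle : ∀ n, D n ≤ rr (J + 1) :=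
    fun n => infDist_le_of_mem_cthickening (le_of_lt (rr_pos _)) (h.1 n).2
  have hDnn : ∀ n, 0 ≤ D n := fun n => Metric.infDist_nonneg
  set Asel : ℕ → Prop := fun n => 0 < ρ n ∧ D n ≤ θ * ρ n with hAsel
  set mt : ℕ → ℝ≥0∞ := fun n => if 0 < ρ n then ENNReal.ofReal ((2 * ρ n) ^ s) else 0 with hmt
  have hsplit : (∑' n, mt n) =
      (∑' n, if Asel n then mt n else 0) + ∑' n, if Asel n then 0 else mt n :=
    tsum_split mt Asel
  -- Part A : balls close to F relative to their radius, moved onto F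
  have hnear : ∀ n, ∃ z, z ∈ F ∧ infDist (c n) F = dist (c n) z := fun n =>
    hF.exists_infDist_eq_dist hFne (c n)
  set zn : ℕ → Euc d := fun n => (hnear n).choose with hzn
  have hznF : ∀ n, zn n ∈ F := fun n => (hnear n).choose_spec.1
  have hznd : ∀ n, dist (c n) (zn n) = D n := fun n => ((hnear n).choose_spec.2).symm
  set ρA : ℕ → ℝ := fun n => if Asel n then ρ n - D n else 0 with hρA
  have hpackA : IsPacking δ F zn ρA := by
    refine isPacking_perturb h (fun n => hznF n) (fun n => ?_) (fun n hn => ?_)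
    · by_cases ha : Asel n
      · obtain ⟨h1, h2⟩ := ha
        simp only [hρA, if_pos (show Asel n from ⟨h1, h2⟩)]
        refine ⟨by nlinarith, ?_⟩
        have := (h.2.1 n).2
        have := hDnn n
        nlinarith
      · simp only [hρA, if_neg ha]
        exact ⟨le_rfl, le_of_lt hδ0⟩
    · have ha : Asel n := by
        by_contra hc
        simp only [hρA, if_neg hc] at hn
        exact absurd hn (by norm_num)
      simp only [hρA, if_pos ha] at hn ⊢
      refine Metric.ball_subset_ball' ?_
      rw [dist_comm, hznd n]
      linarith
  have hmassA : (∑' n, if Asel n then mt n else 0) ≤ cFac s θ * packCount s δ F := by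
    refine le_trans ?_ (mul_le_mul_right (pMass_le_packCount (s := s) hpackA) _)
    rw [pMass, ← ENNReal.tsum_mul_left]
    refine Summable.tsum_le_tsum (fun n => ?_) ENNReal.summable ENNReal.summable
    by_cases ha : Asel n
    · have hρ'pos : 0 < ρA n := by
        simp only [hρA, if_pos ha]
        obtain ⟨h1, h2⟩ := ha
        nlinarith
      rw [if_pos ha, hmt]
      simp only [if_pos ha.1, if_pos hρ'pos]
      have heq : ρA n = ρ n - D n := by simp only [hρA, if_pos ha]
      rw [heq] at hρ'pos ⊢
      obtain ⟨h1, h2⟩ := ha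
      refine mass_le_mul hs (inv_nonneg.2 (by linarith)) (le_of_lt h1) hρ'pos ?_
      rw [le_inv_mul_iff₀ (by linarith : (0:ℝ) < 1 - θ)]
      nlinarith
    · rw [if_neg ha]
      exact zero_le
  -- Part B : balls far from F relative to their radius, shrunk into dyadic windows
  set Bsel : ℕ → Prop := fun n => 0 < ρ n ∧ θ * ρ n < D n with hBsel
  have hBD : ∀ n, Bsel n → 0 < D n := fun n hb =>
    lt_of_le_of_lt (mul_nonneg (le_of_lt hθ0) (le_of_lt hb.1)) hb.2
  set g : ℕ → ℝ≥0∞ := fun n => if Asel n then 0 else mt n with hg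
  have hgzero : ∀ n, ¬ Bsel n → g n = 0 := by
    intro n hb
    by_cases ha : Asel n
    · simp only [hg, if_pos ha]
    · have hρ0 : ¬ 0 < ρ n := by
        intro hρ
        rcases le_or_gt (D n) (θ * ρ n) with hle | hlt
        · exact ha ⟨hρ, hle⟩
        · exact hb ⟨hρ, hlt⟩
      simp only [hg, if_neg ha, hmt, if_neg hρ0]
  set lev : ℕ → ℕ := fun n =>
    if hb : Bsel n then (exists_level J (hBD n hb) (hDle n)).choose else 0 with hlev
  have hlevspec : ∀ n, Bsel n → J ≤ lev n ∧ rr (lev n + 1) ≤ D n ∧ D n < rr (lev n) := by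
    intro n hb
    simp only [hlev, dif_pos hb]
    exact (exists_level J (hBD n hb) (hDle n)).choose_spec
  set inner : ℕ → ℝ≥0∞ := fun k => ∑' n, if k = lev n then g n else 0 with hinnerdef
  have hpart : (∑' n, g n) = ∑' k, inner k := tsum_partition g lev
  have hzeroJ : ∀ k, k < J → inner k = 0 := by
    intro k hk
    simp only [hinnerdef]
    have : ∀ n, (if k = lev n then g n else 0) = 0 := by
      intro n
      by_cases hkn : k = lev n
      · rw [if_pos hkn]
        by_cases hb : Bsel n
        · exact absurd ((hlevspec n hb).1) (by omega)
        · exact hgzero n hb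
      · rw [if_neg hkn]
    rw [tsum_congr this]
    exact tsum_zero
  have hinner : ∀ k, inner k ≤
      ENNReal.ofReal ((8 / θ) ^ s) * packCount s (rr (k + 3)) (lvlSet K F k) := by
    intro k
    set sel : ℕ → Prop := fun n => k = lev n ∧ Bsel n with hseldef
    by_cases hex : ∃ n, sel n
    · obtain ⟨n₀, hn₀⟩ := hex
      set cB : ℕ → Euc d := fun n => if sel n then c n else c n₀ with hcB
      set ρB : ℕ → ℝ := fun n => if sel n then min (ρ n) (D n / 8) else 0 with hρB
      have hrrk3 : rr (k + 3) = rr k * 8⁻¹ := by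
        simp only [rr, pow_add]; norm_num
      have hmem : ∀ n, sel n → c n ∈ lvlSet K F k := by
        intro n hsn
        obtain ⟨hk, hb⟩ := hsn
        obtain ⟨hJl, hl1, hl2⟩ := hlevspec n hb
        refine ⟨hcK n, ?_, ?_⟩
        · rw [hk]; exact hl1
        · rw [hk]; exact hl2
      have hminpos : ∀ n, sel n → 0 < min (ρ n) (D n / 8) := by
        intro n hsn
        exact lt_min hsn.2.1 (by have := hBD n hsn.2; linarith)
      have hpackB : IsPacking (rr (k + 3)) (lvlSet K F k) cB ρB := by
        refine isPacking_perturb h (fun n => ?_) (fun n => ?_) (fun n hn => ?_)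
        · by_cases hsn : sel n
          · simp only [hcB, if_pos hsn]; exact hmem n hsn
          · simp only [hcB, if_neg hsn]; exact hmem n₀ hn₀
        · by_cases hsn : sel n
          · simp only [hρB, if_pos hsn]
            refine ⟨le_of_lt (hminpos n hsn), ?_⟩
            have hDlt : D n < rr k := by
              rw [hsn.1]; exact (hlevspec n hsn.2).2.2
            have := min_le_right (ρ n) (D n / 8)
            linarith
          · simp only [hρB, if_neg hsn]
            exact ⟨le_rfl, le_of_lt (rr_pos _)⟩
        · have hsn : sel n := by
            by_contra hc
            simp only [hρB, if_neg hc] at hn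
            exact absurd hn (by norm_num)
          simp only [hcB, hρB, if_pos hsn] at hn ⊢
          exact Metric.ball_subset_ball (min_le_left _ _)
      refine le_trans ?_ (mul_le_mul_right (pMass_le_packCount hpackB) _)
      rw [pMass, ← ENNReal.tsum_mul_left]
      simp only [hinnerdef]
      refine Summable.tsum_le_tsum (fun n => ?_) ENNReal.summable ENNReal.summable
      by_cases hkn : k = lev n
      · rw [if_pos hkn]
        by_cases hb : Bsel n
        · have hsn : sel n := ⟨hkn, hb⟩
          have hρBpos : 0 < ρB n := by
            simp only [hρB, if_pos hsn]; exact hminpos n hsn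
          have hna : ¬ Asel n := by
            rintro ⟨-, hle⟩
            exact absurd hb.2 (not_lt.2 hle)
          rw [if_pos hρBpos]
          simp only [hg, if_neg hna, hmt, if_pos hb.1, hρB, if_pos hsn]
          refine mass_le_mul hs (by positivity) (le_of_lt hb.1) (hminpos n hsn) ?_
          rcases le_total (ρ n) (D n / 8) with hmin | hmin
          · rw [min_eq_left hmin]
            have h81 : (1:ℝ) ≤ 8 / θ := by
              rw [le_div_iff₀ hθ0]; linarith
            nlinarith [hb.1]
          · rw [min_eq_right hmin]
            have heq : 8 / θ * (D n / 8) = D n / θ := by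
              field_simp
            rw [heq, le_div_iff₀ hθ0]
            calc ρ n * θ = θ * ρ n := by ring
            _ ≤ D n := le_of_lt hb.2
        · rw [hgzero n hb]
          exact zero_le
      · rw [if_neg hkn]
        exact zero_le
    · have : inner k = 0 := by
        simp only [hinnerdef]
        have hz : ∀ n, (if k = lev n then g n else 0) = 0 := by
          intro n
          by_cases hkn : k = lev n
          · rw [if_pos hkn]
            by_cases hb : Bsel n
            · exact absurd (⟨n, hkn, hb⟩ : ∃ m, sel m) hex
            · exact hgzero n hb
          · rw [if_neg hkn]
        rw [tsum_congr hz]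
        exact tsum_zero
      rw [this]
      exact zero_le
  -- assemble
  have hmassB : (∑' n, if Asel n then 0 else mt n) ≤
      ENNReal.ofReal ((8 / θ) ^ s) *
        ∑' k, packCount s (rr (k + J + 3)) (lvlSet K F (k + J)) := by
    have h1 : (∑' n, g n) = ∑' k, inner (k + J) := by
      rw [hpart]
      exact tsum_shift J hzeroJ
    calc (∑' n, if Asel n then 0 else mt n) = ∑' k, inner (k + J) := h1
      _ ≤ ∑' k, ENNReal.ofReal ((8 / θ) ^ s) *
            packCount s (rr (k + J + 3)) (lvlSet K F (k + J)) := by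
          refine Summable.tsum_le_tsum (fun k => ?_) ENNReal.summable ENNReal.summable
          exact hinner (k + J)
      _ = _ := ENNReal.tsum_mul_left
  calc (∑' n, mt n) = _ + _ := hsplit
    _ ≤ _ := add_le_add hmassA hmassB

theorem cFac_mul_tendsto (s : ℝ) (X : ℝ≥0∞) :
    Tendsto (fun m : ℕ => cFac s (((m : ℝ) + 2)⁻¹) * X) atTop (𝓝 X) := by
  have h2 : Tendsto (fun m : ℕ => ((m : ℝ) + 2)⁻¹) atTop (𝓝 0) :=
    tendsto_inv_atTop_zero.comp
      (Filter.tendsto_atTop_add_const_right _ 2 tendsto_natCast_atTop_atTop)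
  have h3 : Tendsto (fun m : ℕ => 1 - ((m : ℝ) + 2)⁻¹) atTop (𝓝 1) := by
    simpa using Filter.Tendsto.const_sub 1 h2
  have h4 : Tendsto (fun m : ℕ => (1 - ((m : ℝ) + 2)⁻¹)⁻¹) atTop (𝓝 1) := by
    simpa [Function.comp_def] using ((continuousAt_inv₀ one_ne_zero).tendsto.comp h3)
  have h5 : Tendsto (fun m : ℕ => (1 - ((m : ℝ) + 2)⁻¹)⁻¹ ^ s) atTop (𝓝 1) := by
    have := (Real.continuousAt_rpow_const 1 s (Or.inl one_ne_zero)).tendsto.comp h4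
    simpa [Real.one_rpow, Function.comp_def] using this
  have h7 : Tendsto (fun m : ℕ => cFac s (((m : ℝ) + 2)⁻¹)) atTop (𝓝 1) := by
    have := (ENNReal.continuous_ofReal.tendsto 1).comp h5
    simpa [cFac, ENNReal.ofReal_one, Function.comp_def] using this
  simpa using ENNReal.Tendsto.mul_const h7 (Or.inl one_ne_zero)

theorem theta_mem (m : ℕ) : 0 < ((m : ℝ) + 2)⁻¹ ∧ ((m : ℝ) + 2)⁻¹ < 1 := by
  constructor
  · positivity
  · rw [inv_lt_one_iff₀]; right; linarith [Nat.cast_nonneg (α := ℝ) m]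

theorem tail_le {s δ₁ : ℝ} {K F : Set (Euc d)} (hK : K.Nonempty) (hδ₁ : 0 < δ₁)
    (hfin : packCount s δ₁ K ≠ ⊤) (J : ℕ) (hJ : rr (J + 3) ≤ δ₁) :
    ∑' k, packCount s (rr (k + J + 3)) (lvlSet K F (k + J)) ≤ 2 * packCount s δ₁ K := by
  have heo := tsum_even_add_odd
    (f := fun i => packCount s (rr (i + J + 3)) (lvlSet K F (i + J)))
    ENNReal.summable ENNReal.summable
  rw [← heo, two_mul]
  refine add_le_add ?_ ?_
  · refine tsum_packCount_le hK hδ₁ (A := fun k => lvlSet K F (2 * k + J))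
      (fun k y hy => hy.1) (δk := fun k => rr (2 * k + J + 3))
      (fun k => ⟨rr_pos _, le_trans (rr_anti (by omega)) hJ⟩)
      (R := fun k => reg F (2 * k + J)) ?_ ?_ ?_
    · intro k k' hkk
      rcases lt_or_gt_of_ne hkk with hlt | hlt
      · exact reg_disjoint (by omega)
      · exact (reg_disjoint (by omega)).symm
    · intro k
      exact ne_top_of_le_ne_top hfin
        (packCount_mono (le_trans (rr_anti (by omega)) hJ) (fun y hy => hy.1))
    · intro k y r hy hr0 hrle
      exact ball_subset_reg hy hrle
  · refine tsum_packCount_le hK hδ₁ (A := fun k => lvlSet K F (2 * k + 1 + J))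
      (fun k y hy => hy.1) (δk := fun k => rr (2 * k + 1 + J + 3))
      (fun k => ⟨rr_pos _, le_trans (rr_anti (by omega)) hJ⟩)
      (R := fun k => reg F (2 * k + 1 + J)) ?_ ?_ ?_
    · intro k k' hkk
      rcases lt_or_gt_of_ne hkk with hlt | hlt
      · exact reg_disjoint (by omega)
      · exact (reg_disjoint (by omega)).symm
    · intro k
      exact ne_top_of_le_ne_top hfin
        (packCount_mono (le_trans (rr_anti (by omega)) hJ) (fun y hy => hy.1))
    · intro k y r hy hr0 hrle
      exact ball_subset_reg hy hrle

theorem claimA {s : ℝ} (hs : 0 ≤ s) {K F : Set (Euc d)} (hKc : IsCompact K)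
    (hfin : packingPre s K ≠ ⊤) (hFc : IsClosed F) (hFK : F ⊆ K) {ε : ℝ≥0∞} (hε : 0 < ε) :
    ∃ η : ℝ, 0 < η ∧ packingPre s (K ∩ Metric.cthickening η F) ≤ packingPre s F + ε := by
  rcases eq_empty_or_nonempty F with hFe | hFne
  · refine ⟨1, one_pos, ?_⟩
    rw [hFe, Metric.cthickening_empty, Set.inter_empty, packingPre_empty]
    exact zero_le
  rcases eq_or_ne ε ⊤ with hεt | hεt
  · refine ⟨1, one_pos, ?_⟩
    rw [hεt, add_top]
    exact le_top
  have hε0 : ε ≠ 0 := ne_of_gt hε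
  have hF : IsCompact F := hKc.of_isClosed_subset hFc hFK
  have hK : K.Nonempty := hFne.mono hFK
  have hpreF : packingPre s F ≠ ⊤ := ne_top_of_le_ne_top hfin (packingPre_mono hFK)
  set B := packingPre s F with hB
  set ε₂ := ε / 2 with hε₂
  set ε₄ := ε₂ / 2 with hε₄
  have hε₂0 : ε₂ ≠ 0 := by
    simp only [hε₂, ne_eq, ENNReal.div_eq_zero_iff]
    push_neg
    exact ⟨hε0, by norm_num⟩
  have hε₂t : ε₂ ≠ ⊤ := by
    rw [hε₂]
    exact ne_of_lt (ENNReal.div_lt_top hεt (by norm_num))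
  have hε₄t : ε₄ ≠ ⊤ := by
    rw [hε₄]
    exact ne_of_lt (ENNReal.div_lt_top hε₂t (by norm_num))
  obtain ⟨δ₁, hδ₁0, hδ₁1, hδ₁fin⟩ := exists_packCount_finite hfin
  -- choose θ
  have hXY : B + ε₄ < B + ε₂ :=
    ENNReal.add_lt_add_left hpreF (ENNReal.half_lt_self hε₂0 hε₂t)
  obtain ⟨mθ, hmθ⟩ := ((cFac_mul_tendsto s (B + ε₄)).eventually (Iic_mem_nhds hXY)).exists
  set θ := ((mθ : ℝ) + 2)⁻¹ with hθdef
  obtain ⟨hθ0, hθ1⟩ := theta_mem mθ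
  -- choose scale J₀ with rr (J₀ + 3) ≤ δ₁
  obtain ⟨m, hm⟩ := exists_pow_lt_of_lt_one hδ₁0 (by norm_num : (2 : ℝ)⁻¹ < 1)
  have hmδ : ∀ J, m ≤ J → rr (J + 3) ≤ δ₁ := by
    intro J hJ
    exact le_of_lt (lt_of_le_of_lt (rr_anti (by omega)) hm)
  -- the tail series is finite from level m on
  have hTfin : (∑' k, packCount s (rr (k + m + 3)) (lvlSet K F (k + m))) ≠ ⊤ := by
    refine ne_top_of_le_ne_top ?_ (tail_le hK hδ₁0 (ne_of_lt hδ₁fin) m (hmδ m le_rfl))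
    exact ENNReal.mul_ne_top (by norm_num) (ne_of_lt hδ₁fin)
  set cB := ENNReal.ofReal ((8 / θ) ^ s) with hcB
  have hcBt : cB ≠ ⊤ := ENNReal.ofReal_ne_top
  have htail := ENNReal.tendsto_sum_nat_add _ hTfin
  have htail2 : Tendsto
      (fun i => cB * ∑' k, packCount s (rr (k + i + m + 3)) (lvlSet K F (k + i + m)))
      atTop (𝓝 0) := by
    have h1 := ENNReal.Tendsto.const_mul (a := cB) htail (Or.inr hcBt)
    rw [mul_zero] at h1
    exact h1
  obtain ⟨i, hi⟩ := (htail2.eventually (Iic_mem_nhds (pos_iff_ne_zero.2 hε₂0))).exists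
  try simp only [Set.mem_Iic] at hi
  set J := i + m with hJdef
  obtain ⟨δ, hδ0, hδle⟩ := exists_packCount_le hpreF (ε := ε₄)
    (pos_iff_ne_zero.2 (by
      simp only [hε₄, ne_eq, ENNReal.div_eq_zero_iff]
      push_neg
      exact ⟨hε₂0, by norm_num⟩))
  try simp only [Set.mem_Iic] at hmθ
  have hbound1 : cFac s θ * packCount s δ F ≤ B + ε₂ :=
    le_trans (mul_le_mul_right hδle _) hmθ
  have hbound2 : cB * (∑' k, packCount s (rr (k + J + 3)) (lvlSet K F (k + J))) ≤ ε₂ := by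
    have heq : (∑' k, packCount s (rr (k + J + 3)) (lvlSet K F (k + J)))
        = ∑' k, packCount s (rr (k + i + m + 3)) (lvlSet K F (k + i + m)) :=
      tsum_congr fun k => by rw [show k + J = k + i + m from by omega]
    rw [heq]
    exact hi
  refine ⟨rr (J + 1), rr_pos _, ?_⟩
  calc packingPre s (K ∩ Metric.cthickening (rr (J + 1)) F)
      ≤ packCount s δ (K ∩ Metric.cthickening (rr (J + 1)) F) := packingPre_le_packCount hδ0
    _ ≤ cFac s θ * packCount s δ F
        + cB * ∑' k, packCount s (rr (k + J + 3)) (lvlSet K F (k + J)) :=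
      claimA_count hs hθ0 hθ1 hF hFne hδ0 J
    _ ≤ (B + ε₂) + ε₂ := add_le_add hbound1 hbound2
    _ = B + ε := by rw [add_assoc, hε₂, ENNReal.add_halves]

theorem packingMeasure_le_packingPre {s : ℝ} (E : Set (Euc d)) :
    packingMeasure s E ≤ packingPre s E := by
  classical
  refine iInf₂_le_of_le (fun n => if n = 0 then E else ∅) (fun x hx => mem_iUnion.2 ⟨0, by simpa using hx⟩) ?_
  have h1 : ∀ n, packingPre s (if n = 0 then E else ∅)
      = if n = 0 then packingPre s E else 0 := by
    intro n
    by_cases h : n = 0 <;> simp [h, packingPre_empty]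
  rw [tsum_congr h1]; exact le_of_eq (tsum_ite_eq 0 (fun _ => packingPre s E))

theorem packingPre_le_sum {s : ℝ} (hs : 0 ≤ s) {K : Set (Euc d)} (hKc : IsCompact K)
    (hfin : packingPre s K ≠ ⊤) {G : ℕ → Set (Euc d)} (hcov : K ⊆ ⋃ n, G n) :
    packingPre s K ≤ ∑' n, packingPre s (G n) := by
  classical
  rcases eq_empty_or_nonempty K with hKe | hK
  · rw [hKe, packingPre_empty]; exact zero_le
  refine ENNReal.le_of_forall_pos_le_add fun ν hν _ => ?_
  set en : ℕ → ℝ≥0∞ := fun n => (ν : ℝ≥0∞) * 2⁻¹ ^ (n + 2) with hen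
  have hen0 : ∀ n, 0 < en n := by
    intro n
    refine ENNReal.mul_pos (by simpa using ne_of_gt hν) ?_
    exact pow_ne_zero _ (by norm_num)
  -- the sets
  set En : ℕ → Set (Euc d) := fun n => G n ∩ K with hEn
  have hEnK : ∀ n, En n ⊆ K := fun n => Set.inter_subset_right
  have hFnK : ∀ n, closure (En n) ⊆ K := fun n =>
    closure_minimal (hEnK n) hKc.isClosed
  have hclos : ∀ n, packingPre s (closure (En n)) ≤ packingPre s (En n) := by
    intro n
    exact packingPre_closure_le hs (ne_top_of_le_ne_top hfin (packingPre_mono (hEnK n)))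
  have hclA : ∀ n, ∃ η : ℝ, 0 < η ∧
      packingPre s (K ∩ Metric.cthickening η (closure (En n)))
        ≤ packingPre s (closure (En n)) + en n := by
    intro n
    exact claimA hs hKc hfin isClosed_closure (hFnK n) (hen0 n)
  choose ηn hηn0 hηn using hclA
  set Hn : ℕ → Set (Euc d) := fun n => K ∩ Metric.cthickening (ηn n) (closure (En n)) with hHn
  have hHnfin : ∀ n, packingPre s (Hn n) ≠ ⊤ :=
    fun n => ne_top_of_le_ne_top hfin (packingPre_mono Set.inter_subset_left)
  have hδn : ∀ n, ∃ δ : ℝ, 0 < δ ∧ packCount s δ (Hn n) ≤ packingPre s (Hn n) + en n := by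
    intro n
    exact exists_packCount_le (hHnfin n) (hen0 n)
  choose δn hδn0 hδnle using hδn
  -- open cover
  set Un : ℕ → Set (Euc d) := fun n => Metric.thickening (ηn n) (En n) with hUn
  have hUnH : ∀ n, K ∩ Un n ⊆ Hn n := by
    intro n
    refine Set.inter_subset_inter_right _ ?_
    rw [Metric.cthickening_closure]
    exact Metric.thickening_subset_cthickening _ _
  have hcov2 : K ⊆ ⋃ n, Un n := by
    intro x hx
    obtain ⟨n, hn⟩ := mem_iUnion.1 (hcov hx)
    exact mem_iUnion.2 ⟨n, Metric.self_subset_thickening (hηn0 n) _ ⟨hn, hx⟩⟩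
  obtain ⟨S, hS⟩ := hKc.elim_finite_subcover Un (fun n => Metric.isOpen_thickening) hcov2
  have hSne : S.Nonempty := by
    obtain ⟨x, hx⟩ := hK
    obtain ⟨n, hn, -⟩ := mem_iUnion₂.1 (hS hx)
    exact ⟨n, hn⟩
  set δ : ℝ := S.inf' hSne δn with hδdef
  have hδ0 : 0 < δ := (Finset.lt_inf'_iff hSne).2 fun n _ => hδn0 n
  -- split a packing of K over the finite cover
  have hcount : packCount s δ K ≤ ∑ n ∈ S, packCount s (δn n) (Hn n) := by
    refine iSup_le fun c => iSup_le fun ρ => iSup_le fun h => ?_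
    set mt : ℕ → ℝ≥0∞ := fun i => if 0 < ρ i then ENNReal.ofReal ((2 * ρ i) ^ s) else 0 with hmt
    have hassign : ∀ i, ∃ n, n ∈ S ∧ c i ∈ Un n := by
      intro i
      obtain ⟨n, hn, hmem⟩ := mem_iUnion₂.1 (hS (h.1 i))
      exact ⟨n, hn, hmem⟩
    choose nsel hnselS hnselU using hassign
    have hptw : ∀ i, mt i = ∑ n ∈ S, if nsel i = n then mt i else 0 := by
      intro i
      rw [Finset.sum_ite_eq S (nsel i) (fun _ => mt i), if_pos (hnselS i)]
    calc (∑' i, mt i) = ∑' i, ∑ n ∈ S, (if nsel i = n then mt i else 0) := tsum_congr hptw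
      _ = ∑ n ∈ S, ∑' i, (if nsel i = n then mt i else 0) :=
          Summable.tsum_finsetSum fun i _ => ENNReal.summable
      _ ≤ ∑ n ∈ S, packCount s (δn n) (Hn n) := by
          refine Finset.sum_le_sum fun n hnS => ?_
          by_cases hex : ∃ i, nsel i = n ∧ 0 < ρ i
          · obtain ⟨i₀, hi₀⟩ := hex
            set sel : ℕ → Prop := fun i => nsel i = n ∧ 0 < ρ i with hseldef
            set c' : ℕ → Euc d := fun i => if sel i then c i else c i₀ with hc'
            set ρ' : ℕ → ℝ := fun i => if sel i then ρ i else 0 with hρ'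
            have hmemH : ∀ i, sel i → c i ∈ Hn n := by
              intro i hsi
              refine hUnH n ⟨h.1 i, ?_⟩
              rw [← hsi.1]
              exact hnselU i
            have hpack' : IsPacking (δn n) (Hn n) c' ρ' := by
              refine isPacking_perturb h (fun i => ?_) (fun i => ?_) (fun i hi => ?_)
              · by_cases hsi : sel i
                · simp only [hc', if_pos hsi]; exact hmemH i hsi
                · simp only [hc', if_neg hsi]; exact hmemH i₀ hi₀
              · by_cases hsi : sel i
                · simp only [hρ', if_pos hsi]
                  refine ⟨(h.2.1 i).1, le_trans (h.2.1 i).2 ?_⟩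
                  exact Finset.inf'_le δn hnS
                · simp only [hρ', if_neg hsi]
                  exact ⟨le_rfl, le_of_lt (hδn0 n)⟩
              · have hsi : sel i := by
                  by_contra hcon
                  simp only [hρ', if_neg hcon] at hi
                  exact absurd hi (by norm_num)
                simp only [hc', hρ', if_pos hsi]
                exact subset_rfl
            refine le_trans ?_ (pMass_le_packCount hpack')
            rw [pMass]
            refine Summable.tsum_le_tsum (fun i => ?_) ENNReal.summable ENNReal.summable
            by_cases hni : nsel i = n
            · rw [if_pos hni]
              by_cases hρi : 0 < ρ i
              · have hsi : sel i := ⟨hni, hρi⟩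
                simp only [hmt, hρ', if_pos hsi]
                exact le_rfl
              · simp only [hmt, if_neg hρi]
                exact zero_le
            · rw [if_neg hni]
              exact zero_le
          · have hz : ∀ i, (if nsel i = n then mt i else 0) = 0 := by
              intro i
              by_cases hni : nsel i = n
              · have hnρ : ¬ 0 < ρ i := fun hρi => hex ⟨i, hni, hρi⟩
                simp only [if_pos hni, hmt, if_neg hnρ]
              · rw [if_neg hni]
            rw [tsum_congr hz, tsum_zero]
            exact zero_le
  -- put everything together
  have hsum2 : ∑ n ∈ S, packCount s (δn n) (Hn n)
      ≤ ∑' n, packingPre s (G n) + (ν : ℝ≥0∞) := by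
    have hterm : ∀ n, packCount s (δn n) (Hn n) ≤ packingPre s (G n) + 2 * en n := by
      intro n
      calc packCount s (δn n) (Hn n) ≤ packingPre s (Hn n) + en n := hδnle n
        _ ≤ (packingPre s (closure (En n)) + en n) + en n := add_le_add_left (hηn n) _
        _ ≤ (packingPre s (En n) + en n) + en n := by
            exact add_le_add_left (add_le_add_left (hclos n) _) _
        _ ≤ (packingPre s (G n) + en n) + en n := by
            exact add_le_add_left (add_le_add_left (packingPre_mono Set.inter_subset_left) _) _
        _ = packingPre s (G n) + 2 * en n := by ring
    calc ∑ n ∈ S, packCount s (δn n) (Hn n)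
        ≤ ∑ n ∈ S, (packingPre s (G n) + 2 * en n) := Finset.sum_le_sum fun n _ => hterm n
      _ ≤ ∑' n, (packingPre s (G n) + 2 * en n) := ENNReal.sum_le_tsum S
      _ = ∑' n, packingPre s (G n) + 2 * ∑' n, en n := by
          rw [ENNReal.tsum_add, ENNReal.tsum_mul_left]
      _ ≤ ∑' n, packingPre s (G n) + (ν : ℝ≥0∞) := by
          refine add_le_add_right ?_ _
          have : ∑' n, en n = (ν : ℝ≥0∞) * ∑' n : ℕ, (2⁻¹ : ℝ≥0∞) ^ (n + 2) := by
            rw [hen, ENNReal.tsum_mul_left]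
          rw [this]
          have h14 : ∑' n : ℕ, (2⁻¹ : ℝ≥0∞) ^ (n + 2) ≤ 2⁻¹ := by
            have hh : ∀ n : ℕ, (2⁻¹ : ℝ≥0∞) ^ (n + 2) = 2⁻¹ * 2⁻¹ ^ (n + 1) := fun n => by
              ring
            rw [tsum_congr hh, ENNReal.tsum_mul_left, geom_half, mul_one]
          calc 2 * ((ν : ℝ≥0∞) * ∑' n : ℕ, (2⁻¹ : ℝ≥0∞) ^ (n + 2))
              ≤ 2 * ((ν : ℝ≥0∞) * 2⁻¹) := by
                exact mul_le_mul_right (mul_le_mul_right h14 _) _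
            _ = (ν : ℝ≥0∞) := by
                rw [mul_comm ((ν : ℝ≥0∞)) 2⁻¹, ← mul_assoc,
                  ENNReal.mul_inv_cancel two_ne_zero ENNReal.ofNat_ne_top, one_mul]
  calc packingPre s K ≤ packCount s δ K := packingPre_le_packCount hδ0
    _ ≤ ∑ n ∈ S, packCount s (δn n) (Hn n) := hcount
    _ ≤ ∑' n, packingPre s (G n) + (ν : ℝ≥0∞) := hsum2
end Pack4

/-- for a compact set `K ⊆ ℝ^d` and `s ≥ 0`, if the packing
premeasure `P₀^s(K)` is finite, then it equals the packing measure `P^s(K)`. -/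
theorem stmt4 {d : ℕ} (s : ℝ) (hs : 0 ≤ s) (K : Set (Euc d)) (hKc : IsCompact K)
    (hfin : packingPre s K ≠ ⊤) :
    packingPre s K = packingMeasure s K := by
  refine le_antisymm ?_ (Pack4.packingMeasure_le_packingPre K)
  exact le_iInf₂ fun G hcov => Pack4.packingPre_le_sum hs hKc hfin hcov
end
end

section
/- Let E ⊂ R^d and α > 0 satisfy 0 < P^α(E) < ∞, where P^α is α-dimensional packing measure. Then for P^α-almost every x ∈ E, the lower α-density liminf_{r→0} P^α(E ∩ B(x,r)) / (2r)^α equals 1. -/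
open Metric Set MeasureTheory ENNReal Filter
open Topology

noncomputable section

namespace P6

variable {d : ℕ}

lemma le_packCount {s δ : ℝ} {E : Set (Euc d)} (c : ℕ → Euc d) (ρ : ℕ → ℝ)
    (h : IsPacking δ E c ρ) {X : ℝ≥0∞}
    (hX : X ≤ ∑' n, if 0 < ρ n then ENNReal.ofReal ((2 * ρ n) ^ s) else 0) :
    X ≤ packCount s δ E :=
  hX.trans (le_iSup_of_le c (le_iSup_of_le ρ (le_iSup_of_le h le_rfl)))

lemma packCount_le {s δ : ℝ} {E : Set (Euc d)} {X : ℝ≥0∞}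
    (h : ∀ c ρ, IsPacking δ E c ρ →
      (∑' n, if 0 < ρ n then ENNReal.ofReal ((2 * ρ n) ^ s) else 0) ≤ X) :
    packCount s δ E ≤ X :=
  iSup_le fun c => iSup_le fun ρ => iSup_le fun hp => h c ρ hp

lemma packCount_mono_set {s δ : ℝ} {E F : Set (Euc d)} (h : E ⊆ F) :
    packCount s δ E ≤ packCount s δ F := by
  refine packCount_le fun c ρ hp => le_packCount c ρ ?_ le_rfl
  exact ⟨fun n => h (hp.1 n), hp.2.1, hp.2.2⟩

lemma packCount_mono_delta {s : ℝ} {δ₁ δ₂ : ℝ} (h : δ₁ ≤ δ₂) (E : Set (Euc d)) :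
    packCount s δ₁ E ≤ packCount s δ₂ E := by
  refine packCount_le fun c ρ hp => le_packCount c ρ ?_ le_rfl
  exact ⟨hp.1, fun n => ⟨(hp.2.1 n).1, (hp.2.1 n).2.trans h⟩, hp.2.2⟩

lemma packingPre_empty (s : ℝ) : packingPre s (∅ : Set (Euc d)) = 0 := by
  have h : packCount s 1 (∅ : Set (Euc d)) = 0 := by
    refine le_antisymm (packCount_le fun c ρ hp => absurd (hp.1 0) (notMem_empty _)) zero_le
  refine le_antisymm ?_ zero_le
  exact iInf_le_of_le 1 (iInf_le_of_le one_pos h.le)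

lemma packingPre_mono {s : ℝ} {E F : Set (Euc d)} (h : E ⊆ F) :
    packingPre s E ≤ packingPre s F :=
  iInf_mono fun δ => iInf_mono fun _ => packCount_mono_set h

lemma packingPre_le_packCount {s : ℝ} {δ : ℝ} (hδ : 0 < δ) (E : Set (Euc d)) :
    packingPre s E ≤ packCount s δ E :=
  iInf_le_of_le δ (iInf_le_of_le hδ le_rfl)

/-- The packing (outer) measure as a Mathlib `OuterMeasure`. -/
noncomputable def PO (α : ℝ) : OuterMeasure (Euc d) :=
  OuterMeasure.ofFunction (packingPre α) (packingPre_empty α)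

lemma PM_eq (α : ℝ) (S : Set (Euc d)) : packingMeasure α S = PO α S := by
  rw [PO, OuterMeasure.ofFunction_apply]
  rfl

lemma PO_le_pre (α : ℝ) (S : Set (Euc d)) : PO α S ≤ packingPre α S :=
  OuterMeasure.ofFunction_le S

lemma sep_real {S T : Set (Euc d)} (h : AreSeparated S T) :
    ∃ r : ℝ, 0 < r ∧ ∀ x ∈ S, ∀ y ∈ T, r ≤ dist x y := by
  obtain ⟨r, hr0, hr⟩ := h
  have hmin : (0 : ℝ≥0∞) < min r 1 := lt_min (pos_iff_ne_zero.2 hr0) one_pos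
  refine ⟨(min r 1).toReal, ?_, fun x hx y hy => ?_⟩
  · exact ENNReal.toReal_pos hmin.ne' (ne_top_of_le_ne_top one_ne_top (min_le_right _ _))
  · have h1 : min r 1 ≤ edist x y := le_trans (min_le_left _ _) (hr x hx y hy)
    have := ENNReal.toReal_mono (edist_ne_top x y) h1
    rwa [← dist_edist] at this

lemma packCount_eq (s δ : ℝ) (E : Set (Euc d)) :
    packCount s δ E = ⨆ p : {p : (ℕ → Euc d) × (ℕ → ℝ) // IsPacking δ E p.1 p.2},
      ∑' n, if 0 < p.1.2 n then ENNReal.ofReal ((2 * p.1.2 n) ^ s) else 0 :=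
  le_antisymm (packCount_le fun c ρ h => le_iSup_of_le ⟨(c, ρ), h⟩ le_rfl)
    (iSup_le fun p => le_packCount p.1.1 p.1.2 p.2 le_rfl)

lemma interleave_le {s δ r : ℝ} {S T : Set (Euc d)} (hr : 0 < r)
    (hsep : ∀ x ∈ S, ∀ y ∈ T, r ≤ dist x y) (hδ : 2 * δ ≤ r)
    (cS : ℕ → Euc d) (ρS : ℕ → ℝ) (hpS : IsPacking δ S cS ρS)
    (cT : ℕ → Euc d) (ρT : ℕ → ℝ) (hpT : IsPacking δ T cT ρT) :
    (∑' n, if 0 < ρS n then ENNReal.ofReal ((2 * ρS n) ^ s) else 0) +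
      (∑' n, if 0 < ρT n then ENNReal.ofReal ((2 * ρT n) ^ s) else 0) ≤
    packCount s δ (S ∪ T) := by
  classical
  set c : ℕ → Euc d := fun n => if Even n then cS (n / 2) else cT (n / 2) with hc
  set ρ : ℕ → ℝ := fun n => if Even n then ρS (n / 2) else ρT (n / 2) with hρ
  have hpack : IsPacking δ (S ∪ T) c ρ := by
    refine ⟨fun n => ?_, fun n => ?_, fun m n hmn => ?_⟩
    · by_cases h : Even n <;> simp only [hc, h, if_pos, if_neg, not_false_iff]
      · exact Or.inl (hpS.1 _)
      · exact Or.inr (hpT.1 _)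
    · by_cases h : Even n <;> simp only [hρ, h, if_pos, if_neg, not_false_iff]
      · exact hpS.2.1 _
      · exact hpT.2.1 _
    · by_cases hm : Even m <;> by_cases hn : Even n <;>
        simp only [hc, hρ, hm, hn, if_pos, if_neg, not_false_iff]
      · refine hpS.2.2 _ _ ?_
        rcases hm with ⟨a, rfl⟩; rcases hn with ⟨b, rfl⟩; omega
      · refine ball_disjoint_ball ?_
        have h1 : ρS (m / 2) ≤ δ := (hpS.2.1 _).2
        have h2 : ρT (n / 2) ≤ δ := (hpT.2.1 _).2
        have := hsep _ (hpS.1 (m / 2)) _ (hpT.1 (n / 2))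
        linarith
      · refine ball_disjoint_ball ?_
        have h1 : ρT (m / 2) ≤ δ := (hpT.2.1 _).2
        have h2 : ρS (n / 2) ≤ δ := (hpS.2.1 _).2
        have := hsep _ (hpS.1 (n / 2)) _ (hpT.1 (m / 2))
        rw [dist_comm] at this
        linarith
      · refine hpT.2.2 _ _ ?_
        intro hEq
        apply hmn
        simp only [Nat.not_even_iff_odd] at hm hn
        rcases hm with ⟨a, rfl⟩; rcases hn with ⟨b, rfl⟩; omega
  refine le_packCount c ρ hpack ?_
  set f : ℕ → ℝ≥0∞ := fun n => if 0 < ρ n then ENNReal.ofReal ((2 * ρ n) ^ s) else 0 with hf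
  have heo : (∑' k, f (2 * k)) + (∑' k, f (2 * k + 1)) = ∑' n, f n :=
    tsum_even_add_odd ENNReal.summable ENNReal.summable
  rw [show (∑' n, f n) = _ from rfl, ← heo]
  have h1 : ∀ k, (if 0 < ρS k then ENNReal.ofReal ((2 * ρS k) ^ s) else 0) = f (2 * k) := by
    intro k
    have he : Even (2 * k) := even_two_mul k
    have h2 : 2 * k / 2 = k := by omega
    simp [hf, hρ, he, h2]
  have h2 : ∀ k, (if 0 < ρT k then ENNReal.ofReal ((2 * ρT k) ^ s) else 0) = f (2 * k + 1) := by
    intro k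
    have he : ¬ Even (2 * k + 1) := by simp [parity_simps]
    have h2 : (2 * k + 1) / 2 = k := by omega
    simp [hf, hρ, he, h2]
  rw [tsum_congr h1, tsum_congr h2]

lemma add_le_packCount_union {s δ r : ℝ} {S T : Set (Euc d)} (hr : 0 < r)
    (hsep : ∀ x ∈ S, ∀ y ∈ T, r ≤ dist x y) (hδ : 2 * δ ≤ r) (hδ0 : 0 < δ) :
    packCount s δ S + packCount s δ T ≤ packCount s δ (S ∪ T) := by
  rcases S.eq_empty_or_nonempty with rfl | hS
  · rw [show packCount s δ (∅ : Set (Euc d)) = 0 from le_antisymm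
      (packCount_le fun c ρ hp => absurd (hp.1 0) (notMem_empty _)) zero_le]
    simpa using packCount_mono_set subset_union_right
  rcases T.eq_empty_or_nonempty with rfl | hT
  · rw [show packCount s δ (∅ : Set (Euc d)) = 0 from le_antisymm
      (packCount_le fun c ρ hp => absurd (hp.1 0) (notMem_empty _)) zero_le]
    simpa using packCount_mono_set subset_union_left
  rw [packCount_eq s δ S, packCount_eq s δ T]
  have hSne : Nonempty {p : (ℕ → Euc d) × (ℕ → ℝ) // IsPacking δ S p.1 p.2} :=
    ⟨⟨(fun _ => hS.choose, fun _ => 0), fun _ => hS.choose_spec,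
      fun _ => ⟨le_rfl, hδ0.le⟩, fun m n _ => by simp⟩⟩
  have hTne : Nonempty {p : (ℕ → Euc d) × (ℕ → ℝ) // IsPacking δ T p.1 p.2} :=
    ⟨⟨(fun _ => hT.choose, fun _ => 0), fun _ => hT.choose_spec,
      fun _ => ⟨le_rfl, hδ0.le⟩, fun m n _ => by simp⟩⟩
  exact ENNReal.iSup_add_iSup_le fun p q =>
    interleave_le hr hsep hδ p.1.1 p.1.2 p.2 q.1.1 q.1.2 q.2

lemma add_le_packingPre_union {s r : ℝ} {S T : Set (Euc d)} (hr : 0 < r)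
    (hsep : ∀ x ∈ S, ∀ y ∈ T, r ≤ dist x y) :
    packingPre s S + packingPre s T ≤ packingPre s (S ∪ T) := by
  refine le_iInf fun δ => le_iInf fun hδ => ?_
  have hδ' : 0 < min δ (r / 2) := lt_min hδ (by linarith)
  calc packingPre s S + packingPre s T
      ≤ packCount s (min δ (r / 2)) S + packCount s (min δ (r / 2)) T :=
        add_le_add (packingPre_le_packCount hδ' S) (packingPre_le_packCount hδ' T)
    _ ≤ packCount s (min δ (r / 2)) (S ∪ T) := by
        refine add_le_packCount_union hr hsep ?_ hδ'
        have : min δ (r / 2) ≤ r / 2 := min_le_right _ _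
        linarith
    _ ≤ packCount s δ (S ∪ T) := packCount_mono_delta (min_le_left _ _) _

lemma PO_le_cover {α : ℝ} {S : Set (Euc d)} (F : ℕ → Set (Euc d)) (h : S ⊆ ⋃ n, F n) :
    PO α S ≤ ∑' n, packingPre α (F n) := by
  rw [PO, OuterMeasure.ofFunction_apply]
  exact iInf_le_of_le F (iInf_le_of_le h le_rfl)

lemma PO_union_sep {α : ℝ} {S T : Set (Euc d)} (h : AreSeparated S T) :
    PO α (S ∪ T) = PO α S + PO α T := by
  refine le_antisymm (measure_union_le S T) ?_
  obtain ⟨r, hr0, hsep⟩ := sep_real h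
  conv_rhs => rw [PO, OuterMeasure.ofFunction_apply]
  refine le_iInf fun F => le_iInf fun hF => ?_
  set NS := thickening (r / 3) S with hNS
  set NT := thickening (r / 3) T with hNT
  have hsep' : ∀ x ∈ NS, ∀ y ∈ NT, r / 3 ≤ dist x y := by
    intro x hx y hy
    obtain ⟨x', hx', hxd⟩ := mem_thickening_iff.1 hx
    obtain ⟨y', hy', hyd⟩ := mem_thickening_iff.1 hy
    have h1 := hsep x' hx' y' hy'
    have h4 := dist_triangle4 x' x y y'
    have h5 : dist x' x = dist x x' := dist_comm _ _
    have h6 : dist y' y = dist y y' := dist_comm _ _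
    linarith
  have key : ∀ n, packingPre α (F n ∩ NS) + packingPre α (F n ∩ NT) ≤ packingPre α (F n) := by
    intro n
    calc packingPre α (F n ∩ NS) + packingPre α (F n ∩ NT)
        ≤ packingPre α ((F n ∩ NS) ∪ (F n ∩ NT)) := by
          refine add_le_packingPre_union (r := r / 3) (by linarith) ?_
          intro x hx y hy
          exact hsep' x hx.2 y hy.2
      _ ≤ packingPre α (F n) := packingPre_mono (union_subset inter_subset_left inter_subset_left)
  have hScov : S ⊆ ⋃ n, (F n ∩ NS) := by
    intro x hx
    obtain ⟨_, ⟨n, rfl⟩, hn⟩ := (union_subset_iff.1 hF).1 hx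
    exact mem_iUnion.2 ⟨n, hn, self_subset_thickening (by linarith) S hx⟩
  have hTcov : T ⊆ ⋃ n, (F n ∩ NT) := by
    intro x hx
    obtain ⟨_, ⟨n, rfl⟩, hn⟩ := (union_subset_iff.1 hF).2 hx
    exact mem_iUnion.2 ⟨n, hn, self_subset_thickening (by linarith) T hx⟩
  calc PO α S + PO α T
      ≤ (∑' n, packingPre α (F n ∩ NS)) + ∑' n, packingPre α (F n ∩ NT) :=
        add_le_add (PO_le_cover _ hScov) (PO_le_cover _ hTcov)
    _ = ∑' n, (packingPre α (F n ∩ NS) + packingPre α (F n ∩ NT)) := ENNReal.tsum_add.symm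
    _ ≤ ∑' n, packingPre α (F n) := ENNReal.tsum_le_tsum key

lemma PO_mono {α : ℝ} {S T : Set (Euc d)} (h : S ⊆ T) : PO α S ≤ PO α T :=
  measure_mono h

/-- The outer measure `P^α` restricted to `E`. -/
noncomputable def mE (α : ℝ) (E : Set (Euc d)) : OuterMeasure (Euc d) :=
  OuterMeasure.restrict E (PO α)

lemma mE_apply (α : ℝ) (E S : Set (Euc d)) : mE α E S = PO α (S ∩ E) :=
  OuterMeasure.restrict_apply E S (PO α)

lemma mE_isMetric (α : ℝ) (E : Set (Euc d)) : OuterMeasure.IsMetric (mE α E) := by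
  intro S T h
  rw [mE_apply, mE_apply, mE_apply, union_inter_distrib_right]
  exact PO_union_sep (AreSeparated.mono inter_subset_left inter_subset_left h)

/-- The Borel measure induced by `P^α` restricted to `E`. -/
noncomputable def muB (α : ℝ) (E : Set (Euc d)) : Measure (Euc d) :=
  (mE α E).toMeasure
    (by rw [BorelSpace.measurable_eq (α := Euc d)]
        exact (mE_isMetric α E).borel_le_caratheodory)

lemma muB_apply (α : ℝ) (E : Set (Euc d)) {M : Set (Euc d)} (hM : MeasurableSet M) :
    muB α E M = PO α (M ∩ E) := by
  rw [muB, MeasureTheory.toMeasure_apply _ _ hM, mE_apply]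

lemma PO_le_muB (α : ℝ) (E S : Set (Euc d)) : PO α (S ∩ E) ≤ muB α E S := by
  rw [← mE_apply]
  exact MeasureTheory.le_toMeasure_apply _ _ S

lemma muB_finite {α : ℝ} {E : Set (Euc d)} (hfin : PO α E ≠ ⊤) :
    IsFiniteMeasure (muB α E) := by
  constructor
  rw [muB_apply α E MeasurableSet.univ, univ_inter]
  exact lt_top_iff_ne_top.2 hfin

/-- The set of points whose lower density is at least `q` at all scales below `b`. -/
def hiSet (α q b : ℝ) (E : Set (Euc d)) : Set (Euc d) :=
  {x | ∀ t : ℝ, 0 < t → t < b →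
    ENNReal.ofReal q * ENNReal.ofReal ((2 * t) ^ α) ≤ PO α (ball x t ∩ E)}

lemma isClosed_hiSet (α q b : ℝ) (E : Set (Euc d)) : IsClosed (hiSet α q b E) := by
  refine isClosed_of_closure_subset fun x hx => ?_
  intro t ht0 htb
  have main : ∀ η ∈ Ioo (0:ℝ) t,
      ENNReal.ofReal q * ENNReal.ofReal ((2 * (t - η)) ^ α) ≤ PO α (ball x t ∩ E) := by
    intro η hη
    obtain ⟨y, hyC, hyd⟩ := Metric.mem_closure_iff.1 hx η hη.1
    have h3 := hyC (t - η) (by linarith [hη.2]) (by linarith [hη.1])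
    refine h3.trans (PO_mono (inter_subset_inter_left _ ?_))
    intro z hz
    rw [mem_ball] at hz ⊢
    have h4 := dist_triangle z y x
    have h5 : dist y x = dist x y := dist_comm _ _
    linarith
  have htend : Tendsto (fun η : ℝ => ENNReal.ofReal q * ENNReal.ofReal ((2 * (t - η)) ^ α))
      (𝓝[>] (0:ℝ)) (𝓝 (ENNReal.ofReal q * ENNReal.ofReal ((2 * t) ^ α))) := by
    have hcont : ContinuousAt (fun η : ℝ => ENNReal.ofReal ((2 * (t - η)) ^ α)) 0 := by
      have h1 : ContinuousAt (fun η : ℝ => 2 * (t - η)) 0 := by fun_prop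
      have h2 : ContinuousAt (fun u : ℝ => u ^ α) (2 * (t - 0)) :=
        Real.continuousAt_rpow_const _ _
          (Or.inl (by simp only [sub_zero]; exact (by positivity : (0:ℝ) < 2 * t).ne'))
      exact ENNReal.continuous_ofReal.continuousAt.comp
        (ContinuousAt.comp (f := fun η : ℝ => 2 * (t - η)) h2 h1)
    exact (ENNReal.Tendsto.const_mul (by simpa using hcont.tendsto)
      (Or.inr ENNReal.ofReal_ne_top)).mono_left nhdsWithin_le_nhds
  refine le_of_tendsto htend ?_
  filter_upwards [Ioo_mem_nhdsGT_of_mem ⟨le_rfl, ht0⟩] with η hη using main η hη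

lemma upper_null {α : ℝ} {E : Set (Euc d)} (hfin : PO α E ≠ ⊤) {q : ℝ}
    (hq : 1 < q) {b : ℝ} (hb : 0 < b) : PO α (E ∩ hiSet α q b E) = 0 := by
  haveI := muB_finite (α := α) (E := E) hfin
  set S := E ∩ hiSet α q b E with hSdef
  set g : ℕ → ℝ := fun m => min (b / 2) (1 / (m + 1)) with hg
  have hg0 : ∀ m, 0 < g m := fun m => lt_min (by linarith) (by positivity)
  have hgb : ∀ m, g m < b := fun m => lt_of_le_of_lt (min_le_left _ _) (by linarith)
  have hganti : Antitone g := by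
    intro m n hmn
    refine min_le_min le_rfl ?_
    have h1 : (0:ℝ) < (m:ℝ) + 1 := by positivity
    rw [div_le_div_iff₀ (by positivity) h1]
    have : (m:ℝ) ≤ n := Nat.cast_le.2 hmn
    linarith
  -- Step 1 : for every m, q • PO S ≤ muB (thickening (g m) S)
  have key1 : ∀ m, PO α S * ENNReal.ofReal q ≤ muB α E (thickening (g m) S) := by
    intro m
    have hPS : PO α S ≤ packCount α (g m) S :=
      (PO_le_pre α S).trans (packingPre_le_packCount (hg0 m) S)
    have hq0 : ENNReal.ofReal q ≠ 0 := by
      simp only [ne_eq, ENNReal.ofReal_eq_zero, not_le]; linarith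
    have hpc : packCount α (g m) S ≤ muB α E (thickening (g m) S) / ENNReal.ofReal q := by
      refine packCount_le fun c ρ hp => ?_
      rw [ENNReal.le_div_iff_mul_le (Or.inl hq0) (Or.inl ENNReal.ofReal_ne_top)]
      rw [← ENNReal.tsum_mul_right]
      have hterm : ∀ n, (if 0 < ρ n then ENNReal.ofReal ((2 * ρ n) ^ α) else 0) *
          ENNReal.ofReal q ≤ muB α E (ball (c n) (ρ n)) := by
        intro n
        by_cases hρ : 0 < ρ n
        · rw [if_pos hρ]
          have hxS : c n ∈ hiSet α q b E := (hp.1 n).2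
          have := hxS (ρ n) hρ (lt_of_le_of_lt (hp.2.1 n).2 (hgb m))
          rw [mul_comm]
          exact this.trans (PO_le_muB α E _)
        · rw [if_neg hρ, zero_mul]; exact zero_le
      refine (ENNReal.tsum_le_tsum hterm).trans ?_
      rw [← measure_iUnion (fun i j hij => hp.2.2 i j hij) (fun n => measurableSet_ball)]
      refine measure_mono (iUnion_subset fun n => ?_)
      intro z hz
      rw [mem_ball] at hz
      exact mem_thickening_iff.2 ⟨c n, hp.1 n, lt_of_lt_of_le hz (hp.2.1 n).2⟩
    have := hPS.trans hpc
    rwa [ENNReal.le_div_iff_mul_le (Or.inl hq0) (Or.inl ENNReal.ofReal_ne_top)] at this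
  -- Step 2 : muB (closure S) ≤ PO S
  have key2 : muB α E (closure S) ≤ PO α S := by
    rw [muB_apply α E isClosed_closure.measurableSet]
    refine (PO_mono ?_).trans (le_of_eq (by rw [hSdef, inter_comm]))
    refine inter_subset_inter_left _ ?_
    have h1 : closure S ⊆ closure (hiSet α q b E) :=
      closure_mono (hSdef ▸ inter_subset_right)
    rwa [(isClosed_hiSet α q b E).closure_eq] at h1
  -- Step 3 : continuity from above
  have key3 : muB α E (closure S) = ⨅ m, muB α E (thickening (g m) S) := by
    have hcl : closure S = ⋂ m, thickening (g m) S := by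
      rw [closure_eq_iInter_thickening' S (Set.range g) ?_ ?_, biInter_range]
      · rintro _ ⟨m, rfl⟩; exact hg0 m
      · intro ε hε
        obtain ⟨n, hn⟩ := exists_nat_one_div_lt hε
        refine ⟨g n, ⟨n, rfl⟩, hg0 n, ?_⟩
        exact le_trans (min_le_right _ _) hn.le
    rw [hcl]
    refine Antitone.measure_iInter (fun m n hmn => thickening_mono (hganti hmn) S)
      (fun m => (isOpen_thickening.measurableSet).nullMeasurableSet) ⟨0, measure_ne_top _ _⟩
  -- Conclusion
  have hfinal : PO α S * ENNReal.ofReal q ≤ PO α S := by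
    rw [← le_iInf_iff] at key1
    exact key1.trans (key3 ▸ key2)
  by_contra hne
  have hStop : PO α S ≠ ⊤ :=
    fun h => hfin (top_le_iff.1 (h ▸ PO_mono (inter_subset_left : S ⊆ E)))
  have : PO α S * 1 < PO α S * ENNReal.ofReal q := by
    rw [ENNReal.mul_lt_mul_iff_right hne hStop]
    exact ENNReal.one_lt_ofReal.2 hq
  rw [mul_one] at this
  exact absurd (lt_of_lt_of_le this hfinal) (lt_irrefl _)

lemma finsum_le_packCount {s δ : ℝ} (hδ : 0 < δ) {S : Set (Euc d)} {x₀ : Euc d} (hx₀ : x₀ ∈ S)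
    {n : ℕ} (g : Fin n → Euc d × ℝ)
    (hmem : ∀ i, (g i).1 ∈ S) (hr0 : ∀ i, 0 < (g i).2) (hrδ : ∀ i, (g i).2 ≤ δ)
    (hdisj : ∀ i j, i ≠ j → Disjoint (ball (g i).1 (g i).2) (ball (g j).1 (g j).2)) :
    (∑ i : Fin n, ENNReal.ofReal ((2 * (g i).2) ^ s)) ≤ packCount s δ S := by
  classical
  set c : ℕ → Euc d := fun k => if h : k < n then (g ⟨k, h⟩).1 else x₀ with hc
  set ρ : ℕ → ℝ := fun k => if h : k < n then (g ⟨k, h⟩).2 else 0 with hρ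
  have hpack : IsPacking δ S c ρ := by
    refine ⟨fun k => ?_, fun k => ?_, fun k l hkl => ?_⟩
    · by_cases h : k < n
      · simp only [hc, dif_pos h]; exact hmem _
      · simp only [hc, dif_neg h]; exact hx₀
    · by_cases h : k < n
      · simp only [hρ, dif_pos h]; exact ⟨(hr0 _).le, hrδ _⟩
      · simp only [hρ, dif_neg h]; exact ⟨le_rfl, hδ.le⟩
    · by_cases hk : k < n <;> by_cases hl : l < n
      · simp only [hc, hρ, dif_pos hk, dif_pos hl]
        exact hdisj _ _ (fun hEq => hkl (by simpa using congrArg Fin.val hEq))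
      · simp only [hρ, dif_neg hl]
        simp [ball_eq_empty.2 le_rfl]
      · simp only [hρ, dif_neg hk]
        simp [ball_eq_empty.2 le_rfl]
      · simp only [hρ, dif_neg hk]
        simp [ball_eq_empty.2 le_rfl]
  refine le_packCount c ρ hpack ?_
  have hzero : ∀ k ∉ Finset.range n,
      (if 0 < ρ k then ENNReal.ofReal ((2 * ρ k) ^ s) else 0) = 0 := by
    intro k hk
    rw [Finset.mem_range, not_lt] at hk
    simp [hρ, dif_neg (not_lt.2 hk)]
  rw [tsum_eq_sum hzero, Finset.sum_range fun k => _]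
  refine le_of_eq (Finset.sum_congr rfl fun i _ => ?_)
  have h : ρ (↑i : ℕ) = (g i).2 := by simp only [hρ, dif_pos i.isLt, Fin.eta]
  rw [h, if_pos (hr0 i)]

lemma lower_pre {α : ℝ} (hα : 0 < α) {E : Set (Euc d)} (hfin : PO α E ≠ ⊤) {q ε : ℝ}
    (hq0 : 0 < q) (hε : 0 < ε) {T : Set (Euc d)} (hTE : T ⊆ E)
    (hT : ∀ x ∈ T, ∀ δ' > (0:ℝ), ∃ t ∈ Ioo (0:ℝ) δ',
      PO α (ball x t ∩ E) ≤ ENNReal.ofReal q * ENNReal.ofReal ((2 * t) ^ α)) :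
    PO α T ≤ ENNReal.ofReal (q * (1 + ε) ^ α) * packingPre α T := by
  rcases T.eq_empty_or_nonempty with rfl | ⟨x₀, hx₀⟩
  · simp
  haveI := muB_finite (α := α) (E := E) hfin
  set C := ENNReal.ofReal (q * (1 + ε) ^ α) with hC
  have hC0 : C ≠ 0 := by
    simp only [hC, ne_eq, ENNReal.ofReal_eq_zero, not_le]
    positivity
  have main : ∀ δ : ℝ, 0 < δ → PO α T ≤ C * packCount α δ T := by
    intro δ hδ
    set f : Euc d → Set ℝ := fun x => {r | 0 < r ∧ r ≤ δ ∧
      PO α (ball x ((1 + ε) * r) ∩ E) ≤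
        ENNReal.ofReal q * ENNReal.ofReal ((2 * ((1 + ε) * r)) ^ α)} with hfdef
    have hf : ∀ x ∈ T, ∀ δ' > (0:ℝ), (f x ∩ Ioo 0 δ').Nonempty := by
      intro x hx δ' hδ'
      have h1ε : (0:ℝ) < 1 + ε := by linarith
      obtain ⟨t, ht, hle⟩ := hT x hx ((1 + ε) * min δ δ') (by positivity)
      refine ⟨t / (1 + ε), ⟨⟨div_pos ht.1 h1ε, ?_, ?_⟩, div_pos ht.1 h1ε, ?_⟩⟩
      · have h2 : t < (1 + ε) * min δ δ' := ht.2
        have h3 : min δ δ' ≤ δ := min_le_left _ _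
        rw [div_le_iff₀ h1ε]
        nlinarith
      · rw [mul_div_cancel₀ _ h1ε.ne']
        exact hle
      · have h2 : t < (1 + ε) * min δ δ' := ht.2
        have h3 : min δ δ' ≤ δ' := min_le_right _ _
        rw [div_lt_iff₀ h1ε]
        nlinarith
    obtain ⟨tset, rfunc, htc, hts, htr, htnull, htdisj⟩ :=
      Besicovitch.exists_disjoint_closedBall_covering_ae (muB α E) f T hf
        (fun _ => 1) (fun _ _ => one_pos)
    set U := ⋃ x ∈ tset, closedBall x (rfunc x) with hU
    have h0 : PO α (T \ U) = 0 := by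
      refine le_antisymm (le_trans ?_ htnull.le) zero_le
      have hDE : T \ U ⊆ E := diff_subset.trans hTE
      calc PO α (T \ U) = PO α ((T \ U) ∩ E) := by rw [inter_eq_left.2 hDE]
        _ ≤ muB α E (T \ U) := PO_le_muB α E _
    have hsplit : PO α T ≤ (∑' x : tset, PO α (T ∩ closedBall x (rfunc x))) := by
      calc PO α T = PO α ((T ∩ U) ∪ (T \ U)) := by rw [inter_union_diff]
        _ ≤ PO α (T ∩ U) + PO α (T \ U) := measure_union_le _ _
        _ = PO α (T ∩ U) := by rw [h0, add_zero]
        _ = PO α (⋃ x ∈ tset, (T ∩ closedBall x (rfunc x))) := by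
            rw [hU, inter_iUnion₂]
        _ ≤ ∑' x : tset, PO α (T ∩ closedBall x (rfunc x)) :=
            measure_biUnion_le _ htc _
    have hterm : ∀ x : tset, PO α (T ∩ closedBall (x : Euc d) (rfunc x)) ≤
        C * ENNReal.ofReal ((2 * rfunc x) ^ α) := by
      rintro ⟨x, hx⟩
      obtain ⟨⟨hr0, hrδ, hrq⟩, hr01⟩ := htr x hx
      have hsub : T ∩ closedBall x (rfunc x) ⊆ ball x ((1 + ε) * rfunc x) ∩ E := by
        intro z hz
        refine ⟨?_, hTE hz.1⟩
        rw [mem_ball]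
        have := mem_closedBall.1 hz.2
        nlinarith
      refine (PO_mono hsub).trans (hrq.trans (le_of_eq ?_))
      have harg : 2 * ((1 + ε) * rfunc x) = (1 + ε) * (2 * rfunc x) := by ring
      rw [harg, Real.mul_rpow (by linarith) (by positivity), hC,
        ENNReal.ofReal_mul hq0.le, ENNReal.ofReal_mul (by positivity)]
      ring
    have hpack : (∑' x : tset, ENNReal.ofReal ((2 * rfunc x) ^ α)) ≤ packCount α δ T := by
      rw [ENNReal.tsum_eq_iSup_sum]
      refine iSup_le fun F => ?_
      set e := F.equivFin with he
      set g : Fin F.card → Euc d × ℝ :=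
        fun i => ((e.symm i).1.1, rfunc (e.symm i).1.1) with hgdef
      have hsum : (∑ x ∈ F, ENNReal.ofReal ((2 * rfunc (x : Euc d)) ^ α)) =
          ∑ i : Fin F.card, ENNReal.ofReal ((2 * (g i).2) ^ α) := by
        rw [← Finset.sum_coe_sort F
          (fun x : tset => ENNReal.ofReal ((2 * rfunc (x : Euc d)) ^ α))]
        exact (Equiv.sum_comp e.symm
          (fun x : F => ENNReal.ofReal ((2 * rfunc ((x : tset) : Euc d)) ^ α))).symm
      rw [hsum]
      have hprop : ∀ i : Fin F.card, rfunc (e.symm i).1.1 ∈ f (e.symm i).1.1 ∩ Ioo (0:ℝ) 1 :=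
        fun i => htr _ (e.symm i).1.2
      refine finsum_le_packCount hδ hx₀ g (fun i => hts (e.symm i).1.2)
        (fun i => (hprop i).1.1) (fun i => (hprop i).1.2.1) ?_
      intro i j hij
      have hne : (e.symm i).1 ≠ (e.symm j).1 := by
        intro hEq
        exact hij (e.symm.injective (Subtype.ext hEq))
      have hne' : ((e.symm i).1 : Euc d) ≠ ((e.symm j).1 : Euc d) :=
        fun hEq => hne (Subtype.ext hEq)
      exact Disjoint.mono ball_subset_closedBall ball_subset_closedBall
        (htdisj (e.symm i).1.2 (e.symm j).1.2 hne')
    calc PO α T ≤ ∑' x : tset, PO α (T ∩ closedBall x (rfunc x)) := hsplit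
      _ ≤ ∑' x : tset, C * ENNReal.ofReal ((2 * rfunc x) ^ α) := ENNReal.tsum_le_tsum hterm
      _ = C * ∑' x : tset, ENNReal.ofReal ((2 * rfunc x) ^ α) := ENNReal.tsum_mul_left
      _ ≤ C * packCount α δ T := mul_le_mul_right hpack C
  have hdiv : PO α T / C ≤ packingPre α T := by
    refine le_iInf fun δ => le_iInf fun hδ => ?_
    rw [ENNReal.div_le_iff_le_mul (Or.inl hC0) (Or.inl ENNReal.ofReal_ne_top)]
    rw [mul_comm]
    exact main δ hδ
  rwa [ENNReal.div_le_iff_le_mul (Or.inl hC0) (Or.inl ENNReal.ofReal_ne_top), mul_comm] at hdiv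

/-- The set of points with frequently small density ratio. -/
def loSet (α q : ℝ) (E : Set (Euc d)) : Set (Euc d) :=
  {x | x ∈ E ∧ ∀ δ' > (0:ℝ), ∃ t ∈ Ioo (0:ℝ) δ',
    PO α (ball x t ∩ E) ≤ ENNReal.ofReal q * ENNReal.ofReal ((2 * t) ^ α)}

lemma lower_null {α : ℝ} (hα : 0 < α) {E : Set (Euc d)} (hfin : PO α E ≠ ⊤) {q : ℝ}
    (hq0 : 0 < q) (hq1 : q < 1) : PO α (loSet α q E) = 0 := by
  set S := loSet α q E with hSdef
  have hSE : S ⊆ E := fun x hx => hx.1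
  set ε := q ^ (-(1 / (2 * α))) - 1 with hεdef
  have hε : 0 < ε := by
    have h1 : 1 < q ^ (-(1 / (2 * α))) := by
      rw [Real.one_lt_rpow_iff_of_pos hq0]
      right
      constructor
      · exact hq1
      · rw [neg_lt, neg_zero]; positivity
    simp only [hεdef]; linarith
  set c := q * (1 + ε) ^ α with hcdef
  have h1e : 1 + ε = q ^ (-(1 / (2 * α))) := by rw [hεdef]; ring
  have h2 : (1 + ε) ^ α = q ^ (-(1/2) : ℝ) := by
    rw [h1e, ← Real.rpow_mul hq0.le]
    congr 1
    field_simp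
  have hc1 : c < 1 := by
    rw [hcdef, h2]
    calc q * q ^ (-(1/2) : ℝ) = q ^ ((1 : ℝ) + -(1/2)) := by
          rw [Real.rpow_add hq0, Real.rpow_one]
      _ = q ^ ((1/2 : ℝ)) := by norm_num
      _ < 1 := Real.rpow_lt_one hq0.le hq1 (by norm_num)
  have hc0 : 0 < c := by positivity
  -- premeasure bound for all subsets of S
  have key : ∀ T, T ⊆ S → PO α T ≤ ENNReal.ofReal c * packingPre α T := by
    intro T hTS
    exact lower_pre hα hfin hq0 hε (hTS.trans hSE) (fun x hx => (hTS hx).2)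
  have hCne : ENNReal.ofReal c ≠ 0 := by
    simp only [ne_eq, ENNReal.ofReal_eq_zero, not_le]; exact hc0
  -- refine over covers
  have hcov : PO α S ≤ ENNReal.ofReal c * PO α S := by
    have h1 : PO α S / ENNReal.ofReal c ≤ PO α S := by
      conv_rhs => rw [PO, OuterMeasure.ofFunction_apply]
      refine le_iInf fun F => le_iInf fun hF => ?_
      rw [ENNReal.div_le_iff_le_mul (Or.inl hCne) (Or.inl ENNReal.ofReal_ne_top), mul_comm]
      have h2 : PO α S ≤ ∑' n, PO α (S ∩ F n) := by
        refine (PO_mono ?_).trans (measure_iUnion_le _)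
        intro x hx
        obtain ⟨_, ⟨n, rfl⟩, hn⟩ := hF hx
        exact mem_iUnion.2 ⟨n, hx, hn⟩
      refine h2.trans ?_
      rw [← ENNReal.tsum_mul_left]
      refine ENNReal.tsum_le_tsum fun n => ?_
      exact (key _ inter_subset_left).trans
        (mul_le_mul_right (packingPre_mono inter_subset_right) _)
    rwa [ENNReal.div_le_iff_le_mul (Or.inl hCne) (Or.inl ENNReal.ofReal_ne_top), mul_comm]
      at h1
  by_contra hne
  have hStop : PO α S ≠ ⊤ := fun h => hfin (top_le_iff.1 (h ▸ PO_mono hSE))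
  have hlt : ENNReal.ofReal c * PO α S < 1 * PO α S := by
    rw [ENNReal.mul_lt_mul_iff_left hne hStop]
    exact ENNReal.ofReal_lt_one.2 hc1
  rw [one_mul] at hlt
  exact absurd (hcov.trans_lt hlt) (lt_irrefl _)

end P6

open P6 in
theorem stmt6' {d : ℕ} (α : ℝ) (hα : 0 < α) (E : Set (Euc d))
    (hpos : 0 < packingMeasure α E) (hfin : packingMeasure α E ≠ ⊤) :
    ∃ A : Set (Euc d), A ⊆ E ∧ packingMeasure α A = 0 ∧
      ∀ x ∈ E \ A,
        Filter.liminf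
            (fun t : ℝ => packingMeasure α (E ∩ ball x t) / ENNReal.ofReal ((2 * t) ^ α))
            (nhdsWithin 0 (Set.Ioi 0)) = 1 := by
  classical
  rw [PM_eq] at hfin
  set A₁ : Set (Euc d) := ⋃ p : ℚ × ℕ,
    (if 1 < (p.1 : ℝ) then E ∩ hiSet α p.1 (1 / (p.2 + 1)) E else ∅) with hA₁
  set A₂ : Set (Euc d) := ⋃ q : ℚ,
    (if 0 < (q : ℝ) ∧ (q : ℝ) < 1 then loSet α q E else ∅) with hA₂
  have hA₁null : PO α A₁ = 0 := by
    refine measure_iUnion_null fun p => ?_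
    by_cases h : 1 < (p.1 : ℝ)
    · rw [if_pos h]; exact upper_null hfin h (by positivity)
    · rw [if_neg h]; exact measure_empty
  have hA₂null : PO α A₂ = 0 := by
    refine measure_iUnion_null fun q => ?_
    by_cases h : 0 < (q : ℝ) ∧ (q : ℝ) < 1
    · rw [if_pos h]; exact lower_null hα hfin h.1 h.2
    · rw [if_neg h]; exact measure_empty
  refine ⟨A₁ ∪ A₂, ?_, ?_, ?_⟩
  · refine union_subset (iUnion_subset fun p => ?_) (iUnion_subset fun q => ?_)
    · split_ifs
      · exact inter_subset_left
      · exact empty_subset _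
    · split_ifs
      · exact fun x hx => hx.1
      · exact empty_subset _
  · rw [PM_eq]
    exact measure_union_null hA₁null hA₂null
  · rintro x ⟨hxE, hxA⟩
    set f : ℝ → ℝ≥0∞ :=
      fun t => packingMeasure α (E ∩ ball x t) / ENNReal.ofReal ((2 * t) ^ α) with hfdef
    have hfeq : ∀ t : ℝ, 0 < t →
        f t = PO α (ball x t ∩ E) / ENNReal.ofReal ((2 * t) ^ α) := by
      intro t _
      show packingMeasure α (E ∩ ball x t) / ENNReal.ofReal ((2 * t) ^ α) = _
      rw [PM_eq, inter_comm]
    set L := Filter.liminf f (nhdsWithin 0 (Set.Ioi 0)) with hL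
    have hDpos : ∀ t : ℝ, 0 < t → ENNReal.ofReal ((2 * t) ^ α) ≠ 0 := by
      intro t ht
      simp only [ne_eq, ENNReal.ofReal_eq_zero, not_le]
      positivity
    have hnotgt : ¬ (1 < L) := by
      intro h
      have hc1 : 1 < min L 2 := lt_min h one_lt_two
      have hcne : min L 2 ≠ ⊤ :=
        ne_top_of_le_ne_top ENNReal.ofNat_ne_top (min_le_right _ _)
      have hc1' : 1 < (min L 2).toReal := by
        have := (ENNReal.toReal_lt_toReal one_ne_top hcne).2 hc1
        simpa using this
      obtain ⟨qq, hq1, hq2⟩ := exists_rat_btwn hc1'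
      have hofq : ENNReal.ofReal qq < L := by
        refine lt_of_lt_of_le ?_ (min_le_left L 2)
        conv_rhs => rw [← ENNReal.ofReal_toReal hcne]
        exact ENNReal.ofReal_lt_ofReal_iff (by linarith) |>.2 hq2
      have hev := eventually_lt_of_lt_liminf hofq
      obtain ⟨u, hu, hIoo⟩ := mem_nhdsGT_iff_exists_Ioo_subset.1 hev
      obtain ⟨k, hk⟩ := exists_nat_one_div_lt (mem_Ioi.1 hu)
      have hxhi : x ∈ hiSet α qq (1 / (k + 1)) E := by
        intro t ht0 htk
        have htu : t ∈ Ioo (0:ℝ) u := ⟨ht0, lt_trans htk (by exact_mod_cast hk)⟩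
        have hft := hIoo htu
        simp only [mem_setOf_eq] at hft
        rw [hfeq t ht0] at hft
        have := (ENNReal.lt_div_iff_mul_lt (Or.inl (hDpos t ht0))
          (Or.inl ENNReal.ofReal_ne_top)).1 hft
        exact this.le
      refine hxA (Or.inl ?_)
      refine mem_iUnion.2 ⟨(qq, k), ?_⟩
      rw [if_pos (by exact_mod_cast hq1 : 1 < (qq : ℝ))]
      exact ⟨hxE, by exact_mod_cast hxhi⟩
    have hnotlt : ¬ (L < 1) := by
      intro h
      have hLne : L ≠ ⊤ := ne_top_of_le_ne_top one_ne_top h.le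
      have hL1 : L.toReal < 1 := by
        have := (ENNReal.toReal_lt_toReal hLne one_ne_top).2 h
        simpa using this
      obtain ⟨qq, hq1, hq2⟩ := exists_rat_btwn hL1
      have hq0 : 0 < (qq : ℝ) := lt_of_le_of_lt ENNReal.toReal_nonneg hq1
      have hLq : L < ENNReal.ofReal qq := by
        rw [← ENNReal.ofReal_toReal hLne]
        exact ENNReal.ofReal_lt_ofReal_iff hq0 |>.2 hq1
      have hfreq := frequently_lt_of_liminf_lt (h := hLq)
      have hxlo : x ∈ loSet α qq E := by
        refine ⟨hxE, fun δ' hδ' => ?_⟩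
        have hev : ∀ᶠ t in nhdsWithin (0:ℝ) (Set.Ioi 0), t ∈ Ioo (0:ℝ) δ' :=
          eventually_of_mem (Ioo_mem_nhdsGT_of_mem ⟨le_rfl, hδ'⟩) fun y hy => hy
        obtain ⟨t, hft, htI⟩ := (hfreq.and_eventually hev).exists
        refine ⟨t, htI, ?_⟩
        rw [hfeq t htI.1] at hft
        have := (ENNReal.div_lt_iff (Or.inl (hDpos t htI.1))
          (Or.inl ENNReal.ofReal_ne_top)).1 hft
        exact this.le
      refine hxA (Or.inr ?_)
      refine mem_iUnion.2 ⟨qq, ?_⟩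
      rw [if_pos ⟨hq0, by exact_mod_cast hq2⟩]
      exact hxlo
    exact le_antisymm (not_lt.1 hnotgt) (not_lt.1 hnotlt)

/-- if `0 < P^α(E) < ∞`, then at `P^α`-almost every point of `E`
the lower `α`-density of `P^α` restricted to `E` equals `1`. -/
theorem stmt6 {d : ℕ} (α : ℝ) (hα : 0 < α) (E : Set (Euc d))
    (hpos : 0 < packingMeasure α E) (hfin : packingMeasure α E ≠ ⊤) :
    ∃ A : Set (Euc d), A ⊆ E ∧ packingMeasure α A = 0 ∧
      ∀ x ∈ E \ A,
        Filter.liminf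
            (fun t : ℝ => packingMeasure α (E ∩ ball x t) / ENNReal.ofReal ((2 * t) ^ α))
            (nhdsWithin 0 (Set.Ioi 0)) = 1 :=
  stmt6' α hα E hpos hfin
end
end

section
/- Let K be the attractor of an IFS {f_1,...,f_N} of similitudes satisfying the strong open set condition with open set O, with dimension s, and let λ be the normalized self-similar measure. If B(x,r) ⊆ O is a ball centered at a point of K and 1 ≤ j ≤ N, then λ(f_j(B(x,r))) = r_j^s · λ(B(x,r)); consequently the reciprocal density is invariant: (2r)^s/λ(B(x,r)) = (2 r r_j)^s / λ(f_j(B(x,r))). -/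
open Metric Set MeasureTheory ENNReal Filter

noncomputable section

lemma sim_surj {d : ℕ} {g : Euc d → Euc d} {c : ℝ} (hc : 0 < c)
    (h : ∀ x y, dist (g x) (g y) = c * dist x y) : Function.Surjective g := by
  have hiso : Isometry (fun y => c⁻¹ • g y) := Isometry.of_dist_eq (by
    intro a b
    rw [dist_smul₀, h, Real.norm_eq_abs, abs_of_pos (inv_pos.2 hc),
      inv_mul_cancel_left₀ hc.ne'])
  set A := hiso.affineIsometryOfStrictConvexSpace with hAdef
  have hA : ∀ y, A y = c⁻¹ • g y := fun y => by
    rw [hAdef, hiso.coe_affineIsometryOfStrictConvexSpace]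
  have hLsurj : Function.Surjective A.linearIsometry :=
    (A.linearIsometry.toLinearIsometryEquiv rfl).surjective
  have hAsurj : Function.Surjective A := by
    intro z
    obtain ⟨v, hv⟩ := hLsurj (z - A 0)
    refine ⟨v +ᵥ (0 : Euc d), ?_⟩
    rw [A.map_vadd, hv]
    simp
  intro z
  obtain ⟨y, hy⟩ := hAsurj (c⁻¹ • z)
  refine ⟨y, ?_⟩
  have h2 := hA y
  rw [hy] at h2
  have h3 := congrArg (fun u => c • u) h2
  simpa [smul_smul, mul_inv_cancel₀ hc.ne'] using h3.symm

lemma sim_ball_image {d : ℕ} {g : Euc d → Euc d} {c : ℝ} (hc : 0 < c)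
    (h : ∀ x y, dist (g x) (g y) = c * dist x y) (x : Euc d) (t : ℝ) :
    g '' ball x t = ball (g x) (c * t) := by
  have hsurj : Function.Surjective g := sim_surj hc h
  ext z
  constructor
  · rintro ⟨y, hy, rfl⟩
    rw [mem_ball] at *
    rw [h]; exact (mul_lt_mul_iff_right₀ hc).2 hy
  · intro hz
    obtain ⟨y, rfl⟩ : ∃ y, g y = z := hsurj z
    exact ⟨y, by rw [mem_ball] at *; rw [h] at hz; exact lt_of_mul_lt_mul_left hz hc.le, rfl⟩

-- word similitude ratio
lemma wcomp_dist {d N : ℕ} (f : Fin N → Euc d → Euc d) (r : Fin N → ℝ)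
    (hsim : ∀ i x y, dist (f i x) (f i y) = r i * dist x y) :
    ∀ (w : List (Fin N)) (x y : Euc d),
      dist (wcomp f w x) (wcomp f w y) = (w.map r).prod * dist x y := by
  intro w
  induction w with
  | nil => simp [wcomp]
  | cons i w ih =>
    intro x y
    simp only [wcomp, Function.comp_apply, hsim, ih, List.map_cons, List.prod_cons, mul_assoc]

lemma wcomp_mem {d N : ℕ} (f : Fin N → Euc d → Euc d) (S : Set (Euc d))
    (hmap : ∀ i, f i '' S ⊆ S) : ∀ (w : List (Fin N)) (z : Euc d), z ∈ S → wcomp f w z ∈ S := by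
  intro w
  induction w with
  | nil => simp [wcomp]
  | cons i w ih => intro z hz; exact hmap i ⟨wcomp f w z, ih z hz, rfl⟩

lemma wcomp_prod_le {N : ℕ} (r : Fin N → ℝ) (q : ℝ) (hq0 : 0 ≤ q) (hle : ∀ i, r i ≤ q)
    (hr0 : ∀ i, 0 ≤ r i) :
    ∀ w : List (Fin N), (w.map r).prod ≤ q ^ w.length := by
  intro w
  induction w with
  | nil => simp
  | cons i w ih =>
    simp only [List.map_cons, List.prod_cons, List.length_cons, pow_succ]
    have h1 : (0:ℝ) ≤ (w.map r).prod := List.prod_nonneg (by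
      intro a ha; obtain ⟨i, _, rfl⟩ := List.mem_map.1 ha; exact hr0 i)
    calc r i * (w.map r).prod ≤ q * q ^ w.length := by
          apply mul_le_mul (hle i) ih h1 hq0
      _ = q ^ w.length * q := mul_comm _ _

-- every point of K is in the image of words of length n
lemma K_word_cover {d N : ℕ} (f : Fin N → Euc d → Euc d) (K : Set (Euc d))
    (hKinv : K = ⋃ i, f i '' K) :
    ∀ (n : ℕ) (y : Euc d), y ∈ K → ∃ w : List (Fin N), w.length = n ∧ y ∈ wcomp f w '' K := by
  intro n
  induction n with
  | zero => intro y hy; exact ⟨[], rfl, by simpa [wcomp] using hy⟩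
  | succ n ih =>
    intro y hy
    rw [hKinv] at hy
    obtain ⟨i, u, hu, rfl⟩ := by simpa using hy
    obtain ⟨w, hw, v, hv, hvu⟩ := ih u hu
    exact ⟨i :: w, by simp [hw], v, hv, by simp [wcomp, hvu]⟩

-- K ⊆ closure O
lemma K_sub_closure {d N : ℕ} (hN : 1 ≤ N) (f : Fin N → Euc d → Euc d) (r : Fin N → ℝ)
    (hr0 : ∀ i, 0 < r i) (hr1 : ∀ i, r i < 1)
    (hsim : ∀ i x y, dist (f i x) (f i y) = r i * dist x y)
    (K : Set (Euc d)) (hKc : IsCompact K) (hKinv : K = ⋃ i, f i '' K)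
    (O : Set (Euc d)) (hOmap : ∀ i, f i '' O ⊆ O) (hSOSC : (O ∩ K).Nonempty) :
    K ⊆ closure O := by
  obtain ⟨z, hzO, hzK⟩ := hSOSC
  obtain ⟨q, hq1, hq0, hqle⟩ : ∃ q : ℝ, q < 1 ∧ 0 ≤ q ∧ ∀ i, r i ≤ q := by
    have : Nonempty (Fin N) := ⟨⟨0, hN⟩⟩
    refine ⟨Finset.univ.sup' Finset.univ_nonempty r, ?_, ?_, ?_⟩
    · exact (Finset.sup'_lt_iff Finset.univ_nonempty).2 fun i _ => hr1 i
    · exact le_trans (hr0 ⟨0, hN⟩).le (Finset.le_sup' r (Finset.mem_univ _))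
    · exact fun i => Finset.le_sup' r (Finset.mem_univ i)
  obtain ⟨D, hD⟩ := hKc.isBounded.subset_closedBall z
  have hD0 : (0:ℝ) ≤ max D 0 := le_max_right _ _
  intro y hy
  rw [Metric.mem_closure_iff]
  intro ε hε
  obtain ⟨n, hn⟩ : ∃ n : ℕ, q ^ n * (max D 0 + 1) < ε := by
    have htend : Filter.Tendsto (fun n : ℕ => q ^ n * (max D 0 + 1)) atTop (nhds 0) := by
      simpa using (tendsto_pow_atTop_nhds_zero_of_lt_one hq0 hq1).mul_const (max D 0 + 1)
    obtain ⟨n, hn⟩ := (htend.eventually (eventually_lt_nhds hε)).exists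
    exact ⟨n, by simpa using hn⟩
  obtain ⟨w, hwlen, u, hu, huy⟩ := K_word_cover f K hKinv n y hy
  refine ⟨wcomp f w z, wcomp_mem f O hOmap w z hzO, ?_⟩
  have hdz : dist u z ≤ max D 0 := le_trans (hD hu) (le_max_left _ _)
  have hprod : ((w.map r).prod) ≤ q ^ n := by
    rw [← hwlen]; exact wcomp_prod_le r q hq0 hqle (fun i => (hr0 i).le) w
  have hprod0 : 0 ≤ (w.map r).prod := List.prod_nonneg (by
    intro a ha; obtain ⟨i, _, rfl⟩ := List.mem_map.1 ha; exact (hr0 i).le)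
  have hdist : dist y (wcomp f w z) ≤ q ^ n * max D 0 := by
    rw [← huy, wcomp_dist f r hsim]
    exact mul_le_mul hprod hdz dist_nonneg (pow_nonneg hq0 n)
  have hqn : (0:ℝ) ≤ q ^ n := pow_nonneg hq0 n
  nlinarith [hdist, hn]

lemma iter_lb {d N : ℕ} (f : Fin N → Euc d → Euc d) (p : Fin N → ℝ≥0∞)
    (hp : ∑ i, p i = 1) (μ : Measure (Euc d)) (hmeas : ∀ i, Measurable (f i))
    (hss : ∀ A : Set (Euc d), MeasurableSet A → μ A = ∑ i, p i * μ (f i ⁻¹' A))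
    (c : ℝ≥0∞) :
    ∀ (n : ℕ) (A : Set (Euc d)), MeasurableSet A →
      (∀ w : List (Fin N), w.length = n → c ≤ μ ((wcomp f w) ⁻¹' A)) → c ≤ μ A := by
  intro n
  induction n with
  | zero =>
    intro A _ h
    simpa [wcomp] using h [] rfl
  | succ n ih =>
    intro A hA h
    rw [hss A hA]
    calc c = ∑ i, p i * c := by rw [← Finset.sum_mul, hp, one_mul]
      _ ≤ ∑ i, p i * μ (f i ⁻¹' A) := by
          apply Finset.sum_le_sum
          intro i _
          apply mul_le_mul_right
          apply ih (f i ⁻¹' A) (hA.preimage (hmeas i))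
          intro w hw
          have := h (i :: w) (by simp [hw])
          simpa [wcomp, Set.preimage_comp] using this

lemma mu_K_one {d N : ℕ} (hN : 1 ≤ N) (f : Fin N → Euc d → Euc d) (r : Fin N → ℝ)
    (hr0 : ∀ i, 0 < r i) (hr1 : ∀ i, r i < 1)
    (hsim : ∀ i x y, dist (f i x) (f i y) = r i * dist x y)
    (K : Set (Euc d)) (hKne : K.Nonempty) (hKc : IsCompact K) (hKinv : K = ⋃ i, f i '' K)
    (p : Fin N → ℝ≥0∞) (hp : ∑ i, p i = 1)
    (μ : Measure (Euc d)) (hμp : IsProbabilityMeasure μ)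
    (hss : ∀ A : Set (Euc d), MeasurableSet A → μ A = ∑ i, p i * μ (f i ⁻¹' A)) :
    μ K = 1 := by
  obtain ⟨z, hzK⟩ := id hKne
  have hmeas : ∀ i, Measurable (f i) := by
    intro i
    have : Continuous (f i) := by
      apply LipschitzWith.continuous (K := Real.toNNReal (r i))
      intro a b
      rw [edist_dist, edist_dist, hsim, ENNReal.ofReal_mul (hr0 i).le]
      rfl
    exact this.measurable
  obtain ⟨q, hq1, hq0, hqle⟩ : ∃ q : ℝ, q < 1 ∧ 0 ≤ q ∧ ∀ i, r i ≤ q := by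
    have : Nonempty (Fin N) := ⟨⟨0, hN⟩⟩
    refine ⟨Finset.univ.sup' Finset.univ_nonempty r, ?_, ?_, ?_⟩
    · exact (Finset.sup'_lt_iff Finset.univ_nonempty).2 fun i _ => hr1 i
    · exact le_trans (hr0 ⟨0, hN⟩).le (Finset.le_sup' r (Finset.mem_univ _))
    · exact fun i => Finset.le_sup' r (Finset.mem_univ i)
  have hKmapsub : ∀ i, f i '' K ⊆ K := by
    intro i
    conv_rhs => rw [hKinv]
    exact Set.subset_iUnion (fun i => f i '' K) i
  -- step 1: μ (cthickening δ K) = 1 for δ > 0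
  have hthick : ∀ δ : ℝ, 0 < δ → μ (cthickening δ K) = 1 := by
    intro δ hδ
    have hub : ∀ M : ℕ, μ (closedBall z M) ≤ μ (cthickening δ K) := by
      intro M
      obtain ⟨n, hn⟩ : ∃ n : ℕ, q ^ n * M ≤ δ := by
        have htend : Filter.Tendsto (fun n : ℕ => q ^ n * M) atTop (nhds 0) := by
          simpa using (tendsto_pow_atTop_nhds_zero_of_lt_one hq0 hq1).mul_const (M:ℝ)
        obtain ⟨n, hn⟩ := (htend.eventually (eventually_le_nhds hδ)).exists
        exact ⟨n, by simpa using hn⟩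
      apply iter_lb f p hp μ hmeas hss _ n _ Metric.isClosed_cthickening.measurableSet
      intro w hw
      apply measure_mono
      intro y hy
      rw [Set.mem_preimage]
      apply Metric.mem_cthickening_of_dist_le (wcomp f w y) (wcomp f w z) δ K
        (wcomp_mem f K hKmapsub w z hzK)
      rw [wcomp_dist f r hsim]
      have hprod : ((w.map r).prod) ≤ q ^ n := by
        rw [← hw]; exact wcomp_prod_le r q hq0 hqle (fun i => (hr0 i).le) w
      have hprod0 : 0 ≤ (w.map r).prod := List.prod_nonneg (by
        intro a ha; obtain ⟨i, _, rfl⟩ := List.mem_map.1 ha; exact (hr0 i).le)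
      calc (w.map r).prod * dist y z ≤ q ^ n * M :=
            mul_le_mul hprod (by simpa [mem_closedBall] using hy) dist_nonneg
              (pow_nonneg hq0 n)
        _ ≤ δ := hn
    have hsup : (1:ℝ≥0∞) = ⨆ M : ℕ, μ (closedBall z M) := by
      rw [← measure_univ (μ := μ), ← Metric.iUnion_closedBall_nat z]
      exact Directed.measure_iUnion
        (Monotone.directed_le fun a b hab =>
          closedBall_subset_closedBall (by exact_mod_cast hab))
    refine le_antisymm prob_le_one ?_
    rw [hsup]
    exact iSup_le hub
  -- step 2: Kᶜ null
  have hKcompl : μ Kᶜ = 0 := by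
    have hcover : Kᶜ ⊆ ⋃ n : ℕ, (cthickening (1/(n+1)) K)ᶜ := by
      intro y hy
      have hpos : 0 < Metric.infDist y K :=
        (hKc.isClosed.notMem_iff_infDist_pos hKne).1 hy
      obtain ⟨n, hn⟩ := exists_nat_one_div_lt hpos
      refine Set.mem_iUnion.2 ⟨n, ?_⟩
      intro hmem
      have h1 : EMetric.infEdist y K ≤ ENNReal.ofReal (1/(n+1)) :=
        Metric.mem_cthickening_iff.1 hmem
      have h2 : Metric.infDist y K ≤ 1/(n+1) := by
        rw [Metric.infDist]
        calc (EMetric.infEdist y K).toReal ≤ (ENNReal.ofReal (1/(n+1))).toReal :=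
              ENNReal.toReal_mono ENNReal.ofReal_ne_top h1
          _ = 1/(n+1) := ENNReal.toReal_ofReal (by positivity)
      linarith
    refine le_antisymm ?_ zero_le
    calc μ Kᶜ ≤ ∑' n : ℕ, μ (cthickening (1/(n+1)) K)ᶜ :=
          (measure_mono hcover).trans (measure_iUnion_le _)
      _ = 0 := by
          simp only [ENNReal.tsum_eq_zero]
          intro n
          rw [measure_compl Metric.isClosed_cthickening.measurableSet (measure_ne_top μ _),
            hthick _ (by positivity), measure_univ]
          simp
  have := measure_compl (hKc.isClosed.measurableSet) (measure_ne_top μ K)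
  rw [hKcompl, measure_univ] at this
  -- 0 = 1 - μ K
  have hle : μ K ≤ 1 := prob_le_one
  rw [eq_comm, tsub_eq_zero_iff_le] at this
  exact le_antisymm hle this

/-- Lemma 2.3, blow-up principle: for a ball `B(x,r) ⊆ O` centered
in `K` and any `j`, `λ(f_j(B(x,r))) = r_j^s λ(B(x,r))`, hence the reciprocal
density is invariant under `f_j`. -/
theorem stmt7
    {d N : ℕ} (hN : 2 ≤ N)
    (f : Fin N → Euc d → Euc d) (r : Fin N → ℝ)
    (hr0 : ∀ i, 0 < r i) (hr1 : ∀ i, r i < 1)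
    (hsim : ∀ i x y, dist (f i x) (f i y) = r i * dist x y)
    (K : Set (Euc d)) (hKne : K.Nonempty) (hKc : IsCompact K)
    (hKinv : K = ⋃ i, f i '' K)
    (O : Set (Euc d)) (hO : IsOpen O) (hObd : Bornology.IsBounded O)
    (hOmap : ∀ i, f i '' O ⊆ O)
    (hOdisj : ∀ i j, i ≠ j → Disjoint (f i '' O) (f j '' O))
    (hSOSC : (O ∩ K).Nonempty)
    (s : ℝ) (hs : ∑ i, r i ^ s = 1)
    (μ : Measure (Euc d)) (hμp : IsProbabilityMeasure μ)
    (hμss : ∀ A : Set (Euc d), MeasurableSet A →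
      μ A = ∑ i, ENNReal.ofReal (r i ^ s) * μ (f i ⁻¹' A))
    (x : Euc d) (hx : x ∈ K) (t : ℝ) (ht : 0 < t) (hball : ball x t ⊆ O)
    (j : Fin N) :
    μ (f j '' ball x t) = ENNReal.ofReal (r j ^ s) * μ (ball x t) ∧
      ENNReal.ofReal ((2 * t) ^ s) / μ (ball x t)
        = ENNReal.ofReal ((2 * (t * r j)) ^ s) / μ (f j '' ball x t) := by
  have hp : (∑ i, ENNReal.ofReal (r i ^ s)) = 1 := by
    rw [← ENNReal.ofReal_sum_of_nonneg (fun i _ => Real.rpow_nonneg (hr0 i).le s), hs,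
      ENNReal.ofReal_one]
  have hinj : Function.Injective (f j) := by
    intro a b hab
    have h1 := hsim j a b
    rw [hab, dist_self] at h1
    exact dist_eq_zero.1 ((mul_eq_zero.1 h1.symm).resolve_left (hr0 j).ne')
  have himg : f j '' ball x t = ball (f j x) (r j * t) := sim_ball_image (hr0 j) (hsim j) x t
  have hmeasA : MeasurableSet (f j '' ball x t) := by rw [himg]; exact measurableSet_ball
  have hμK : μ K = 1 :=
    mu_K_one (le_trans one_le_two hN) f r hr0 hr1 hsim K hKne hKc hKinv
      (fun i => ENNReal.ofReal (r i ^ s)) hp μ hμp hμss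
  have hμKc : μ Kᶜ = 0 := by
    have h2 := measure_compl hKc.isClosed.measurableSet (measure_ne_top μ K)
    rw [hμK, measure_univ, tsub_self] at h2
    exact h2
  have hKcl : K ⊆ closure O :=
    K_sub_closure (le_trans one_le_two hN) f r hr0 hr1 hsim K hKc hKinv O hOmap hSOSC
  have hopenj : IsOpen (f j '' O) := by
    rw [Metric.isOpen_iff]
    rintro _ ⟨y, hy, rfl⟩
    obtain ⟨ε, hε, hεO⟩ := (Metric.isOpen_iff.1 hO) y hy
    refine ⟨r j * ε, mul_pos (hr0 j) hε, ?_⟩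
    rw [← sim_ball_image (hr0 j) (hsim j) y ε]
    exact Set.image_mono hεO
  have hcont : ∀ i : Fin N, Continuous (f i) := by
    intro i
    apply LipschitzWith.continuous (K := Real.toNNReal (r i))
    intro a b
    rw [edist_dist, edist_dist, hsim, ENNReal.ofReal_mul (hr0 i).le]
    rfl
  have hnull : ∀ i : Fin N, i ≠ j → μ (f i ⁻¹' (f j '' ball x t)) = 0 := by
    intro i hij
    apply measure_mono_null _ hμKc
    intro y hy
    simp only [Set.mem_compl_iff]
    intro hyK
    have h1 : f i y ∈ closure (f i '' O) :=
      image_closure_subset_closure_image (hcont i) ⟨y, hKcl hyK, rfl⟩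
    have h2 : f i y ∈ f j '' O := Set.image_mono hball hy
    have h3 : Disjoint (f j '' O) (closure (f i '' O)) :=
      (hOdisj j i (Ne.symm hij)).closure_right hopenj
    exact Set.disjoint_left.1 h3 h2 h1
  have key : μ (f j '' ball x t) = ENNReal.ofReal (r j ^ s) * μ (ball x t) := by
    rw [hμss _ hmeasA, Finset.sum_eq_single j]
    · rw [Set.preimage_image_eq _ hinj]
    · intro i _ hij
      rw [hnull i hij, mul_zero]
    · intro h
      exact absurd (Finset.mem_univ j) h
  refine ⟨key, ?_⟩
  have hrs : 2 * (t * r j) = (2 * t) * (r j) := by ring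
  have hne0 : ENNReal.ofReal (r j ^ s) ≠ 0 :=
    ne_of_gt (ENNReal.ofReal_pos.2 (Real.rpow_pos_of_pos (hr0 j) s))
  rw [key, hrs, Real.mul_rpow (by positivity) (hr0 j).le,
    ENNReal.ofReal_mul (Real.rpow_nonneg (by positivity) s),
    mul_comm (ENNReal.ofReal ((2 * t) ^ s)) _,
    ENNReal.mul_div_mul_left _ _ hne0 ENNReal.ofReal_ne_top]
end
end

section
/- Let K be the attractor of an IFS {f_1,...,f_N} of similitudes with ratios r_i and dimension s, satisfying the strong separation condition with separation constant Δ > 0 (i.e., d(f_i(K), f_j(K)) > Δ for all i ≠ j), K in general position, and let λ be the normalized self-similar measure and r_* = min_i r_i. Then P^s(K) = sup{ (2r)^s/λ(B(x,r)) : x ∈ K, r_*Δ/2 ≤ r ≤ Δ/2 }. -/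
open Metric Set MeasureTheory ENNReal Filter

noncomputable section

namespace Stmt9

/-- All the standing hypotheses of the theorem, bundled. -/
structure Ctx (d N : ℕ) where
  f : Fin N → Euc d → Euc d
  r : Fin N → ℝ
  K : Set (Euc d)
  Δ : ℝ
  s : ℝ
  μ : Measure (Euc d)
  hN : 2 ≤ N
  hr0 : ∀ i, 0 < r i
  hr1 : ∀ i, r i < 1
  hsim : ∀ i x y, dist (f i x) (f i y) = r i * dist x y
  hKne : K.Nonempty
  hKc : IsCompact K
  hKinv : K = ⋃ i, f i '' K
  hΔ : 0 < Δ
  hsep : ∀ i j, i ≠ j → ∀ p ∈ f i '' K, ∀ q ∈ f j '' K, Δ < dist p q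
  hs : ∑ i, r i ^ s = 1
  hμp : IsProbabilityMeasure μ
  hμss : ∀ A : Set (Euc d), MeasurableSet A →
      μ A = ∑ i, ENNReal.ofReal (r i ^ s) * μ (f i ⁻¹' A)

namespace Ctx

variable {d N : ℕ} (c : Ctx d N)

/-- contraction ratio along a word -/
def rp (w : List (Fin N)) : ℝ := (w.map c.r).prod

@[simp] lemma rp_nil : c.rp [] = 1 := rfl

@[simp] lemma rp_cons (i : Fin N) (w : List (Fin N)) : c.rp (i :: w) = c.r i * c.rp w := by
  simp [rp]

lemma rp_append (u v : List (Fin N)) : c.rp (u ++ v) = c.rp u * c.rp v := by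
  simp [rp]

lemma rp_pos (w : List (Fin N)) : 0 < c.rp w := by
  induction w with
  | nil => simp
  | cons i w ih => simpa using mul_pos (c.hr0 i) ih

lemma rp_le_one (w : List (Fin N)) : c.rp w ≤ 1 := by
  induction w with
  | nil => simp
  | cons i w ih =>
      have := (c.hr0 i).le
      have h1 := (c.hr1 i).le
      calc c.rp (i :: w) = c.r i * c.rp w := by simp
        _ ≤ 1 * 1 := by
            exact mul_le_mul h1 ih (c.rp_pos w).le zero_le_one
        _ = 1 := one_mul 1

@[simp] lemma wcomp_nil (x : Euc d) : wcomp c.f [] x = x := rfl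

@[simp] lemma wcomp_cons (i : Fin N) (w : List (Fin N)) (x : Euc d) :
    wcomp c.f (i :: w) x = c.f i (wcomp c.f w x) := rfl

lemma wcomp_append (u v : List (Fin N)) (x : Euc d) :
    wcomp c.f (u ++ v) x = wcomp c.f u (wcomp c.f v x) := by
  induction u with
  | nil => rfl
  | cons i u ih => simp [ih]

lemma wcomp_dist (w : List (Fin N)) (x y : Euc d) :
    dist (wcomp c.f w x) (wcomp c.f w y) = c.rp w * dist x y := by
  induction w with
  | nil => simp
  | cons i w ih => simp [c.hsim, ih, mul_assoc]

lemma f_cont (i : Fin N) : Continuous (c.f i) := by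
  refine (LipschitzWith.of_dist_le_mul (K := (c.r i).toNNReal) (f := c.f i) ?_).continuous
  intro x y
  rw [c.hsim]
  gcongr
  exact le_of_eq (Real.coe_toNNReal _ (c.hr0 i).le).symm

lemma wcomp_cont (w : List (Fin N)) : Continuous (wcomp c.f w) := by
  induction w with
  | nil => exact continuous_id
  | cons i w ih => exact (c.f_cont i).comp ih

lemma f_inj (i : Fin N) : Function.Injective (c.f i) := by
  intro x y h
  have := c.hsim i x y
  rw [h, dist_self] at this
  have := this.symm
  rcases mul_eq_zero.1 this with h' | h'
  · exact absurd h' (c.hr0 i).ne'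
  · exact dist_eq_zero.1 h'

lemma f_mapsTo (i : Fin N) : MapsTo (c.f i) c.K c.K := by
  intro x hx
  have : c.f i x ∈ ⋃ j, c.f j '' c.K := mem_iUnion.2 ⟨i, mem_image_of_mem _ hx⟩
  rwa [← c.hKinv] at this

lemma wcomp_mapsTo (w : List (Fin N)) : MapsTo (wcomp c.f w) c.K c.K := by
  induction w with
  | nil => exact fun x hx => hx
  | cons i w ih => exact fun x hx => c.f_mapsTo i (ih hx)

include c in
lemma nonempty_fin : Nonempty (Fin N) := ⟨⟨0, Nat.lt_of_lt_of_le Nat.zero_lt_two c.hN⟩⟩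

lemma s_pos : 0 < c.s := by
  by_contra h
  push_neg at h
  have h2 : ∀ i : Fin N, (1:ℝ) ≤ c.r i ^ c.s := by
    intro i
    exact Real.one_le_rpow_of_pos_of_le_one_of_nonpos (c.hr0 i) (c.hr1 i).le h
  have : (N : ℝ) ≤ ∑ i : Fin N, c.r i ^ c.s := by
    calc (N:ℝ) = ∑ _i : Fin N, (1:ℝ) := by simp
      _ ≤ _ := Finset.sum_le_sum fun i _ => h2 i
  rw [c.hs] at this
  have : (N:ℝ) ≤ 1 := this
  have h2N : (2:ℝ) ≤ (N:ℝ) := by exact_mod_cast c.hN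
  linarith

lemma rps_pos (w : List (Fin N)) : 0 < c.rp w ^ c.s := Real.rpow_pos_of_pos (c.rp_pos w) _

/-- one-letter location lemma -/
lemma mem_piece {i j : Fin N} {z : Euc d} (hz : z ∈ c.K) {T : Set (Euc d)} (hT : T ⊆ c.K) :
    c.f i z ∈ c.f j '' T ↔ i = j ∧ z ∈ T := by
  constructor
  · rintro ⟨t, htT, hft⟩
    by_cases hij : i = j
    · subst hij
      have : t = z := c.f_inj i hft
      exact ⟨rfl, this ▸ htT⟩
    · exfalso
      have := c.hsep i j hij (c.f i z) (mem_image_of_mem _ hz) (c.f j t)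
        (mem_image_of_mem _ (hT htT))
      rw [hft, dist_self] at this
      exact absurd this (not_lt.2 c.hΔ.le)
  · rintro ⟨rfl, hzT⟩
    exact mem_image_of_mem _ hzT

/-- word location lemma: distinct same-length words give disjoint pieces. -/
lemma mem_wpiece {w w' : List (Fin N)} (hlen : w.length = w'.length) {y : Euc d}
    (hy : y ∈ c.K) {S : Set (Euc d)} (hS : S ⊆ c.K) :
    wcomp c.f w y ∈ wcomp c.f w' '' S ↔ w = w' ∧ y ∈ S := by
  induction w generalizing w' S with
  | nil =>
      cases w' with
      | nil => simp
      | cons j t => simp at hlen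
  | cons i t ih =>
      cases w' with
      | nil => simp at hlen
      | cons j t' =>
          simp only [List.length_cons, Nat.succ.injEq] at hlen
          have hsub : wcomp c.f t' '' S ⊆ c.K := by
            rintro _ ⟨a, ha, rfl⟩
            exact c.wcomp_mapsTo t' (hS ha)
          constructor
          · intro h
            have h1 : c.f i (wcomp c.f t y) ∈ c.f j '' (wcomp c.f t' '' S) := by
              simpa [wcomp, Set.image_image] using h
            rcases (c.mem_piece (c.wcomp_mapsTo t hy) hsub).1 h1 with ⟨rfl, h2⟩
            rcases (ih hlen hS).1 h2 with ⟨rfl, h3⟩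
            exact ⟨rfl, h3⟩
          · rintro ⟨h, hyS⟩
            cases h
            exact mem_image_of_mem _ hyS

end Ctx

end Stmt9
namespace Stmt9
namespace Ctx

variable {d N : ℕ} (c : Ctx d N)

/-- The maximal contraction ratio. -/
def rmax : ℝ := (Finset.univ.image c.r).max' (by
  haveI := c.nonempty_fin
  exact (Finset.univ_nonempty).image _)

lemma r_le_rmax (i : Fin N) : c.r i ≤ c.rmax :=
  Finset.le_max' _ _ (Finset.mem_image_of_mem _ (Finset.mem_univ i))

include c in
lemma exists_rmax : ∃ i, c.r i = c.rmax := by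
  have := Finset.max'_mem (Finset.univ.image c.r) (by
    haveI := c.nonempty_fin
    exact (Finset.univ_nonempty).image _)
  rcases Finset.mem_image.1 this with ⟨i, _, hi⟩
  exact ⟨i, hi⟩

lemma rmax_pos : 0 < c.rmax := by
  rcases c.exists_rmax with ⟨i, hi⟩
  exact hi ▸ c.hr0 i

lemma rmax_lt_one : c.rmax < 1 := by
  rcases c.exists_rmax with ⟨i, hi⟩
  exact hi ▸ c.hr1 i

lemma rp_le_pow (w : List (Fin N)) : c.rp w ≤ c.rmax ^ w.length := by
  induction w with
  | nil => simp
  | cons i w ih =>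
      simp only [rp_cons, List.length_cons, pow_succ]
      rw [mul_comm (c.rmax ^ w.length) c.rmax]
      exact mul_le_mul (c.r_le_rmax i) ih (c.rp_pos w).le c.rmax_pos.le

include c in
lemma sum_ofReal_rs : ∑ i : Fin N, ENNReal.ofReal (c.r i ^ c.s) = 1 := by
  rw [← ENNReal.ofReal_sum_of_nonneg (fun i _ => (Real.rpow_pos_of_pos (c.hr0 i) _).le), c.hs,
    ENNReal.ofReal_one]

lemma thickening_le (ε : ℝ) (hε : 0 < ε) :
    c.μ (thickening (ε / c.rmax) c.K) ≤ c.μ (thickening ε c.K) := by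
  haveI := c.hμp
  have hsub : ∀ i, thickening (ε / c.rmax) c.K ⊆ c.f i ⁻¹' thickening ε c.K := by
    intro i y hy
    rcases mem_thickening_iff.1 hy with ⟨z, hz, hdist⟩
    refine mem_preimage.2 (mem_thickening_iff.2 ⟨c.f i z, c.f_mapsTo i hz, ?_⟩)
    rw [c.hsim]
    calc c.r i * dist y z < c.r i * (ε / c.rmax) := by
          exact mul_lt_mul_of_pos_left hdist (c.hr0 i)
      _ ≤ c.rmax * (ε / c.rmax) := by
          exact mul_le_mul_of_nonneg_right (c.r_le_rmax i) (div_nonneg hε.le c.rmax_pos.le)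
      _ = ε := by
          rw [mul_div_assoc']
          exact mul_div_cancel_left₀ _ c.rmax_pos.ne'
  calc c.μ (thickening (ε / c.rmax) c.K)
      = (∑ i : Fin N, ENNReal.ofReal (c.r i ^ c.s)) * c.μ (thickening (ε / c.rmax) c.K) := by
        rw [c.sum_ofReal_rs, one_mul]
    _ = ∑ i : Fin N, ENNReal.ofReal (c.r i ^ c.s) * c.μ (thickening (ε / c.rmax) c.K) := by
        rw [Finset.sum_mul]
    _ ≤ ∑ i : Fin N, ENNReal.ofReal (c.r i ^ c.s) * c.μ (c.f i ⁻¹' thickening ε c.K) := by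
        exact Finset.sum_le_sum fun i _ => mul_le_mul_right (measure_mono (hsub i)) _
    _ = c.μ (thickening ε c.K) := (c.hμss _ isOpen_thickening.measurableSet).symm

lemma mu_thickening (ε : ℝ) (hε : 0 < ε) : c.μ (thickening ε c.K) = 1 := by
  haveI := c.hμp
  have key : ∀ k : ℕ, c.μ (thickening (ε / c.rmax ^ k) c.K) ≤ c.μ (thickening ε c.K) := by
    intro k
    induction k with
    | zero => simp
    | succ k ih =>
        have h1 : ε / c.rmax ^ (k+1) = (ε / c.rmax ^ k) / c.rmax := by
          rw [pow_succ, ← div_div]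
        rw [h1]
        have hpos : 0 < ε / c.rmax ^ k := div_pos hε (pow_pos c.rmax_pos k)
        exact le_trans (c.thickening_le _ hpos) ih
  have hdir : Monotone (fun k : ℕ => thickening (ε / c.rmax ^ k) c.K) := by
    intro a b hab
    apply thickening_mono
    have h1 : 0 < c.rmax ^ b := pow_pos c.rmax_pos b
    apply div_le_div_of_nonneg_left hε.le h1
    exact pow_le_pow_of_le_one c.rmax_pos.le c.rmax_lt_one.le hab
  have hunion : ⋃ k : ℕ, thickening (ε / c.rmax ^ k) c.K = univ := by
    rcases c.hKne with ⟨z, hz⟩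
    refine eq_univ_of_forall fun y => mem_iUnion.2 ?_
    have : Tendsto (fun k : ℕ => c.rmax ^ k) atTop (nhds 0) :=
      tendsto_pow_atTop_nhds_zero_of_lt_one c.rmax_pos.le c.rmax_lt_one
    have h2 : ∀ᶠ k : ℕ in atTop, c.rmax ^ k < ε / (dist y z + 1) := by
      exact this.eventually (eventually_lt_nhds (by positivity))
    rcases h2.exists with ⟨k, hk⟩
    refine ⟨k, mem_thickening_iff.2 ⟨z, hz, ?_⟩⟩
    have hpow : (0:ℝ) < c.rmax ^ k := pow_pos c.rmax_pos k
    have hd1 : (0:ℝ) < dist y z + 1 := by positivity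
    rw [lt_div_iff₀ hd1] at hk
    have h3 : dist y z * c.rmax ^ k < ε := by
      have hle : c.rmax ^ k ≤ 1 := pow_le_one₀ c.rmax_pos.le c.rmax_lt_one.le
      nlinarith [dist_nonneg (x := y) (y := z)]
    rw [lt_div_iff₀ hpow]
    exact h3
  have h1 : c.μ (⋃ k : ℕ, thickening (ε / c.rmax ^ k) c.K) = 1 := by
    rw [hunion]; exact measure_univ
  rw [hdir.measure_iUnion] at h1
  have h2 : (⨆ k : ℕ, c.μ (thickening (ε / c.rmax ^ k) c.K)) ≤ c.μ (thickening ε c.K) :=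
    iSup_le key
  rw [h1] at h2
  exact le_antisymm prob_le_one h2

lemma muK : c.μ c.K = 1 := by
  haveI := c.hμp
  have hK : c.K = ⋂ n : ℕ, thickening (1 / (n + 1)) c.K := by
    apply Subset.antisymm
    · exact subset_iInter fun n => self_subset_thickening (by positivity) _
    · intro x hx
      have : x ∈ closure c.K := by
        rw [Metric.mem_closure_iff]
        intro ε hε
        rcases exists_nat_one_div_lt hε with ⟨n, hn⟩
        rcases mem_thickening_iff.1 (mem_iInter.1 hx n) with ⟨z, hz, hd⟩
        exact ⟨z, hz, lt_trans hd hn⟩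
      rwa [c.hKc.isClosed.closure_eq] at this
  have hanti : Antitone (fun n : ℕ => thickening (1 / ((n:ℝ) + 1)) c.K) := by
    intro a b hab
    apply thickening_mono
    have ha : (0:ℝ) < (a:ℝ) + 1 := by positivity
    have : ((a:ℝ)) ≤ (b:ℝ) := Nat.cast_le.2 hab
    exact one_div_le_one_div_of_le ha (by linarith)
  have := MeasureTheory.tendsto_measure_iInter_atTop
    (μ := c.μ) (s := fun n : ℕ => thickening (1 / ((n:ℝ) + 1)) c.K)
    (fun n => isOpen_thickening.measurableSet.nullMeasurableSet) hanti
    ⟨0, (measure_ne_top _ _)⟩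
  have hconst : (fun n : ℕ => c.μ (thickening (1 / ((n:ℝ) + 1)) c.K)) = fun _ => 1 := by
    funext n; exact c.mu_thickening _ (by positivity)
  rw [show (⇑c.μ ∘ fun n : ℕ => thickening (1 / ((n:ℝ) + 1)) c.K)
      = fun n : ℕ => c.μ (thickening (1 / ((n:ℝ) + 1)) c.K) from rfl, hconst] at this
  have h2 := tendsto_nhds_unique this tendsto_const_nhds
  rw [hK]
  exact h2

lemma muKc : c.μ c.Kᶜ = 0 := by
  haveI := c.hμp
  rw [measure_compl c.hKc.measurableSet (measure_ne_top _ _), c.muK, measure_univ]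
  simp

lemma mu_inter_K (A : Set (Euc d)) : c.μ (A ∩ c.K) = c.μ A := by
  refine le_antisymm (measure_mono inter_subset_left) ?_
  calc c.μ A ≤ c.μ (A ∩ c.K) + c.μ (A \ c.K) := measure_le_inter_add_diff _ _ _
    _ ≤ c.μ (A ∩ c.K) + c.μ c.Kᶜ :=
        add_le_add_right (measure_mono (diff_subset_compl A c.K)) _
    _ = c.μ (A ∩ c.K) := by rw [c.muKc, add_zero]

end Ctx
end Stmt9
namespace Stmt9
namespace Ctx

variable {d N : ℕ} (c : Ctx d N)

lemma scale_ball (i : Fin N) {x : Euc d} (hx : x ∈ c.K) {t : ℝ} (h : c.r i * t ≤ c.Δ) :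
    c.μ (ball (c.f i x) (c.r i * t)) = ENNReal.ofReal (c.r i ^ c.s) * c.μ (ball x t) := by
  rw [c.hμss _ measurableSet_ball]
  have hpre : c.f i ⁻¹' ball (c.f i x) (c.r i * t) = ball x t := by
    ext y
    simp only [mem_preimage, mem_ball, c.hsim]
    exact mul_lt_mul_iff_right₀ (c.hr0 i)
  rw [Finset.sum_eq_single i]
  · rw [hpre]
  · intro j _ hji
    have hzero : c.f j ⁻¹' ball (c.f i x) (c.r i * t) ∩ c.K = ∅ := by
      ext y
      simp only [mem_inter_iff, mem_preimage, mem_ball, mem_empty_iff_false, iff_false, not_and]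
      intro hyd hyK
      have := c.hsep i j (fun hij => hji hij.symm) (c.f i x) (mem_image_of_mem _ hx)
        (c.f j y) (mem_image_of_mem _ hyK)
      rw [dist_comm] at hyd
      exact absurd (this.trans (hyd.trans_le h)) (lt_irrefl _)
    have : c.μ (c.f j ⁻¹' ball (c.f i x) (c.r i * t)) = 0 := by
      rw [← c.mu_inter_K, hzero, measure_empty]
    rw [this, mul_zero]
  · intro h'; exact absurd (Finset.mem_univ i) h'

lemma scale_closedBall (i : Fin N) {x : Euc d} (hx : x ∈ c.K) {t : ℝ} (h : c.r i * t ≤ c.Δ) :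
    c.μ (closedBall (c.f i x) (c.r i * t))
      = ENNReal.ofReal (c.r i ^ c.s) * c.μ (closedBall x t) := by
  rw [c.hμss _ measurableSet_closedBall]
  have hpre : c.f i ⁻¹' closedBall (c.f i x) (c.r i * t) = closedBall x t := by
    ext y
    simp only [mem_preimage, mem_closedBall, c.hsim]
    exact mul_le_mul_iff_right₀ (c.hr0 i)
  rw [Finset.sum_eq_single i]
  · rw [hpre]
  · intro j _ hji
    have hzero : c.f j ⁻¹' closedBall (c.f i x) (c.r i * t) ∩ c.K = ∅ := by
      ext y
      simp only [mem_inter_iff, mem_preimage, mem_closedBall, mem_empty_iff_false, iff_false,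
        not_and]
      intro hyd hyK
      have hgt := c.hsep i j (fun hij => hji hij.symm) (c.f i x) (mem_image_of_mem _ hx)
        (c.f j y) (mem_image_of_mem _ hyK)
      rw [dist_comm] at hyd
      exact absurd (lt_of_lt_of_le hgt (hyd.trans h)) (lt_irrefl _)
    have : c.μ (c.f j ⁻¹' closedBall (c.f i x) (c.r i * t)) = 0 := by
      rw [← c.mu_inter_K, hzero, measure_empty]
    rw [this, mul_zero]
  · intro h'; exact absurd (Finset.mem_univ i) h'

lemma ofReal_rp_cons (i : Fin N) (w : List (Fin N)) :
    ENNReal.ofReal (c.rp (i :: w) ^ c.s)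
      = ENNReal.ofReal (c.r i ^ c.s) * ENNReal.ofReal (c.rp w ^ c.s) := by
  rw [rp_cons, Real.mul_rpow (c.hr0 i).le (c.rp_pos w).le,
    ENNReal.ofReal_mul (Real.rpow_pos_of_pos (c.hr0 i) _).le]

lemma scale_ball_w (w : List (Fin N)) {x : Euc d} (hx : x ∈ c.K) {t : ℝ} (ht0 : 0 ≤ t)
    (htΔ : t ≤ c.Δ) :
    c.μ (ball (wcomp c.f w x) (c.rp w * t)) = ENNReal.ofReal (c.rp w ^ c.s) * c.μ (ball x t) := by
  induction w with
  | nil => simp [Real.rpow_natCast]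
  | cons i w ih =>
      have h1 : c.rp (i :: w) * t = c.r i * (c.rp w * t) := by rw [rp_cons, mul_assoc]
      have hcond : c.r i * (c.rp w * t) ≤ c.Δ := by
        have h2 : c.rp w * t ≤ t :=
          mul_le_of_le_one_left ht0 (c.rp_le_one w)
        have h3 : c.r i * (c.rp w * t) ≤ c.rp w * t :=
          mul_le_of_le_one_left (mul_nonneg (c.rp_pos w).le ht0) (c.hr1 i).le
        linarith
      rw [h1, wcomp_cons, c.scale_ball i (c.wcomp_mapsTo w hx) hcond, ih, ofReal_rp_cons,
        mul_assoc]

lemma scale_closedBall_w (w : List (Fin N)) {x : Euc d} (hx : x ∈ c.K) {t : ℝ} (ht0 : 0 ≤ t)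
    (htΔ : t ≤ c.Δ) :
    c.μ (closedBall (wcomp c.f w x) (c.rp w * t))
      = ENNReal.ofReal (c.rp w ^ c.s) * c.μ (closedBall x t) := by
  induction w with
  | nil => simp [Real.rpow_natCast]
  | cons i w ih =>
      have h1 : c.rp (i :: w) * t = c.r i * (c.rp w * t) := by rw [rp_cons, mul_assoc]
      have hcond : c.r i * (c.rp w * t) ≤ c.Δ := by
        have h2 : c.rp w * t ≤ t :=
          mul_le_of_le_one_left ht0 (c.rp_le_one w)
        have h3 : c.r i * (c.rp w * t) ≤ c.rp w * t :=
          mul_le_of_le_one_left (mul_nonneg (c.rp_pos w).le ht0) (c.hr1 i).le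
        linarith
      rw [h1, wcomp_cons, c.scale_closedBall i (c.wcomp_mapsTo w hx) hcond, ih, ofReal_rp_cons,
        mul_assoc]

lemma coding {x : Euc d} (hx : x ∈ c.K) : ∀ k : ℕ,
    ∃ w : List (Fin N), w.length = k ∧ x ∈ wcomp c.f w '' c.K := by
  intro k
  induction k generalizing x with
  | zero => exact ⟨[], rfl, x, hx, rfl⟩
  | succ k ih =>
      have hx' : x ∈ ⋃ i, c.f i '' c.K := c.hKinv ▸ hx
      rcases mem_iUnion.1 hx' with ⟨i, y, hy, rfl⟩
      rcases ih hy with ⟨w, hlen, z, hz, hzy⟩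
      exact ⟨i :: w, by simp [hlen], z, hz, by simp [hzy]⟩

lemma wcomp_image_compact (w : List (Fin N)) {T : Set (Euc d)} (hT : IsCompact T) :
    IsCompact (wcomp c.f w '' T) := hT.image (c.wcomp_cont w)

lemma mu_image_ge {T : Set (Euc d)} (hT : IsCompact T) (i : Fin N) :
    ENNReal.ofReal (c.r i ^ c.s) * c.μ T ≤ c.μ (c.f i '' T) := by
  rw [c.hμss _ (hT.image (c.f_cont i)).isClosed.measurableSet]
  calc ENNReal.ofReal (c.r i ^ c.s) * c.μ T
      ≤ ENNReal.ofReal (c.r i ^ c.s) * c.μ (c.f i ⁻¹' (c.f i '' T)) :=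
        mul_le_mul_right (measure_mono (subset_preimage_image _ _)) _
    _ ≤ _ := Finset.single_le_sum (f := fun j => ENNReal.ofReal (c.r j ^ c.s)
          * c.μ (c.f j ⁻¹' (c.f i '' T))) (fun j _ => zero_le) (Finset.mem_univ i)

lemma mu_wpiece_ge (w : List (Fin N)) :
    ENNReal.ofReal (c.rp w ^ c.s) ≤ c.μ (wcomp c.f w '' c.K) := by
  haveI := c.hμp
  induction w with
  | nil => simp [Real.rpow_natCast, c.muK, wcomp]
  | cons i w ih =>
      have h1 : wcomp c.f (i :: w) '' c.K = c.f i '' (wcomp c.f w '' c.K) := by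
        rw [← image_comp]; rfl
      rw [h1, ofReal_rp_cons]
      calc ENNReal.ofReal (c.r i ^ c.s) * ENNReal.ofReal (c.rp w ^ c.s)
          ≤ ENNReal.ofReal (c.r i ^ c.s) * c.μ (wcomp c.f w '' c.K) := mul_le_mul_right ih _
        _ ≤ _ := c.mu_image_ge (c.wcomp_image_compact w c.hKc) i

lemma coding_small {x : Euc d} (hx : x ∈ c.K) {ε : ℝ} (hε : 0 < ε) :
    ∃ w : List (Fin N), 1 ≤ w.length ∧ c.rp w * diam c.K < ε ∧ x ∈ wcomp c.f w '' c.K := by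
  have hdd : (0:ℝ) < diam c.K + 1 := by
    have := Metric.diam_nonneg (s := c.K); linarith
  obtain ⟨k, hk⟩ : ∃ k : ℕ, c.rmax ^ k < ε / (diam c.K + 1) := by
    exact exists_pow_lt_of_lt_one (div_pos hε hdd) c.rmax_lt_one
  rcases c.coding hx (k + 1) with ⟨w, hlen, hw⟩
  refine ⟨w, by omega, ?_, hw⟩
  have h1 : c.rp w ≤ c.rmax ^ (k+1) := hlen ▸ c.rp_le_pow w
  have h2 : c.rmax ^ (k+1) ≤ c.rmax ^ k :=
    pow_le_pow_of_le_one c.rmax_pos.le c.rmax_lt_one.le (by omega)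
  rw [lt_div_iff₀ hdd] at hk
  have hdnn : (0:ℝ) ≤ diam c.K := diam_nonneg
  calc c.rp w * diam c.K ≤ c.rmax ^ k * diam c.K := by
        apply mul_le_mul_of_nonneg_right (h1.trans h2) hdnn
    _ ≤ c.rmax ^ k * (diam c.K + 1) := by
        apply mul_le_mul_of_nonneg_left (by linarith) (pow_pos c.rmax_pos k).le
    _ < ε := hk

lemma mu_ball_pos {x : Euc d} (hx : x ∈ c.K) {t : ℝ} (ht : 0 < t) : 0 < c.μ (ball x t) := by
  rcases c.coding_small hx ht with ⟨w, _, hdiam, y, hy, hxy⟩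
  have hsub : wcomp c.f w '' c.K ⊆ ball x t := by
    rintro _ ⟨z, hz, rfl⟩
    rw [mem_ball, ← hxy, c.wcomp_dist]
    calc c.rp w * dist z y ≤ c.rp w * diam c.K := by
          apply mul_le_mul_of_nonneg_left
            (dist_le_diam_of_mem c.hKc.isBounded hz hy) (c.rp_pos w).le
      _ < t := hdiam
  calc (0:ℝ≥0∞) < ENNReal.ofReal (c.rp w ^ c.s) := by
        rw [ENNReal.ofReal_pos]; exact c.rps_pos w
    _ ≤ c.μ (wcomp c.f w '' c.K) := c.mu_wpiece_ge w
    _ ≤ c.μ (ball x t) := measure_mono hsub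

end Ctx
end Stmt9
namespace Stmt9
namespace Ctx

variable {d N : ℕ} (c : Ctx d N)

lemma rstar_pos {rstar : ℝ} (hstar : IsLeast (Set.range c.r) rstar) : 0 < rstar := by
  rcases hstar.1 with ⟨i, hi⟩
  exact hi ▸ c.hr0 i

lemma rstar_le {rstar : ℝ} (hstar : IsLeast (Set.range c.r) rstar) (i : Fin N) : rstar ≤ c.r i :=
  hstar.2 ⟨i, rfl⟩

lemma band_coding_aux {rstar : ℝ} (hstar : IsLeast (Set.range c.r) rstar) :
    ∀ (n : ℕ) {x : Euc d}, x ∈ c.K → ∀ {ρ : ℝ},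
      c.rmax ^ n * (rstar * c.Δ / 2) < ρ → ρ ≤ c.Δ / 2 →
      ∃ (w : List (Fin N)) (y : Euc d), y ∈ c.K ∧ x = wcomp c.f w y ∧
        rstar * c.Δ / 2 ≤ ρ / c.rp w ∧ ρ / c.rp w ≤ c.Δ / 2 := by
  intro n
  induction n with
  | zero =>
      intro x hx ρ hlow hhigh
      rw [pow_zero, one_mul] at hlow
      exact ⟨[], x, hx, rfl, by simpa using hlow.le, by simpa using hhigh⟩
  | succ n ih =>
      intro x hx ρ hlow hhigh
      by_cases hcase : rstar * c.Δ / 2 ≤ ρ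
      · exact ⟨[], x, hx, rfl, by simpa using hcase, by simpa using hhigh⟩
      · push_neg at hcase
        have hx' : x ∈ ⋃ i, c.f i '' c.K := c.hKinv ▸ hx
        rcases mem_iUnion.1 hx' with ⟨i, y', hy', rfl⟩
        have hband : 0 < rstar * c.Δ / 2 :=
          div_pos (mul_pos (c.rstar_pos hstar) c.hΔ) two_pos
        have hρ0 : 0 < ρ :=
          lt_trans (mul_pos (pow_pos c.rmax_pos _) hband) hlow
        have hri := c.hr0 i
        have hlow' : c.rmax ^ n * (rstar * c.Δ / 2) < ρ / c.r i := by
          have h1 : ρ / c.rmax ≤ ρ / c.r i :=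
            div_le_div_of_nonneg_left hρ0.le (c.hr0 i) (c.r_le_rmax i)
          have h2 : c.rmax ^ n * (rstar * c.Δ / 2) < ρ / c.rmax := by
            rw [lt_div_iff₀ c.rmax_pos]
            calc c.rmax ^ n * (rstar * c.Δ / 2) * c.rmax
                = c.rmax ^ (n+1) * (rstar * c.Δ / 2) := by ring
              _ < ρ := hlow
          exact lt_of_lt_of_le h2 h1
        have hhigh' : ρ / c.r i ≤ c.Δ / 2 := by
          rw [div_le_iff₀ hri]
          calc ρ ≤ rstar * c.Δ / 2 := hcase.le
            _ ≤ c.r i * c.Δ / 2 := by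
                have := c.rstar_le hstar i
                have := c.hΔ
                nlinarith
            _ = c.Δ / 2 * c.r i := by ring
        rcases ih hy' hlow' hhigh' with ⟨w, y, hy, heq, hb1, hb2⟩
        refine ⟨i :: w, y, hy, by simp [heq], ?_, ?_⟩
        · have : ρ / c.rp (i :: w) = (ρ / c.r i) / c.rp w := by
            rw [rp_cons, div_div]
          rw [this]; exact hb1
        · have : ρ / c.rp (i :: w) = (ρ / c.r i) / c.rp w := by
            rw [rp_cons, div_div]
          rw [this]; exact hb2

lemma band_coding {rstar : ℝ} (hstar : IsLeast (Set.range c.r) rstar) {x : Euc d} (hx : x ∈ c.K)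
    {ρ : ℝ} (hρ0 : 0 < ρ) (hρΔ : ρ ≤ c.Δ / 2) :
    ∃ (w : List (Fin N)) (y : Euc d), y ∈ c.K ∧ x = wcomp c.f w y ∧
      rstar * c.Δ / 2 ≤ ρ / c.rp w ∧ ρ / c.rp w ≤ c.Δ / 2 := by
  have hb : 0 < rstar * c.Δ / 2 := div_pos (mul_pos (c.rstar_pos hstar) c.hΔ) two_pos
  obtain ⟨n, hn⟩ : ∃ n : ℕ, c.rmax ^ n < ρ / (rstar * c.Δ / 2) :=
    exists_pow_lt_of_lt_one (div_pos hρ0 hb) c.rmax_lt_one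
  rw [lt_div_iff₀ hb] at hn
  exact c.band_coding_aux hstar n hx hn hρΔ

lemma hμss_word (L : ℕ) : ∀ (A : Set (Euc d)), MeasurableSet A →
    c.μ A = ∑ v : Fin L → Fin N,
      ENNReal.ofReal (c.rp (List.ofFn v) ^ c.s) * c.μ (wcomp c.f (List.ofFn v) ⁻¹' A) := by
  induction L with
  | zero =>
      intro A hA
      haveI : Unique (Fin 0 → Fin N) := Pi.uniqueOfIsEmpty _
      rw [Fintype.sum_unique]
      simp [wcomp]
  | succ L ih =>
      intro A hA
      rw [c.hμss A hA]
      have hstep : ∀ i : Fin N, c.μ (c.f i ⁻¹' A) = ∑ v : Fin L → Fin N,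
          ENNReal.ofReal (c.rp (List.ofFn v) ^ c.s)
            * c.μ (wcomp c.f (List.ofFn v) ⁻¹' (c.f i ⁻¹' A)) :=
        fun i => ih _ (hA.preimage (c.f_cont i).measurable)
      calc ∑ i, ENNReal.ofReal (c.r i ^ c.s) * c.μ (c.f i ⁻¹' A)
          = ∑ i, ∑ v : Fin L → Fin N, ENNReal.ofReal (c.rp (i :: List.ofFn v) ^ c.s)
              * c.μ (wcomp c.f (i :: List.ofFn v) ⁻¹' A) := by
            refine Finset.sum_congr rfl fun i _ => ?_
            rw [hstep i, Finset.mul_sum]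
            refine Finset.sum_congr rfl fun v _ => ?_
            rw [ofReal_rp_cons, mul_assoc]
            have hpre : wcomp c.f (i :: List.ofFn v) ⁻¹' A
                = wcomp c.f (List.ofFn v) ⁻¹' (c.f i ⁻¹' A) := rfl
            rw [hpre]
        _ = ∑ p : Fin N × (Fin L → Fin N),
              ENNReal.ofReal (c.rp (p.1 :: List.ofFn p.2) ^ c.s)
                * c.μ (wcomp c.f (p.1 :: List.ofFn p.2) ⁻¹' A) := by
            rw [Fintype.sum_prod_type]
        _ = _ := by
            refine Fintype.sum_equiv (Fin.consEquiv (fun _ => Fin N)) _ _ fun p => ?_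
            have hofn : List.ofFn (Fin.consEquiv (fun _ : Fin (L+1) => Fin N) p)
                = p.1 :: List.ofFn p.2 := by
              rcases p with ⟨i, v⟩
              have h0 : (Fin.consEquiv (fun _ : Fin (L+1) => Fin N)) (i, v) = Fin.cons i v := rfl
              rw [h0, List.ofFn_succ]
              simp [Fin.cons_zero, Fin.cons_succ]
            rw [hofn]

include c in
lemma sum_word_rs (L : ℕ) :
    ∑ v : Fin L → Fin N, ENNReal.ofReal (c.rp (List.ofFn v) ^ c.s) = 1 := by
  haveI := c.hμp
  have := c.hμss_word L univ MeasurableSet.univ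
  simp only [preimage_univ, measure_univ, mul_one] at this
  exact this.symm

end Ctx
end Stmt9
namespace Stmt9
namespace Ctx

variable {d N : ℕ} (c : Ctx d N)

/-- The band supremum appearing on the right-hand side. -/
def bandSup (rstar : ℝ) : ℝ≥0∞ :=
  ⨆ (x : Euc d) (_ : x ∈ c.K) (t : ℝ) (_ : t ∈ Set.Icc (rstar * c.Δ / 2) (c.Δ / 2)),
    ENNReal.ofReal ((2 * t) ^ c.s) / c.μ (ball x t)

lemma le_bandSup {rstar : ℝ} {x : Euc d} (hx : x ∈ c.K) {t : ℝ}
    (ht : t ∈ Set.Icc (rstar * c.Δ / 2) (c.Δ / 2)) :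
    ENNReal.ofReal ((2 * t) ^ c.s) / c.μ (ball x t) ≤ c.bandSup rstar := by
  refine le_iSup_of_le x (le_iSup_of_le hx (le_iSup_of_le t (le_iSup_of_le ht (le_refl _))))

lemma claimA {rstar : ℝ} (hstar : IsLeast (Set.range c.r) rstar) {x : Euc d} (hx : x ∈ c.K)
    {ρ : ℝ} (hρ0 : 0 < ρ) (hρΔ : ρ ≤ c.Δ / 2) :
    ENNReal.ofReal ((2 * ρ) ^ c.s) ≤ c.bandSup rstar * c.μ (ball x ρ) := by
  haveI := c.hμp
  obtain ⟨w, y, hy, rfl, hb1, hb2⟩ := c.band_coding hstar hx hρ0 hρΔ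
  set t := ρ / c.rp w with hts
  have hrpw := c.rp_pos w
  have hρeq : ρ = c.rp w * t := by
    rw [hts, mul_div_cancel₀]
    exact hrpw.ne'
  have ht0 : 0 < t := div_pos hρ0 hrpw
  have htΔ : t ≤ c.Δ := le_trans hb2 (by linarith [c.hΔ])
  have hscale : c.μ (ball (wcomp c.f w y) ρ)
      = ENNReal.ofReal (c.rp w ^ c.s) * c.μ (ball y t) := by
    conv_lhs => rw [hρeq]
    exact c.scale_ball_w w hy ht0.le htΔ
  have hb : ENNReal.ofReal ((2 * t) ^ c.s) / c.μ (ball y t) ≤ c.bandSup rstar :=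
    c.le_bandSup hy ⟨hb1, hb2⟩
  have hpos : c.μ (ball y t) ≠ 0 := (c.mu_ball_pos hy ht0).ne'
  have hfin : c.μ (ball y t) ≠ ⊤ := measure_ne_top _ _
  have hb' : ENNReal.ofReal ((2 * t) ^ c.s) ≤ c.bandSup rstar * c.μ (ball y t) :=
    (ENNReal.div_le_iff_le_mul (Or.inl hpos) (Or.inl hfin)).1 hb
  have h2ρ : (2 * ρ) ^ c.s = c.rp w ^ c.s * (2 * t) ^ c.s := by
    rw [hρeq, show 2 * (c.rp w * t) = c.rp w * (2 * t) by ring,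
      Real.mul_rpow hrpw.le (by linarith)]
  calc ENNReal.ofReal ((2 * ρ) ^ c.s)
      = ENNReal.ofReal (c.rp w ^ c.s) * ENNReal.ofReal ((2 * t) ^ c.s) := by
        rw [h2ρ, ENNReal.ofReal_mul (c.rps_pos w).le]
    _ ≤ ENNReal.ofReal (c.rp w ^ c.s) * (c.bandSup rstar * c.μ (ball y t)) :=
        mul_le_mul_right hb' _
    _ = c.bandSup rstar * (ENNReal.ofReal (c.rp w ^ c.s) * c.μ (ball y t)) := by ring
    _ = c.bandSup rstar * c.μ (ball (wcomp c.f w y) ρ) := by rw [hscale]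

lemma packingPre_empty : packingPre c.s (∅ : Set (Euc d)) = 0 := by
  have h1 : packCount c.s 1 (∅ : Set (Euc d)) = 0 := by
    refine le_antisymm ?_ (zero_le)
    refine iSup_le fun cc => iSup_le fun ρ => iSup_le fun hp => ?_
    exact absurd (hp.1 0) (notMem_empty _)
  refine le_antisymm ?_ (zero_le)
  calc packingPre c.s (∅ : Set (Euc d)) ≤ packCount c.s 1 ∅ :=
        iInf_le_of_le 1 (iInf_le _ one_pos)
    _ = 0 := h1

lemma upper {rstar : ℝ} (hstar : IsLeast (Set.range c.r) rstar) :
    packingMeasure c.s c.K ≤ c.bandSup rstar := by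
  haveI := c.hμp
  have h3 : packCount c.s (c.Δ / 2) c.K ≤ c.bandSup rstar := by
    refine iSup_le fun cc => iSup_le fun ρ => iSup_le fun hp => ?_
    obtain ⟨hmem, hrad, hdis⟩ := hp
    have hdisj : Pairwise (Function.onFun Disjoint fun n => ball (cc n) (ρ n)) := fun m n hmn =>
      hdis m n hmn
    calc ∑' n, (if 0 < ρ n then ENNReal.ofReal ((2 * ρ n) ^ c.s) else 0)
        ≤ ∑' n, c.bandSup rstar * c.μ (ball (cc n) (ρ n)) := by
          refine ENNReal.tsum_le_tsum fun n => ?_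
          split_ifs with hn
          · exact c.claimA hstar (hmem n) hn (hrad n).2
          · exact zero_le
      _ = c.bandSup rstar * ∑' n, c.μ (ball (cc n) (ρ n)) := ENNReal.tsum_mul_left
      _ = c.bandSup rstar * c.μ (⋃ n, ball (cc n) (ρ n)) := by
          rw [measure_iUnion hdisj fun n => measurableSet_ball]
      _ ≤ c.bandSup rstar * 1 := by
          exact mul_le_mul_right (prob_le_one) _
      _ = c.bandSup rstar := mul_one _
  have h2 : packingPre c.s c.K ≤ packCount c.s (c.Δ / 2) c.K :=
    iInf_le_of_le (c.Δ / 2) (iInf_le _ (half_pos c.hΔ))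
  have h1 : packingMeasure c.s c.K ≤ packingPre c.s c.K := by
    refine iInf_le_of_le (fun n => if n = 0 then c.K else ∅) (iInf_le_of_le ?_ ?_)
    · intro x hx
      exact mem_iUnion.2 ⟨0, by simp [hx]⟩
    · have hfn : (fun n : ℕ => packingPre c.s (if n = 0 then c.K else ∅))
          = fun n : ℕ => if n = 0 then packingPre c.s c.K else 0 := by
        funext n
        split_ifs with hn
        · rfl
        · exact c.packingPre_empty
      rw [hfn, tsum_ite_eq]
  exact h1.trans (h2.trans h3)

end Ctx
end Stmt9
namespace Stmt9
namespace Ctx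

variable {d N : ℕ} (c : Ctx d N)

/-- The sets of points whose coding contains the word `w₀` at position `k`. -/
def As (w₀ : List (Fin N)) : ℕ → Set (Euc d)
  | 0 => wcomp c.f w₀ '' c.K
  | (k+1) => ⋃ i, c.f i '' (As w₀ k)

lemma As_compact (w₀ : List (Fin N)) (k : ℕ) : IsCompact (c.As w₀ k) := by
  induction k with
  | zero => exact c.wcomp_image_compact w₀ c.hKc
  | succ k ih => exact isCompact_iUnion fun i => ih.image (c.f_cont i)

lemma As_subset_K (w₀ : List (Fin N)) (k : ℕ) : c.As w₀ k ⊆ c.K := by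
  induction k with
  | zero =>
      rintro _ ⟨z, hz, rfl⟩
      exact c.wcomp_mapsTo w₀ hz
  | succ k ih =>
      rintro y hy
      rcases mem_iUnion.1 hy with ⟨i, z, hz, rfl⟩
      exact c.f_mapsTo i (ih hz)

lemma mem_As_succ_iff (w₀ : List (Fin N)) (k : ℕ) (i : Fin N) {y : Euc d} (hy : y ∈ c.K) :
    c.f i y ∈ c.As w₀ (k+1) ↔ y ∈ c.As w₀ k := by
  constructor
  · intro h
    rcases mem_iUnion.1 h with ⟨j, hj⟩
    rcases (c.mem_piece (i := i) (j := j) hy (c.As_subset_K w₀ k)).1 hj with ⟨rfl, h2⟩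
    exact h2
  · intro h
    exact mem_iUnion.2 ⟨i, mem_image_of_mem _ h⟩

lemma wcomp_mem_As_iff (w₀ w : List (Fin N)) (k : ℕ) {y : Euc d} (hy : y ∈ c.K) :
    wcomp c.f w y ∈ c.As w₀ (k + w.length) ↔ y ∈ c.As w₀ k := by
  induction w with
  | nil => simp
  | cons i w ih =>
      have h1 : k + (i :: w).length = (k + w.length) + 1 := by simp [List.length_cons]; ring
      rw [h1, wcomp_cons, c.mem_As_succ_iff w₀ (k + w.length) i (c.wcomp_mapsTo w hy)]
      exact ih

lemma wcomp_mem_As_zero_iff (w₀ w : List (Fin N)) (hlen : w.length = w₀.length) {y : Euc d}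
    (hy : y ∈ c.K) : wcomp c.f w y ∈ c.As w₀ 0 ↔ w = w₀ := by
  show wcomp c.f w y ∈ wcomp c.f w₀ '' c.K ↔ _
  rw [c.mem_wpiece hlen hy (subset_refl _)]
  exact ⟨fun h => h.1, fun h => ⟨h, hy⟩⟩

lemma As_decomp (w₀ : List (Fin N)) (k : ℕ) {y : Euc d} (hy : y ∈ c.As w₀ k) :
    ∃ (u : List (Fin N)) (z : Euc d), u.length = k ∧ z ∈ c.K ∧ y = wcomp c.f (u ++ w₀) z := by
  induction k generalizing y with
  | zero =>
      rcases hy with ⟨z, hz, rfl⟩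
      exact ⟨[], z, rfl, hz, by simp⟩
  | succ k ih =>
      rcases mem_iUnion.1 hy with ⟨i, z, hz, rfl⟩
      rcases ih hz with ⟨u, z', hlen, hz', rfl⟩
      exact ⟨i :: u, z', by simp [hlen], hz', by simp [c.wcomp_append]⟩

/-- The "avoid the `w₀`-blocks from position `j` to `j+n-1`" event. -/
def Ev (w₀ : List (Fin N)) (j n : ℕ) : Set (Euc d) :=
  ⋂ (m : ℕ) (_ : m ∈ Finset.range n), (c.As w₀ ((j + m) * w₀.length))ᶜ

lemma Ev_measurable (w₀ : List (Fin N)) (j n : ℕ) : MeasurableSet (c.Ev w₀ j n) :=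
  Finset.measurableSet_biInter _ fun m _ => (c.As_compact w₀ _).isClosed.measurableSet.compl

lemma Ev_peel (w₀ : List (Fin N)) (j n : ℕ) :
    c.μ (c.Ev w₀ (j+1) n) = c.μ (c.Ev w₀ j n) := by
  set L := w₀.length with hL
  rw [c.hμss_word L _ (c.Ev_measurable w₀ (j+1) n)]
  have hterm : ∀ v : Fin L → Fin N,
      c.μ (wcomp c.f (List.ofFn v) ⁻¹' c.Ev w₀ (j+1) n) = c.μ (c.Ev w₀ j n) := by
    intro v
    rw [← c.mu_inter_K (wcomp c.f (List.ofFn v) ⁻¹' c.Ev w₀ (j+1) n),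
      ← c.mu_inter_K (c.Ev w₀ j n)]
    congr 1
    ext y
    simp only [mem_inter_iff, mem_preimage, Ev, mem_iInter, mem_compl_iff, and_congr_left_iff]
    intro hyK
    have hkey : ∀ m : ℕ, wcomp c.f (List.ofFn v) y ∈ c.As w₀ ((j + 1 + m) * L)
        ↔ y ∈ c.As w₀ ((j + m) * L) := by
      intro m
      have harith : (j + 1 + m) * L = (j + m) * L + (List.ofFn v).length := by
        rw [List.length_ofFn]; ring
      rw [harith]
      exact c.wcomp_mem_As_iff w₀ (List.ofFn v) _ hyK
    constructor
    · intro h m hm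
      exact fun hmem => h m hm ((hkey m).2 hmem)
    · intro h m hm
      exact fun hmem => h m hm ((hkey m).1 hmem)
  calc ∑ v : Fin L → Fin N, ENNReal.ofReal (c.rp (List.ofFn v) ^ c.s)
        * c.μ (wcomp c.f (List.ofFn v) ⁻¹' c.Ev w₀ (j+1) n)
      = ∑ v : Fin L → Fin N, ENNReal.ofReal (c.rp (List.ofFn v) ^ c.s)
          * c.μ (c.Ev w₀ j n) := by
        exact Finset.sum_congr rfl fun v _ => by rw [hterm v]
    _ = (∑ v : Fin L → Fin N, ENNReal.ofReal (c.rp (List.ofFn v) ^ c.s)) * c.μ (c.Ev w₀ j n) := by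
        rw [Finset.sum_mul]
    _ = c.μ (c.Ev w₀ j n) := by rw [c.sum_word_rs, one_mul]

end Ctx
end Stmt9
namespace Stmt9
namespace Ctx

variable {d N : ℕ} (c : Ctx d N)

lemma Ev_zero_step (w₀ : List (Fin N)) (hw₀ : 1 ≤ w₀.length) (n : ℕ) :
    c.μ (c.Ev w₀ 0 (n+1))
      = (1 - ENNReal.ofReal (c.rp w₀ ^ c.s)) * c.μ (c.Ev w₀ 0 n) := by
  haveI := c.hμp
  set L := w₀.length with hL
  set v₀ : Fin L → Fin N := w₀.get with hv₀
  have hofn₀ : List.ofFn v₀ = w₀ := List.ofFn_get w₀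
  rw [c.hμss_word L _ (c.Ev_measurable w₀ 0 (n+1))]
  -- the `v₀` term vanishes
  have hterm₀ : c.μ (wcomp c.f (List.ofFn v₀) ⁻¹' c.Ev w₀ 0 (n+1)) = 0 := by
    rw [← c.mu_inter_K]
    convert measure_empty (μ := c.μ)
    ext y
    simp only [mem_inter_iff, mem_preimage, Ev, mem_iInter, mem_compl_iff, mem_empty_iff_false,
      iff_false, not_and]
    intro h hyK
    have h0 := h 0 (Finset.mem_range.2 (Nat.succ_pos n))
    apply h0
    rw [show (0 + 0) * L = 0 by ring]
    rw [hofn₀]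
    exact (c.wcomp_mem_As_zero_iff w₀ w₀ rfl hyK).2 rfl
  -- the other terms
  have hterm : ∀ v : Fin L → Fin N, v ≠ v₀ →
      c.μ (wcomp c.f (List.ofFn v) ⁻¹' c.Ev w₀ 0 (n+1)) = c.μ (c.Ev w₀ 0 n) := by
    intro v hv
    have hofn : List.ofFn v ≠ w₀ := by
      rw [← hofn₀]
      exact fun h => hv (List.ofFn_inj.1 h)
    rw [← c.mu_inter_K (wcomp c.f (List.ofFn v) ⁻¹' c.Ev w₀ 0 (n+1)),
      ← c.mu_inter_K (c.Ev w₀ 0 n)]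
    congr 1
    ext y
    simp only [mem_inter_iff, mem_preimage, Ev, mem_iInter, mem_compl_iff, and_congr_left_iff]
    intro hyK
    constructor
    · intro h m hm
      intro hmem
      have harith : (0 + (m + 1)) * L = (0 + m) * L + (List.ofFn v).length := by
        rw [List.length_ofFn]; ring
      exact h (m+1) (by simpa using Nat.succ_lt_succ (Finset.mem_range.1 hm))
        (by rw [harith]; exact (c.wcomp_mem_As_iff w₀ (List.ofFn v) _ hyK).2 hmem)
    · intro h m hm
      match m with
      | 0 =>
          intro hmem
          rw [show (0 + 0) * L = 0 by ring] at hmem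
          exact hofn ((c.wcomp_mem_As_zero_iff w₀ (List.ofFn v) (List.length_ofFn (f := v)) hyK).1 hmem)
      | (m+1) =>
          intro hmem
          have harith : (0 + (m + 1)) * L = (0 + m) * L + (List.ofFn v).length := by
            rw [List.length_ofFn]; ring
          rw [harith] at hmem
          exact h m (Finset.mem_range.2 (by
            have := Finset.mem_range.1 hm; omega))
            ((c.wcomp_mem_As_iff w₀ (List.ofFn v) _ hyK).1 hmem)
  -- assemble the sum
  have hsplit := Finset.sum_erase_add Finset.univ
    (fun v : Fin L → Fin N => ENNReal.ofReal (c.rp (List.ofFn v) ^ c.s)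
      * c.μ (wcomp c.f (List.ofFn v) ⁻¹' c.Ev w₀ 0 (n+1))) (Finset.mem_univ v₀)
  rw [← hsplit]
  beta_reduce
  rw [hterm₀, mul_zero, add_zero]
  have hq : ∑ v ∈ Finset.univ.erase v₀,
      ENNReal.ofReal (c.rp (List.ofFn v) ^ c.s) * c.μ (wcomp c.f (List.ofFn v) ⁻¹' c.Ev w₀ 0 (n+1))
      = (∑ v ∈ Finset.univ.erase v₀, ENNReal.ofReal (c.rp (List.ofFn v) ^ c.s))
        * c.μ (c.Ev w₀ 0 n) := by
    rw [Finset.sum_mul]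
    exact Finset.sum_congr rfl fun v hv => by
      rw [hterm v (Finset.ne_of_mem_erase hv)]
  rw [hq]
  congr 1
  -- ∑_{v ≠ v₀} = 1 - p
  have hsum := Finset.sum_erase_add Finset.univ
    (fun v : Fin L → Fin N => ENNReal.ofReal (c.rp (List.ofFn v) ^ c.s)) (Finset.mem_univ v₀)
  beta_reduce at hsum
  rw [c.sum_word_rs L] at hsum
  have hp_le : ENNReal.ofReal (c.rp (List.ofFn v₀) ^ c.s) ≤ 1 := by
    rw [← hsum]; exact le_add_self
  rw [← hsum, hofn₀]
  rw [ENNReal.add_sub_cancel_right]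
  exact (lt_of_le_of_lt (by rw [hofn₀] at hp_le; exact hp_le) (lt_top_iff_ne_top.2 one_ne_top)).ne

lemma Ev_value (w₀ : List (Fin N)) (hw₀ : 1 ≤ w₀.length) :
    ∀ j n : ℕ, c.μ (c.Ev w₀ j n) = (1 - ENNReal.ofReal (c.rp w₀ ^ c.s)) ^ n := by
  haveI := c.hμp
  have h0 : ∀ n, c.μ (c.Ev w₀ 0 n) = (1 - ENNReal.ofReal (c.rp w₀ ^ c.s)) ^ n := by
    intro n
    induction n with
    | zero =>
        have : c.Ev w₀ 0 0 = univ := by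
          simp [Ev]
        rw [this, pow_zero, measure_univ]
    | succ n ih => rw [c.Ev_zero_step w₀ hw₀ n, ih, pow_succ, mul_comm]
  intro j
  induction j with
  | zero => exact h0
  | succ j ih => intro n; rw [c.Ev_peel w₀ j n, ih n]

lemma bad_null (w₀ : List (Fin N)) (hw₀ : 1 ≤ w₀.length) :
    c.μ (⋃ j : ℕ, ⋂ (m : ℕ) (_ : j ≤ m), (c.As w₀ (m * w₀.length))ᶜ) = 0 := by
  haveI := c.hμp
  set p := ENNReal.ofReal (c.rp w₀ ^ c.s) with hp
  have hppos : 0 < p := by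
    rw [hp, ENNReal.ofReal_pos]
    exact c.rps_pos w₀
  have hqlt : 1 - p < 1 := by
    apply ENNReal.sub_lt_self one_ne_top one_ne_zero hppos.ne'
  refine measure_iUnion_null fun j => ?_
  have hle : ∀ n : ℕ, c.μ (⋂ (m : ℕ) (_ : j ≤ m), (c.As w₀ (m * w₀.length))ᶜ)
      ≤ (1 - p) ^ n := by
    intro n
    rw [← c.Ev_value w₀ hw₀ j n]
    apply measure_mono
    intro y hy
    simp only [Ev, mem_iInter, mem_compl_iff]
    intro m hm
    have := (mem_iInter.1 hy (j + m))
    exact mem_iInter.1 this (Nat.le_add_right j m)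
  have htend : Tendsto (fun n : ℕ => (1 - p) ^ n) atTop (nhds 0) :=
    ENNReal.tendsto_pow_atTop_nhds_zero_of_lt_one hqlt
  have := ge_of_tendsto htend (Eventually.of_forall hle)
  exact le_antisymm this (zero_le)

end Ctx
end Stmt9
namespace Stmt9
namespace Ctx

variable {d N : ℕ} (c : Ctx d N)

lemma good_ae {rstar : ℝ} (hstar : IsLeast (Set.range c.r) rstar) {c' : ℝ≥0∞}
    (hc' : c' < c.bandSup rstar) :
    ∃ G : Set (Euc d), c.μ Gᶜ = 0 ∧ ∀ y ∈ G, ∀ δ : ℝ, 0 < δ → ∃ ρ : ℝ, 0 < ρ ∧ ρ ≤ δ ∧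
      c' * c.μ (closedBall y ρ) ≤ ENNReal.ofReal ((2 * ρ) ^ c.s) := by
  haveI := c.hμp
  -- extract a near-optimal band pair
  rw [bandSup, lt_iSup_iff] at hc'
  obtain ⟨x₀, hc'⟩ := hc'
  rw [lt_iSup_iff] at hc'
  obtain ⟨hx₀, hc'⟩ := hc'
  rw [lt_iSup_iff] at hc'
  obtain ⟨t₀, hc'⟩ := hc'
  rw [lt_iSup_iff] at hc'
  obtain ⟨ht₀, hc'⟩ := hc'
  have hband : 0 < rstar * c.Δ / 2 := div_pos (mul_pos (c.rstar_pos hstar) c.hΔ) two_pos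
  have ht₀pos : 0 < t₀ := lt_of_lt_of_le hband ht₀.1
  have hμB0 : c.μ (ball x₀ t₀) ≠ 0 := (c.mu_ball_pos hx₀ ht₀pos).ne'
  have hμBtop : c.μ (ball x₀ t₀) ≠ ⊤ := measure_ne_top _ _
  have hlt : c' * c.μ (ball x₀ t₀) < ENNReal.ofReal ((2 * t₀) ^ c.s) :=
    (ENNReal.lt_div_iff_mul_lt (Or.inl hμB0) (Or.inl hμBtop)).1 hc'
  -- choose τ < t₀ with the same property
  have hcont : ContinuousAt (fun τ : ℝ => ENNReal.ofReal ((2 * τ) ^ c.s)) t₀ := by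
    apply ENNReal.continuous_ofReal.continuousAt.comp
    apply ContinuousAt.comp (Real.continuousAt_rpow_const _ _ (Or.inl (by positivity)))
    exact (continuous_const.mul continuous_id).continuousAt
  have hev1 : ∀ᶠ τ : ℝ in nhdsWithin t₀ (Iio t₀),
      c' * c.μ (ball x₀ t₀) < ENNReal.ofReal ((2 * τ) ^ c.s) :=
    (hcont.eventually (eventually_gt_nhds hlt)).filter_mono nhdsWithin_le_nhds
  have hev2 : ∀ᶠ τ : ℝ in nhdsWithin t₀ (Iio t₀), 0 < τ :=
    (eventually_gt_nhds ht₀pos).filter_mono nhdsWithin_le_nhds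
  have hev3 : ∀ᶠ τ : ℝ in nhdsWithin t₀ (Iio t₀), τ < t₀ :=
    eventually_mem_nhdsWithin.mono fun τ hτ => hτ
  obtain ⟨τ, hτgood, hτpos, hτlt⟩ := (hev1.and (hev2.and hev3)).exists
  -- choose the word w₀
  obtain ⟨w₀, hw₀len, hw₀diam, x₁, hx₁, hx₀eq⟩ := c.coding_small hx₀ (sub_pos.2 hτlt)
  -- the good set
  refine ⟨(⋃ j : ℕ, ⋂ (m : ℕ) (_ : j ≤ m), (c.As w₀ (m * w₀.length))ᶜ)ᶜ, ?_, ?_⟩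
  · rw [compl_compl]
    exact c.bad_null w₀ hw₀len
  · intro y hy δ hδ
    have hy' : ∀ j : ℕ, ∃ m : ℕ, j ≤ m ∧ y ∈ c.As w₀ (m * w₀.length) := by
      intro j
      by_contra h
      push_neg at h
      exact hy (mem_iUnion.2 ⟨j, mem_iInter.2 fun m => mem_iInter.2 fun hm => h m hm⟩)
    -- choose the scale
    obtain ⟨j, hj⟩ : ∃ j : ℕ, c.rmax ^ j < δ / τ :=
      exists_pow_lt_of_lt_one (div_pos hδ hτpos) c.rmax_lt_one
    obtain ⟨m, hjm, hym⟩ := hy' j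
    obtain ⟨u, z, hulen, hz, rfl⟩ := c.As_decomp w₀ _ hym
    set z' := wcomp c.f w₀ z with hz'
    have hz'K : z' ∈ c.K := c.wcomp_mapsTo w₀ hz
    have hyeq : wcomp c.f (u ++ w₀) z = wcomp c.f u z' := c.wcomp_append u w₀ z
    -- distance from z' to x₀
    have hdist : dist z' x₀ < t₀ - τ := by
      rw [hz', ← hx₀eq, c.wcomp_dist]
      calc c.rp w₀ * dist z x₁ ≤ c.rp w₀ * diam c.K :=
            mul_le_mul_of_nonneg_left (dist_le_diam_of_mem c.hKc.isBounded hz hx₁)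
              (c.rp_pos w₀).le
        _ < t₀ - τ := hw₀diam
    have hsubset : closedBall z' τ ⊆ ball x₀ t₀ := by
      intro q hq
      rw [mem_closedBall] at hq
      rw [mem_ball]
      calc dist q x₀ ≤ dist q z' + dist z' x₀ := dist_triangle _ _ _
        _ < τ + (t₀ - τ) := by linarith [hdist]
        _ = t₀ := by ring
    set ρ := c.rp u * τ with hρ
    have hρpos : 0 < ρ := mul_pos (c.rp_pos u) hτpos
    have hτΔ : τ ≤ c.Δ := by
      have h1 : t₀ ≤ c.Δ / 2 := ht₀.2
      have := c.hΔ
      linarith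
    have hscale : c.μ (closedBall (wcomp c.f u z') ρ)
        = ENNReal.ofReal (c.rp u ^ c.s) * c.μ (closedBall z' τ) :=
      c.scale_closedBall_w u hz'K hτpos.le hτΔ
    refine ⟨ρ, hρpos, ?_, ?_⟩
    · have h1 : c.rp u ≤ c.rmax ^ (m * w₀.length) := hulen ▸ c.rp_le_pow u
      have h2 : c.rmax ^ (m * w₀.length) ≤ c.rmax ^ m := by
        apply pow_le_pow_of_le_one c.rmax_pos.le c.rmax_lt_one.le
        calc m = m * 1 := (mul_one m).symm
          _ ≤ m * w₀.length := Nat.mul_le_mul_left m hw₀len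
      have h3 : c.rmax ^ m ≤ c.rmax ^ j :=
        pow_le_pow_of_le_one c.rmax_pos.le c.rmax_lt_one.le hjm
      have h4 : c.rmax ^ j * τ < δ := by rw [← lt_div_iff₀ hτpos]; exact hj
      calc ρ = c.rp u * τ := rfl
        _ ≤ c.rmax ^ j * τ := mul_le_mul_of_nonneg_right ((h1.trans h2).trans h3) hτpos.le
        _ ≤ δ := h4.le
    · rw [hyeq, hscale]
      calc c' * (ENNReal.ofReal (c.rp u ^ c.s) * c.μ (closedBall z' τ))
          ≤ c' * (ENNReal.ofReal (c.rp u ^ c.s) * c.μ (ball x₀ t₀)) := by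
            exact mul_le_mul_right (mul_le_mul_right (measure_mono hsubset) _) _
        _ = ENNReal.ofReal (c.rp u ^ c.s) * (c' * c.μ (ball x₀ t₀)) := by ring
        _ ≤ ENNReal.ofReal (c.rp u ^ c.s) * ENNReal.ofReal ((2 * τ) ^ c.s) :=
            mul_le_mul_right hτgood.le _
        _ = ENNReal.ofReal ((2 * ρ) ^ c.s) := by
            rw [← ENNReal.ofReal_mul (c.rps_pos u).le]
            congr 1
            rw [hρ, show 2 * (c.rp u * τ) = c.rp u * (2 * τ) by ring,
              Real.mul_rpow (c.rp_pos u).le (by linarith)]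

end Ctx
end Stmt9
namespace Stmt9
namespace Ctx

variable {d N : ℕ} (c : Ctx d N)

lemma packCount_ge {c' : ℝ≥0∞} (G : Set (Euc d))
    (hgood : ∀ y ∈ G, ∀ δ : ℝ, 0 < δ → ∃ ρ : ℝ, 0 < ρ ∧ ρ ≤ δ ∧
      c' * c.μ (closedBall y ρ) ≤ ENNReal.ofReal ((2 * ρ) ^ c.s))
    (S : Set (Euc d)) {δ : ℝ} (hδ : 0 < δ) :
    c' * c.μ (S ∩ G) ≤ packCount c.s δ S := by
  haveI := c.hμp
  classical
  set T := S ∩ G with hT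
  set fs : Euc d → Set ℝ := fun y =>
    {ρ : ℝ | 0 < ρ ∧ c' * c.μ (closedBall y ρ) ≤ ENNReal.ofReal ((2 * ρ) ^ c.s)} with hfsdef
  have hfs : ∀ y ∈ T, ∀ ε > 0, (fs y ∩ Ioo 0 ε).Nonempty := by
    intro y hy ε hε
    obtain ⟨ρ, hρ0, hρle, hρgood⟩ := hgood y hy.2 (ε/2) (half_pos hε)
    exact ⟨ρ, ⟨hρ0, hρgood⟩, hρ0, lt_of_le_of_lt hρle (half_lt_self hε)⟩
  obtain ⟨t, rr, htc, hts, htf, htnull, htdisj⟩ :=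
    Besicovitch.exists_disjoint_closedBall_covering_ae c.μ fs T hfs (fun _ => δ) (fun _ _ => hδ)
  rcases eq_empty_or_nonempty t with rfl | htne
  · have hT0 : c.μ T = 0 := by simpa using htnull
    rw [hT0, mul_zero]
    exact zero_le
  · obtain ⟨g, hg⟩ := htc.exists_eq_range htne
    set P : ℕ → Prop := fun n => ∀ m, m < n → g m ≠ g n with hPdef
    set ρfun : ℕ → ℝ := fun n => if P n then rr (g n) else 0 with hρfun
    have hgt : ∀ n, g n ∈ t := fun n => hg ▸ mem_range_self n
    have hgS : ∀ n, g n ∈ S := fun n => (hts (hgt n)).1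
    have hrrIoo : ∀ n, rr (g n) ∈ fs (g n) ∩ Ioo 0 δ := fun n => htf (g n) (hgt n)
    have hpack : IsPacking δ S g ρfun := by
      refine ⟨hgS, ?_, ?_⟩
      · intro n
        by_cases hP : P n
        · have h2 := (hrrIoo n).2
          simp only [hρfun, if_pos hP]
          exact ⟨h2.1.le, h2.2.le⟩
        · simp only [hρfun, if_neg hP]
          exact ⟨le_refl 0, hδ.le⟩
      · intro m n hmn
        by_cases hPm : P m
        · by_cases hPn : P n
          · have hne : g m ≠ g n := by
              rcases lt_or_gt_of_ne hmn with h | h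
              · exact hPn m h
              · exact fun he => hPm n h he.symm
            have hdisj := htdisj (hgt m) (hgt n) hne
            simp only [hρfun, if_pos hPm, if_pos hPn]
            exact hdisj.mono ball_subset_closedBall ball_subset_closedBall
          · simp only [hρfun, if_neg hPn]
            rw [ball_eq_empty.2 (le_refl 0)]
            exact Set.disjoint_empty _
        · simp only [hρfun, if_neg hPm]
          rw [ball_eq_empty.2 (le_refl 0)]
          exact Set.empty_disjoint _
    set SB : ℕ → Set (Euc d) := fun n =>
      if 0 < ρfun n then closedBall (g n) (ρfun n) else ∅ with hSB
    have hcover : (⋃ x ∈ t, closedBall x (rr x)) ⊆ ⋃ n, SB n := by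
      intro q hq
      rw [mem_iUnion₂] at hq
      obtain ⟨x, hx, hq⟩ := hq
      have hex : ∃ n, g n = x := by
        rw [hg] at hx
        rcases hx with ⟨n, hn⟩
        exact ⟨n, hn⟩
      have hn₀ : g (Nat.find hex) = x := Nat.find_spec hex
      have hPn₀ : P (Nat.find hex) := by
        intro m hm he
        exact Nat.find_min hex hm (he.trans hn₀)
      have hpos : 0 < ρfun (Nat.find hex) := by
        simp only [hρfun, if_pos hPn₀]
        exact (hrrIoo (Nat.find hex)).2.1
      refine mem_iUnion.2 ⟨Nat.find hex, ?_⟩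
      simp only [hSB, if_pos hpos, hρfun, if_pos hPn₀, hn₀]
      rw [if_pos (by rw [← hn₀]; exact (hrrIoo (Nat.find hex)).2.1)]
      exact hq
    have hμT : c.μ T ≤ ∑' n, c.μ (SB n) := by
      calc c.μ T ≤ c.μ ((⋃ n, SB n) ∪ (T \ ⋃ x ∈ t, closedBall x (rr x))) := by
            apply measure_mono
            intro q hq
            by_cases hq2 : q ∈ ⋃ x ∈ t, closedBall x (rr x)
            · exact Or.inl (hcover hq2)
            · exact Or.inr ⟨hq, hq2⟩
        _ ≤ c.μ (⋃ n, SB n) + c.μ (T \ ⋃ x ∈ t, closedBall x (rr x)) := measure_union_le _ _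
        _ = c.μ (⋃ n, SB n) := by rw [htnull, add_zero]
        _ ≤ ∑' n, c.μ (SB n) := measure_iUnion_le _
    calc c' * c.μ (S ∩ G) = c' * c.μ T := rfl
      _ ≤ c' * ∑' n, c.μ (SB n) := mul_le_mul_right hμT _
      _ = ∑' n, c' * c.μ (SB n) := ENNReal.tsum_mul_left.symm
      _ ≤ ∑' n, (if 0 < ρfun n then ENNReal.ofReal ((2 * ρfun n) ^ c.s) else 0) := by
          refine ENNReal.tsum_le_tsum fun n => ?_
          by_cases hpos : 0 < ρfun n
          · rw [if_pos hpos]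
            have hPn : P n := by
              by_contra hP
              rw [hρfun] at hpos
              simp only [if_neg hP] at hpos
              exact lt_irrefl 0 hpos
            have heq : ρfun n = rr (g n) := by simp only [hρfun, if_pos hPn]
            simp only [hSB, if_pos hpos, heq]
            exact ((hrrIoo n).1).2
          · rw [if_neg hpos]
            simp only [hSB, if_neg hpos]
            rw [measure_empty, mul_zero]
      _ ≤ packCount c.s δ S :=
          le_iSup_of_le g (le_iSup_of_le ρfun (le_iSup_of_le hpack (le_refl _)))

lemma lower {rstar : ℝ} (hstar : IsLeast (Set.range c.r) rstar) :
    c.bandSup rstar ≤ packingMeasure c.s c.K := by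
  haveI := c.hμp
  refine le_of_forall_lt_imp_le_of_dense fun c' hc' => ?_
  obtain ⟨G, hGnull, hgood⟩ := c.good_ae hstar hc'
  refine le_iInf fun F => le_iInf fun hF => ?_
  have key : ∀ n : ℕ, c' * c.μ (F n ∩ G) ≤ packingPre c.s (F n) := fun n =>
    le_iInf fun δ => le_iInf fun hδ => c.packCount_ge G hgood (F n) hδ
  have hμ1 : c.μ (c.K ∩ G) = 1 := by
    refine le_antisymm prob_le_one ?_
    calc (1:ℝ≥0∞) = c.μ c.K := c.muK.symm
      _ ≤ c.μ (c.K ∩ G) + c.μ (c.K \ G) := measure_le_inter_add_diff _ _ _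
      _ ≤ c.μ (c.K ∩ G) + c.μ Gᶜ := add_le_add_right (measure_mono (diff_subset_compl _ _)) _
      _ = c.μ (c.K ∩ G) := by rw [hGnull, add_zero]
  calc c' = c' * c.μ (c.K ∩ G) := by rw [hμ1, mul_one]
    _ ≤ c' * c.μ (⋃ n, F n ∩ G) := by
        apply mul_le_mul_right
        apply measure_mono
        intro x hx
        rcases mem_iUnion.1 (hF hx.1) with ⟨n, hn⟩
        exact mem_iUnion.2 ⟨n, hn, hx.2⟩
    _ ≤ c' * ∑' n, c.μ (F n ∩ G) := mul_le_mul_right (measure_iUnion_le _) _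
    _ = ∑' n, c' * c.μ (F n ∩ G) := ENNReal.tsum_mul_left.symm
    _ ≤ ∑' n, packingPre c.s (F n) := ENNReal.tsum_le_tsum key

end Ctx
end Stmt9

/-- Corollary 2.5: if the pieces `f_i(K)` are pairwise at distance
`> Δ`, then `P^s(K) = sup { (2r)^s/λ(B(x,r)) : x ∈ K, r_*Δ/2 ≤ r ≤ Δ/2 }`. -/
theorem stmt9
    {d N : ℕ} (hN : 2 ≤ N)
    (f : Fin N → Euc d → Euc d) (r : Fin N → ℝ)
    (hr0 : ∀ i, 0 < r i) (hr1 : ∀ i, r i < 1)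
    (hsim : ∀ i x y, dist (f i x) (f i y) = r i * dist x y)
    (K : Set (Euc d)) (hKne : K.Nonempty) (hKc : IsCompact K)
    (hKinv : K = ⋃ i, f i '' K)
    (Δ : ℝ) (hΔ : 0 < Δ)
    (hsep : ∀ i j, i ≠ j → ∀ p ∈ f i '' K, ∀ q ∈ f j '' K, Δ < dist p q)
    (rstar : ℝ) (hstar : IsLeast (Set.range r) rstar)
    (hgp : GeneralPosition K)
    (s : ℝ) (hs : ∑ i, r i ^ s = 1)
    (μ : Measure (Euc d)) (hμp : IsProbabilityMeasure μ)
    (hμss : ∀ A : Set (Euc d), MeasurableSet A →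
      μ A = ∑ i, ENNReal.ofReal (r i ^ s) * μ (f i ⁻¹' A)) :
    packingMeasure s K
      = ⨆ (x : Euc d) (_ : x ∈ K) (t : ℝ) (_ : t ∈ Set.Icc (rstar * Δ / 2) (Δ / 2)),
          ENNReal.ofReal ((2 * t) ^ s) / μ (ball x t) := by
  let c : Stmt9.Ctx d N :=
    ⟨f, r, K, Δ, s, μ, hN, hr0, hr1, hsim, hKne, hKc, hKinv, hΔ, hsep, hs, hμp, hμss⟩
  show packingMeasure c.s c.K = c.bandSup rstar
  exact le_antisymm (c.upper hstar) (c.lower hstar)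
end
end
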